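/- arXiv:2207.06251 — 4 statements merged into one kernel-verified Lean document; each statement's English description precedes it below -/
import Mathlib

section
/- The graph obtained from K_6 by removing the three edges of a path of length 3 is planar. -/
open SimpleGraph

/-- `H` is a minor of `G`: disjoint connected branch sets in `G`, one for each vertex of `H`,
with edges of `H` realized by edges of `G` between the corresponding branch sets. -/
def MinorOf {W V : Type*} (H : SimpleGraph W) (G : SimpleGraph V) : Prop :=
  ∃ f : W → Set V,
    (∀ w, (G.induce (f w)).Connected) ∧
    (Pairwise fun w w' => Disjoint (f w) (f w')) ∧
    (∀ w w', H.Adj w w' → ∃ a ∈ f w, ∃ b ∈ f w', G.Adj a b)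

/-- Planarity, via Wagner's theorem: no `K₅` minor and no `K₃,₃` minor. -/
def IsPlanar {V : Type*} (G : SimpleGraph V) : Prop :=
  ¬ MinorOf (completeGraph (Fin 5)) G ∧
  ¬ MinorOf (completeBipartiteGraph (Fin 3) (Fin 3)) G

/-- `M` is a maximal planar subgraph of `G`: `M` is planar, and inserting any edge of `G`
not in `M` into `M` yields a nonplanar graph. -/
def MaximalPlanarSubgraph {V : Type*} (G : SimpleGraph V) (M : G.Subgraph) : Prop :=
  IsPlanar M.coe ∧
  ∀ ⦃u v : V⦄ (h : G.Adj u v), ¬ M.Adj u v →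
    ¬ IsPlanar (M ⊔ G.subgraphOfAdj h).coe

/-- `G` contains a copy of `H` as a subgraph. -/
def ContainsSubgraph {W V : Type*} (H : SimpleGraph W) (G : SimpleGraph V) : Prop :=
  ∃ f : W → V, Function.Injective f ∧ ∀ a b, H.Adj a b → G.Adj (f a) (f b)

/-! ### Auxiliary material -/

set_option synthInstance.maxSize 2000
set_option maxHeartbeats 4000000

/-- The canonical path vertices in `Fin 6`. -/
def cpath : Fin 4 → Fin 6 := ![0, 1, 2, 3]

lemma cpath_inj : Function.Injective cpath := by decide

/-- The canonical copy of `K₆` minus a path of length 3. -/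
def Gc : SimpleGraph (Fin 6) :=
  (⊤ : SimpleGraph (Fin 6)).deleteEdges
    {s(cpath 0, cpath 1), s(cpath 1, cpath 2), s(cpath 2, cpath 3)}

lemma Gc_adj (a b : Fin 6) : Gc.Adj a b ↔
    a ≠ b ∧ ¬((a = 0 ∧ b = 1) ∨ (a = 1 ∧ b = 0) ∨ (a = 1 ∧ b = 2) ∨ (a = 2 ∧ b = 1) ∨
      (a = 2 ∧ b = 3) ∨ (a = 3 ∧ b = 2)) := by
  show ((⊤ : SimpleGraph (Fin 6)).deleteEdges _).Adj a b ↔ _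
  rw [deleteEdges_adj]
  simp [cpath, Sym2.eq, Sym2.rel_iff', top_adj]
  tauto

instance GcDec (a b : Fin 6) : Decidable (Gc.Adj a b) := decidable_of_iff' _ (Gc_adj a b)

lemma noPA : ¬ ∃ a b c d e : Fin 6,
    (a ≠ b ∧ a ≠ c ∧ a ≠ d ∧ a ≠ e ∧ b ≠ c ∧ b ≠ d ∧ b ≠ e ∧ c ≠ d ∧ c ≠ e ∧ d ≠ e) ∧
    (Gc.Adj a b ∧ Gc.Adj a c ∧ Gc.Adj a d ∧ Gc.Adj a e ∧ Gc.Adj b c ∧ Gc.Adj b d ∧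
     Gc.Adj b e ∧ Gc.Adj c d ∧ Gc.Adj c e ∧ Gc.Adj d e) := by
  decide

lemma noPB : ¬ ∃ x y c1 c2 c3 c4 : Fin 6,
    (x ≠ y ∧ x ≠ c1 ∧ x ≠ c2 ∧ x ≠ c3 ∧ x ≠ c4 ∧ y ≠ c1 ∧ y ≠ c2 ∧ y ≠ c3 ∧ y ≠ c4 ∧
     c1 ≠ c2 ∧ c1 ≠ c3 ∧ c1 ≠ c4 ∧ c2 ≠ c3 ∧ c2 ≠ c4 ∧ c3 ≠ c4) ∧
    Gc.Adj x y ∧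
    (Gc.Adj c1 c2 ∧ Gc.Adj c1 c3 ∧ Gc.Adj c1 c4 ∧ Gc.Adj c2 c3 ∧ Gc.Adj c2 c4 ∧ Gc.Adj c3 c4) ∧
    ((Gc.Adj c1 x ∨ Gc.Adj c1 y) ∧ (Gc.Adj c2 x ∨ Gc.Adj c2 y) ∧
     (Gc.Adj c3 x ∨ Gc.Adj c3 y) ∧ (Gc.Adj c4 x ∨ Gc.Adj c4 y)) := by
  decide

lemma noPC : ¬ ∃ a1 a2 a3 b1 b2 b3 : Fin 6,
    (a1 ≠ a2 ∧ a1 ≠ a3 ∧ a1 ≠ b1 ∧ a1 ≠ b2 ∧ a1 ≠ b3 ∧ a2 ≠ a3 ∧ a2 ≠ b1 ∧ a2 ≠ b2 ∧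
     a2 ≠ b3 ∧ a3 ≠ b1 ∧ a3 ≠ b2 ∧ a3 ≠ b3 ∧ b1 ≠ b2 ∧ b1 ≠ b3 ∧ b2 ≠ b3) ∧
    (Gc.Adj a1 b1 ∧ Gc.Adj a1 b2 ∧ Gc.Adj a1 b3 ∧ Gc.Adj a2 b1 ∧ Gc.Adj a2 b2 ∧
     Gc.Adj a2 b3 ∧ Gc.Adj a3 b1 ∧ Gc.Adj a3 b2 ∧ Gc.Adj a3 b3) := by
  decide

/-- Minors transfer across isomorphisms. -/
lemma MinorOf.of_iso {W V V' : Type*} {H : SimpleGraph W} {G : SimpleGraph V}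
    {G' : SimpleGraph V'} (e : G ≃g G') (h : MinorOf H G) : MinorOf H G' := by
  obtain ⟨S, hc, hd, he⟩ := h
  refine ⟨fun w => (⇑e) '' S w, ?_, ?_, ?_⟩
  · intro w
    refine (hc w).map
      (f := ⟨fun x => ⟨e x.1, ⟨x.1, x.2, rfl⟩⟩, fun {p q} hpq => ?_⟩) ?_
    · exact e.map_adj_iff.mpr hpq
    · rintro ⟨y, u, hu, rfl⟩
      exact ⟨⟨u, hu⟩, rfl⟩
  · intro w w' hne'
    rw [Set.disjoint_left]
    rintro yy ⟨u, hu, rfl⟩ ⟨u', hu', hEq⟩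
    have : u' = u := e.toEquiv.injective hEq
    subst this
    exact (Set.disjoint_left.mp (hd hne') hu) hu'
  · intro w w' ha
    obtain ⟨a, haf, b, hbf, hab⟩ := he w w' ha
    exact ⟨e a, ⟨a, haf, rfl⟩, e b, ⟨b, hbf, rfl⟩, e.map_adj_iff.mpr hab⟩

/-- A connected two-element induced subgraph gives an edge. -/
lemma adj_of_pair_connected {G : SimpleGraph (Fin 6)} {a b : Fin 6} (hab : a ≠ b)
    (h : (G.induce {a, b}).Connected) : G.Adj a b := by
  have ha : a ∈ ({a, b} : Set (Fin 6)) := Set.mem_insert _ _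
  have hb : b ∈ ({a, b} : Set (Fin 6)) := Set.mem_insert_iff.2 (Or.inr rfl)
  have key : ∀ (x y : ({a, b} : Set (Fin 6))), (G.induce {a, b}).Walk x y →
      x.1 ≠ y.1 → G.Adj a b := by
    intro x y w
    induction w with
    | nil => intro hxy; exact absurd rfl hxy
    | @cons p z q hadj _ _ =>
      intro _
      have h2 : G.Adj p.1 z.1 := hadj
      have hp2 := p.2
      have hz2 := z.2
      rw [Set.mem_insert_iff, Set.mem_singleton_iff] at hp2 hz2
      rcases hp2 with hp | hp <;> rcases hz2 with hz | hz
      · rw [hp, hz] at h2; exact absurd h2 (G.irrefl)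
      · rw [hp, hz] at h2; exact h2
      · rw [hp, hz] at h2; exact h2.symm
      · rw [hp, hz] at h2; exact absurd h2 (G.irrefl)
  obtain ⟨w⟩ := h.preconnected ⟨a, ha⟩ ⟨b, hb⟩
  exact key _ _ w hab

section counting

variable {n : ℕ}

lemma sum_card_le (S : Fin n → Set (Fin 6))
    (hd : Pairwise fun w w' => Disjoint (S w) (S w')) :
    ∑ w, ((S w).toFinite.toFinset).card ≤ 6 := by
  classical
  rw [← Finset.card_biUnion]
  · exact le_trans (Finset.card_le_card (Finset.subset_univ _)) (by simp)
  · intro x _ y _ hxy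
    simp only [Function.onFun]
    rw [Finset.disjoint_left]
    intro a hax hay
    rw [Set.Finite.mem_toFinset] at hax hay
    exact (Set.disjoint_left.mp (hd hxy) hax) hay

lemma one_le_card (S : Fin n → Set (Fin 6)) (hne : ∀ w, (S w).Nonempty) (w : Fin n) :
    1 ≤ ((S w).toFinite.toFinset).card := by
  obtain ⟨x, hx⟩ := hne w
  exact Finset.card_pos.mpr ⟨x, (Set.Finite.mem_toFinset _).mpr hx⟩

lemma card_one_singleton (S : Fin n → Set (Fin 6)) (w : Fin n)
    (h : ((S w).toFinite.toFinset).card = 1) : ∃ a, S w = {a} := by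
  obtain ⟨a, ha⟩ := Finset.card_eq_one.mp h
  refine ⟨a, Set.ext fun x => ?_⟩
  rw [← (S w).toFinite.mem_toFinset, ha]
  simp

lemma singletons6 (S : Fin 6 → Set (Fin 6)) (hne : ∀ w, (S w).Nonempty)
    (hd : Pairwise fun w w' => Disjoint (S w) (S w')) : ∀ w, ∃ a, S w = {a} := by
  classical
  intro w0
  refine card_one_singleton S w0 ?_
  by_contra hne1
  have h1 := one_le_card S hne
  have h2 : 2 ≤ ((S w0).toFinite.toFinset).card := by have := h1 w0; omega
  have key : ((S w0).toFinite.toFinset).card +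
      ∑ w ∈ Finset.univ.erase w0, ((S w).toFinite.toFinset).card =
      ∑ w, ((S w).toFinite.toFinset).card :=
    Finset.add_sum_erase Finset.univ (fun w => ((S w).toFinite.toFinset).card)
      (Finset.mem_univ w0)
  have h3 : (Finset.univ.erase w0).card • 1 ≤
      ∑ w ∈ Finset.univ.erase w0, ((S w).toFinite.toFinset).card :=
    Finset.card_nsmul_le_sum _ _ _ (fun x _ => h1 x)
  have hcard : (Finset.univ.erase w0).card = 5 := by simp
  have hsum := sum_card_le S hd
  rw [smul_eq_mul, mul_one, hcard] at h3
  omega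

lemma sizes5 (S : Fin 5 → Set (Fin 6)) (hne : ∀ w, (S w).Nonempty)
    (hd : Pairwise fun w w' => Disjoint (S w) (S w')) :
    (∀ w, ∃ a, S w = {a}) ∨
    ∃ w0 a b, a ≠ b ∧ S w0 = {a, b} ∧ ∀ w, w ≠ w0 → ∃ c, S w = {c} := by
  classical
  have h1 := one_le_card S hne
  have hsum := sum_card_le S hd
  by_cases hall : ∀ w, ((S w).toFinite.toFinset).card = 1
  · exact Or.inl fun w => card_one_singleton S w (hall w)
  right
  push_neg at hall
  obtain ⟨w0, hw0⟩ := hall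
  have h2 : 2 ≤ ((S w0).toFinite.toFinset).card := by have := h1 w0; omega
  have key : ((S w0).toFinite.toFinset).card +
      ∑ w ∈ Finset.univ.erase w0, ((S w).toFinite.toFinset).card =
      ∑ w, ((S w).toFinite.toFinset).card :=
    Finset.add_sum_erase Finset.univ (fun w => ((S w).toFinite.toFinset).card)
      (Finset.mem_univ w0)
  have h3 : (Finset.univ.erase w0).card • 1 ≤
      ∑ w ∈ Finset.univ.erase w0, ((S w).toFinite.toFinset).card :=
    Finset.card_nsmul_le_sum _ _ _ (fun x _ => h1 x)
  have hcard : (Finset.univ.erase w0).card = 4 := by simp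
  rw [smul_eq_mul, mul_one, hcard] at h3
  have hc2 : ((S w0).toFinite.toFinset).card = 2 := by omega
  have hrest : ∀ w, w ≠ w0 → ((S w).toFinite.toFinset).card = 1 := by
    intro w hw
    by_contra hne'
    have h2' : 2 ≤ ((S w).toFinite.toFinset).card := by have := h1 w; omega
    have hmem : w ∈ Finset.univ.erase w0 := Finset.mem_erase.mpr ⟨hw, Finset.mem_univ _⟩
    have key2 : ((S w).toFinite.toFinset).card +
        ∑ x ∈ (Finset.univ.erase w0).erase w, ((S x).toFinite.toFinset).card =
        ∑ x ∈ Finset.univ.erase w0, ((S x).toFinite.toFinset).card :=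
      Finset.add_sum_erase (Finset.univ.erase w0) (fun w => ((S w).toFinite.toFinset).card)
        hmem
    have h4 : ((Finset.univ.erase w0).erase w).card • 1 ≤
        ∑ x ∈ (Finset.univ.erase w0).erase w, ((S x).toFinite.toFinset).card :=
      Finset.card_nsmul_le_sum _ _ _ (fun x _ => h1 x)
    have hcard2 : ((Finset.univ.erase w0).erase w).card = 3 := by
      rw [Finset.card_erase_of_mem hmem, hcard]
    rw [smul_eq_mul, mul_one, hcard2] at h4
    omega
  obtain ⟨a, b, hab, hT⟩ := Finset.card_eq_two.mp hc2
  refine ⟨w0, a, b, hab, Set.ext fun x => ?_, fun w hw => card_one_singleton S w (hrest w hw)⟩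
  rw [← (S w0).toFinite.mem_toFinset, hT]
  simp

end counting

lemma noK5 : ¬ MinorOf (completeGraph (Fin 5)) Gc := by
  rintro ⟨S, hconn, hdisj, hedge⟩
  have hne : ∀ w, (S w).Nonempty := fun w => Set.nonempty_coe_sort.mp (hconn w).nonempty
  have hadj : ∀ w w', w ≠ w' → ∃ a ∈ S w, ∃ b ∈ S w', Gc.Adj a b := fun w w' h =>
    hedge w w' (by simpa using h)
  have distinct' : ∀ (p q : Fin 6) (w w' : Fin 5), p ∈ S w → q ∈ S w' → w ≠ w' → p ≠ q := by
    intro p q w w' hp hq hww h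
    subst h
    exact (Set.disjoint_left.mp (hdisj hww) hp) hq
  rcases sizes5 S hne hdisj with hall | ⟨w0, x, y, hxy, hS0, hrest⟩
  · choose a ha using hall
    have hmem : ∀ w, a w ∈ S w := fun w => by rw [ha]; rfl
    have hne2 : ∀ w w' : Fin 5, w ≠ w' → a w ≠ a w' := fun w w' h =>
      distinct' _ _ _ _ (hmem w) (hmem w') h
    have adj : ∀ w w' : Fin 5, w ≠ w' → Gc.Adj (a w) (a w') := by
      intro w w' h
      obtain ⟨p, hp, q, hq, hpq⟩ := hadj w w' h
      rw [ha, Set.mem_singleton_iff] at hp hq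
      rw [hp, hq] at hpq
      exact hpq
    exact noPA ⟨a 0, a 1, a 2, a 3, a 4,
      ⟨hne2 0 1 (by decide), hne2 0 2 (by decide), hne2 0 3 (by decide), hne2 0 4 (by decide),
       hne2 1 2 (by decide), hne2 1 3 (by decide), hne2 1 4 (by decide),
       hne2 2 3 (by decide), hne2 2 4 (by decide), hne2 3 4 (by decide)⟩,
      adj 0 1 (by decide), adj 0 2 (by decide), adj 0 3 (by decide), adj 0 4 (by decide),
      adj 1 2 (by decide), adj 1 3 (by decide), adj 1 4 (by decide),
      adj 2 3 (by decide), adj 2 4 (by decide), adj 3 4 (by decide)⟩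
  · have hrest' : ∀ w, ∃ cw, w ≠ w0 → S w = {cw} := by
      intro w
      by_cases h : w = w0
      · exact ⟨x, fun hh => absurd h hh⟩
      · obtain ⟨cw, hcw⟩ := hrest w h
        exact ⟨cw, fun _ => hcw⟩
    choose c hc using hrest'
    have hx : x ∈ S w0 := by rw [hS0]; exact Set.mem_insert _ _
    have hy : y ∈ S w0 := by rw [hS0]; exact Set.mem_insert_iff.2 (Or.inr rfl)
    have hcw : ∀ w, w ≠ w0 → c w ∈ S w := fun w h => by rw [hc w h]; rfl
    have hadjxy : Gc.Adj x y := adj_of_pair_connected hxy (by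
      have := hconn w0
      rwa [hS0] at this)
    set π := Equiv.swap (0 : Fin 5) w0 with hπdef
    have hπ : ∀ i : Fin 5, i ≠ 0 → π i ≠ w0 := by
      intro i hi hh
      apply hi
      have : π i = π 0 := by rw [hπdef, Equiv.swap_apply_left]; exact hh
      exact π.injective this
    have hπne : ∀ i j : Fin 5, i ≠ j → π i ≠ π j := fun i j h => fun hh => h (π.injective hh)
    have hcd : ∀ i : Fin 5, (hi : i ≠ 0) → c (π i) ∈ S (π i) := fun i hi => hcw _ (hπ i hi)
    have adjc : ∀ i j : Fin 5, i ≠ 0 → j ≠ 0 → i ≠ j → Gc.Adj (c (π i)) (c (π j)) := by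
      intro i j hi hj hij
      obtain ⟨p, hp, q, hq, hpq⟩ := hadj (π i) (π j) (hπne i j hij)
      rw [hc _ (hπ i hi), Set.mem_singleton_iff] at hp
      rw [hc _ (hπ j hj), Set.mem_singleton_iff] at hq
      rw [hp, hq] at hpq
      exact hpq
    have adjc0 : ∀ i : Fin 5, i ≠ 0 → Gc.Adj (c (π i)) x ∨ Gc.Adj (c (π i)) y := by
      intro i hi
      obtain ⟨p, hp, q, hq, hpq⟩ := hadj (π i) w0 (hπ i hi)
      rw [hc _ (hπ i hi), Set.mem_singleton_iff] at hp
      rw [hp] at hpq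
      rw [hS0, Set.mem_insert_iff, Set.mem_singleton_iff] at hq
      rcases hq with hq | hq
      · rw [hq] at hpq; exact Or.inl hpq
      · rw [hq] at hpq; exact Or.inr hpq
    have dxc : ∀ i : Fin 5, (hi : i ≠ 0) → x ≠ c (π i) := fun i hi =>
      distinct' _ _ w0 (π i) hx (hcd i hi) (Ne.symm (hπ i hi))
    have dyc : ∀ i : Fin 5, (hi : i ≠ 0) → y ≠ c (π i) := fun i hi =>
      distinct' _ _ w0 (π i) hy (hcd i hi) (Ne.symm (hπ i hi))
    have dcc : ∀ i j : Fin 5, (hi : i ≠ 0) → (hj : j ≠ 0) → i ≠ j → c (π i) ≠ c (π j) :=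
      fun i j hi hj hij => distinct' _ _ _ _ (hcd i hi) (hcd j hj) (hπne i j hij)
    exact noPB ⟨x, y, c (π 1), c (π 2), c (π 3), c (π 4),
      ⟨hxy, dxc 1 (by decide), dxc 2 (by decide), dxc 3 (by decide), dxc 4 (by decide),
       dyc 1 (by decide), dyc 2 (by decide), dyc 3 (by decide), dyc 4 (by decide),
       dcc 1 2 (by decide) (by decide) (by decide), dcc 1 3 (by decide) (by decide) (by decide),
       dcc 1 4 (by decide) (by decide) (by decide), dcc 2 3 (by decide) (by decide) (by decide),
       dcc 2 4 (by decide) (by decide) (by decide), dcc 3 4 (by decide) (by decide) (by decide)⟩,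
      hadjxy,
      ⟨adjc 1 2 (by decide) (by decide) (by decide), adjc 1 3 (by decide) (by decide) (by decide),
       adjc 1 4 (by decide) (by decide) (by decide), adjc 2 3 (by decide) (by decide) (by decide),
       adjc 2 4 (by decide) (by decide) (by decide), adjc 3 4 (by decide) (by decide) (by decide)⟩,
      adjc0 1 (by decide), adjc0 2 (by decide), adjc0 3 (by decide), adjc0 4 (by decide)⟩

lemma noK33 : ¬ MinorOf (completeBipartiteGraph (Fin 3) (Fin 3)) Gc := by
  rintro ⟨S, hconn, hdisj, hedge⟩
  have hne : ∀ w, (S w).Nonempty := fun w => Set.nonempty_coe_sort.mp (hconn w).nonempty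
  have distinct' : ∀ (p q : Fin 6) (w w' : Fin 3 ⊕ Fin 3), p ∈ S w → q ∈ S w' → w ≠ w' →
      p ≠ q := by
    intro p q w w' hp hq hww h
    subst h
    exact (Set.disjoint_left.mp (hdisj hww) hp) hq
  have hall : ∀ w, ∃ a, S w = {a} := by
    have h6 := singletons6 (fun i => S (finSumFinEquiv.symm i))
      (fun i => hne _)
      (fun i j hij => hdisj (finSumFinEquiv.symm.injective.ne hij))
    intro w
    obtain ⟨a, ha⟩ := h6 (finSumFinEquiv w)
    simp only [Equiv.symm_apply_apply] at ha
    exact ⟨a, ha⟩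
  choose a ha using hall
  have hmem : ∀ w, a w ∈ S w := fun w => by rw [ha]; rfl
  have hne2 : ∀ w w' : Fin 3 ⊕ Fin 3, w ≠ w' → a w ≠ a w' := fun w w' h =>
    distinct' _ _ _ _ (hmem w) (hmem w') h
  have adj : ∀ i j : Fin 3, Gc.Adj (a (Sum.inl i)) (a (Sum.inr j)) := by
    intro i j
    obtain ⟨p, hp, q, hq, hpq⟩ := hedge (Sum.inl i) (Sum.inr j) (by simp)
    rw [ha, Set.mem_singleton_iff] at hp hq
    rw [hp, hq] at hpq
    exact hpq
  exact noPC ⟨a (.inl 0), a (.inl 1), a (.inl 2), a (.inr 0), a (.inr 1), a (.inr 2),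
    ⟨hne2 _ _ (by decide), hne2 _ _ (by decide), hne2 _ _ (by decide), hne2 _ _ (by decide),
     hne2 _ _ (by decide), hne2 _ _ (by decide), hne2 _ _ (by decide), hne2 _ _ (by decide),
     hne2 _ _ (by decide), hne2 _ _ (by decide), hne2 _ _ (by decide), hne2 _ _ (by decide),
     hne2 _ _ (by decide), hne2 _ _ (by decide), hne2 _ _ (by decide)⟩,
    adj 0 0, adj 0 1, adj 0 2, adj 1 0, adj 1 1, adj 1 2, adj 2 0, adj 2 1, adj 2 2⟩
/-- `K₆` minus the three edges of a path of length 3 is planar. -/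
theorem K6_minus_path3_planar (v : Fin 4 → Fin 6) (hv : Function.Injective v) :
    IsPlanar ((⊤ : SimpleGraph (Fin 6)).deleteEdges
      {s(v 0, v 1), s(v 1, v 2), s(v 2, v 3)}) := by
  classical
  let femb : Fin 4 ↪ Fin 6 := ⟨cpath, cpath_inj⟩
  let vemb : Fin 4 ↪ Fin 6 := ⟨v, hv⟩
  let eq1 : {x // x ∈ Set.range ⇑femb} ≃ {x // x ∈ Set.range ⇑vemb} :=
    femb.toEquivRange.symm.trans vemb.toEquivRange
  let σ : Equiv.Perm (Fin 6) := eq1.extendSubtype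
  have hσ : ∀ i : Fin 4, σ (cpath i) = v i := by
    intro i
    have hmem : cpath i ∈ Set.range ⇑femb := ⟨i, rfl⟩
    have h1 : σ (cpath i) = ↑(eq1 ⟨cpath i, hmem⟩) :=
      Equiv.extendSubtype_apply_of_mem eq1 _ hmem
    rw [h1]
    show ↑(vemb.toEquivRange (femb.toEquivRange.symm ⟨femb i, Set.mem_range_self i⟩)) = v i
    rw [Function.Embedding.toEquivRange_symm_apply_self]
    rfl
  let iso : Gc ≃g ((⊤ : SimpleGraph (Fin 6)).deleteEdges
      {s(v 0, v 1), s(v 1, v 2), s(v 2, v 3)}) :=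
    { toEquiv := σ
      map_rel_iff' := by
        intro a b
        show ((⊤ : SimpleGraph (Fin 6)).deleteEdges
          {s(v 0, v 1), s(v 1, v 2), s(v 2, v 3)}).Adj (σ a) (σ b) ↔ Gc.Adj a b
        rw [show Gc = (⊤ : SimpleGraph (Fin 6)).deleteEdges
          {s(cpath 0, cpath 1), s(cpath 1, cpath 2), s(cpath 2, cpath 3)} from rfl]
        simp only [deleteEdges_adj, top_adj, Set.mem_insert_iff, Set.mem_singleton_iff,
          ← hσ, ← Sym2.map_pair_eq, (Sym2.map.injective σ.injective).eq_iff,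
          σ.injective.ne_iff] }
  exact ⟨fun h => noK5 (h.of_iso iso.symm), fun h => noK33 (h.of_iso iso.symm)⟩
end

section
/- Every maximal planar subgraph of K_6 is obtained by removing exactly three edges, which form either a perfect matching or a path of length 3; in particular, up to isomorphism K_6 has exactly two maximal planar subgraphs. -/
open SimpleGraph

section general
variable {V W X : Type*} {H : SimpleGraph X} {G : SimpleGraph V} {G' : SimpleGraph W}

lemma minorOf_of_hom (f : G →g G') (hf : Function.Injective f) (h : MinorOf H G) :
    MinorOf H G' := by
  obtain ⟨B, hconn, hdisj, hedge⟩ := h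
  refine ⟨fun w => f '' B w, ?_, ?_, ?_⟩
  · intro w
    refine (hconn w).map (f := ⟨fun v => ⟨f v.1, Set.mem_image_of_mem f v.2⟩, ?_⟩) ?_
    · intro a b hab
      exact f.map_adj hab
    · rintro ⟨_, a, ha, rfl⟩
      exact ⟨⟨a, ha⟩, rfl⟩
  · intro w w' hne
    exact (Set.disjoint_image_iff hf).2 (hdisj hne)
  · intro w w' hww
    obtain ⟨a, ha, b, hb, hab⟩ := hedge w w' hww
    exact ⟨f a, Set.mem_image_of_mem f ha, f b, Set.mem_image_of_mem f hb, f.map_adj hab⟩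

lemma exists_adj_of_reachable {u v : V} (hne : u ≠ v) (h : G.Reachable u v) :
    ∃ z, G.Adj u z := by
  obtain ⟨p⟩ := h
  cases p with
  | nil => exact absurd rfl hne
  | cons h p => exact ⟨_, h⟩

lemma induce_pair_connected {x y : V} (hadj : G.Adj x y) :
    (G.induce {x, y}).Connected := by
  have hx : x ∈ ({x, y} : Set V) := by simp
  have hy : y ∈ ({x, y} : Set V) := by simp
  have key : ∀ c : ↥({x, y} : Set V), c = ⟨x, hx⟩ ∨ c = ⟨y, hy⟩ := by
    rintro ⟨c, hc⟩
    rcases hc with h | h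
    · exact Or.inl (Subtype.ext h)
    · exact Or.inr (Subtype.ext h)
  have hr : (G.induce {x, y}).Reachable ⟨x, hx⟩ ⟨y, hy⟩ := Adj.reachable (by exact hadj)
  haveI : Nonempty ↥({x, y} : Set V) := ⟨⟨x, hx⟩⟩
  refine ⟨?_⟩
  intro a b
  rcases key a with rfl | rfl <;> rcases key b with rfl | rfl
  · exact Reachable.refl _
  · exact hr
  · exact hr.symm
  · exact Reachable.refl _

lemma adj_of_induce_pair_connected {x y : V} (hne : x ≠ y)
    (h : (G.induce {x, y}).Connected) : G.Adj x y := by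
  have hx : x ∈ ({x, y} : Set V) := by simp
  have hy : y ∈ ({x, y} : Set V) := by simp
  have hne' : (⟨x, hx⟩ : ↥({x, y} : Set V)) ≠ ⟨y, hy⟩ := by
    intro hh; exact hne (congrArg Subtype.val hh)
  obtain ⟨z, hz⟩ := exists_adj_of_reachable hne' (h.preconnected ⟨x, hx⟩ ⟨y, hy⟩)
  have hz' : G.Adj x z.1 := hz
  rcases z.2 with h1 | h1
  · rw [h1] at hz'; exact absurd hz' (G.irrefl)
  · rw [h1] at hz'; exact hz'

lemma minorOf_of_map (f : X → V) (hf : Function.Injective f)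
    (hadj : ∀ a b, H.Adj a b → G.Adj (f a) (f b)) : MinorOf H G := by
  refine ⟨fun w => {f w}, ?_, ?_, ?_⟩
  · intro w
    haveI : Nonempty ↥({f w} : Set V) := ⟨⟨f w, rfl⟩⟩
    refine ⟨?_⟩
    intro a b
    have : a = b := Subtype.ext (a.2.trans b.2.symm)
    exact this ▸ Reachable.refl a
  · intro w w' hne
    simp only [Set.disjoint_singleton_left, Set.mem_singleton_iff]
    exact fun hh => hne (hf hh)
  · intro w w' hww
    exact ⟨f w, rfl, f w', rfl, hadj _ _ hww⟩

lemma coe_minor_to_spanning {G : SimpleGraph V} (M : G.Subgraph) (h : MinorOf H M.coe) :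
    MinorOf H M.spanningCoe :=
  minorOf_of_hom ⟨Subtype.val, fun hab => hab⟩ Subtype.val_injective h

lemma spanning_minor_to_coe {G : SimpleGraph V} (M : G.Subgraph)
    (hH : ∀ w, ∃ w', H.Adj w w') (h : MinorOf H M.spanningCoe) : MinorOf H M.coe := by
  obtain ⟨B, hconn, hdisj, hedge⟩ := h
  have hmem : ∀ w, ∀ v ∈ B w, v ∈ M.verts := by
    intro w v hv
    by_cases h2 : ∃ u ∈ B w, u ≠ v
    · obtain ⟨u, hu, hne⟩ := h2
      have hne' : (⟨v, hv⟩ : ↥(B w)) ≠ ⟨u, hu⟩ := by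
        intro hh; exact hne ((congrArg Subtype.val hh).symm)
      obtain ⟨z, hz⟩ := exists_adj_of_reachable hne' ((hconn w).preconnected ⟨v, hv⟩ ⟨u, hu⟩)
      exact M.edge_vert (hz : M.Adj v z.1)
    · push_neg at h2
      obtain ⟨w', hw'⟩ := hH w
      obtain ⟨a, ha, b, hb, hab⟩ := hedge w w' hw'
      have hav : a = v := h2 a ha
      exact M.edge_vert (hav ▸ (hab : M.Adj a b))
  refine ⟨fun w => (Subtype.val : ↥M.verts → V) ⁻¹' B w, ?_, ?_, ?_⟩
  · intro w
    refine (hconn w).map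
      (f := ⟨fun x => ⟨⟨x.1, hmem w x.1 x.2⟩, x.2⟩, ?_⟩) ?_
    · intro a b hab
      exact (hab : M.Adj a.1 b.1)
    · rintro ⟨⟨v, hvm⟩, hvB⟩
      exact ⟨⟨v, hvB⟩, rfl⟩
  · intro w w' hne
    exact (hdisj hne).preimage _
  · intro w w' hww
    obtain ⟨a, ha, b, hb, hab⟩ := hedge w w' hww
    exact ⟨⟨a, hmem w a ha⟩, ha, ⟨b, hmem w' b hb⟩, hb, hab⟩

end general

section general2
variable {V : Type*} {G : SimpleGraph V}

lemma induce_singleton_connected (v : V) : (G.induce {v}).Connected := by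
  haveI : Nonempty ↥({v} : Set V) := ⟨⟨v, rfl⟩⟩
  refine ⟨?_⟩
  intro a b
  have : a = b := Subtype.ext (a.2.trans b.2.symm)
  exact this ▸ Reachable.refl a

end general2

def W33 (G : SimpleGraph (Fin 6)) : Prop :=
  ∃ a b c : Fin 6, a ≠ b ∧ a ≠ c ∧ b ≠ c ∧
    ∀ p q : Fin 6, (p = a ∨ p = b ∨ p = c) → ¬(q = a ∨ q = b ∨ q = c) → G.Adj p q

def W5c (G : SimpleGraph (Fin 6)) : Prop :=
  ∃ v : Fin 6, ∀ p q : Fin 6, p ≠ v → q ≠ v → p ≠ q → G.Adj p q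

def W5p (G : SimpleGraph (Fin 6)) : Prop :=
  ∃ x y : Fin 6, G.Adj x y ∧ (∀ a, a ≠ x → a ≠ y → (G.Adj x a ∨ G.Adj y a)) ∧
    (∀ a b, a ≠ x → a ≠ y → b ≠ x → b ≠ y → a ≠ b → G.Adj a b)

lemma compl3 : ∀ a b c : Fin 6, a ≠ b → a ≠ c → b ≠ c →
    ∃ d e f : Fin 6, d ≠ a ∧ d ≠ b ∧ d ≠ c ∧ e ≠ a ∧ e ≠ b ∧ e ≠ c ∧
      f ≠ a ∧ f ≠ b ∧ f ≠ c ∧ d ≠ e ∧ d ≠ f ∧ e ≠ f := by decide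

section fin6
variable {G : SimpleGraph (Fin 6)}

lemma minor_K33_of_W33 (h : W33 G) :
    MinorOf (completeBipartiteGraph (Fin 3) (Fin 3)) G := by
  obtain ⟨a, b, c, hab, hac, hbc, hcr⟩ := h
  obtain ⟨d, e, f, hda, hdb, hdc, hea, heb, hec, hfa, hfb, hfc, hde, hdf, hef⟩ :=
    compl3 a b c hab hac hbc
  refine ⟨fun w => {Sum.elim ![a, b, c] ![d, e, f] w}, ?_, ?_, ?_⟩
  · intro w; exact induce_singleton_connected _
  · intro w w' hne
    rw [Set.disjoint_singleton]
    rcases w with i | i <;> rcases w' with j | j <;> fin_cases i <;> fin_cases j <;>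
      simp only [Sum.elim_inl, Sum.elim_inr, Matrix.cons_val_zero, Matrix.cons_val_one,
        Matrix.head_cons, Matrix.cons_val_two, Matrix.tail_cons] <;>
      first | (exact absurd rfl hne) | assumption | (exact Ne.symm (by assumption))
  · intro w w' hww
    refine ⟨_, rfl, _, rfl, ?_⟩
    rcases w with i | i <;> rcases w' with j | j
    · simp at hww
    · fin_cases i <;> fin_cases j <;>
        · simp only [Sum.elim_inl, Sum.elim_inr, Matrix.cons_val_zero, Matrix.cons_val_one,
            Matrix.head_cons, Matrix.cons_val_two, Matrix.tail_cons]
          exact hcr _ _ (by tauto) (by tauto)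
    · fin_cases i <;> fin_cases j <;>
        · simp only [Sum.elim_inl, Sum.elim_inr, Matrix.cons_val_zero, Matrix.cons_val_one,
            Matrix.head_cons, Matrix.cons_val_two, Matrix.tail_cons]
          exact (hcr _ _ (by tauto) (by tauto)).symm
    · simp at hww
end fin6

section fin6b
variable {G : SimpleGraph (Fin 6)}

lemma minor_K5_of_W5c (h : W5c G) : MinorOf (completeGraph (Fin 5)) G := by
  obtain ⟨v, hv⟩ := h
  refine ⟨fun w => {v.succAbove w}, ?_, ?_, ?_⟩
  · intro w; exact induce_singleton_connected _
  · intro w w' hne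
    rw [Set.disjoint_singleton]
    exact fun hh => hne (Fin.succAbove_right_injective hh)
  · intro w w' hww
    refine ⟨_, rfl, _, rfl, hv _ _ (Fin.succAbove_ne v w) (Fin.succAbove_ne v w') ?_⟩
    exact fun hh => (hww : w ≠ w') (Fin.succAbove_right_injective hh)

lemma minor_K5_of_W5p (h : W5p G) : MinorOf (completeGraph (Fin 5)) G := by
  obtain ⟨x, y, hxy, h1, h2⟩ := h
  have hne : x ≠ y := hxy.ne
  obtain ⟨y0, hy0⟩ := Fin.exists_succAbove_eq hne.symm
  set c : Fin 4 → Fin 6 := fun i => x.succAbove (y0.succAbove i) with hc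
  have hcx : ∀ i, c i ≠ x := fun i => Fin.succAbove_ne x _
  have hcy : ∀ i, c i ≠ y := by
    intro i hh
    exact Fin.succAbove_ne y0 i (Fin.succAbove_right_injective (hh.trans hy0.symm))
  have hcinj : Function.Injective c :=
    Fin.succAbove_right_injective.comp Fin.succAbove_right_injective
  set B : Fin 5 → Set (Fin 6) := ![{x, y}, {c 0}, {c 1}, {c 2}, {c 3}] with hB
  have hB0 : B 0 = {x, y} := rfl
  refine ⟨B, ?_, ?_, ?_⟩
  · intro w
    fin_cases w
    · exact induce_pair_connected hxy
    all_goals exact induce_singleton_connected _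
  · have dxy : ∀ j, Disjoint ({x, y} : Set (Fin 6)) {c j} := by
      intro j
      rw [Set.disjoint_singleton_right]
      rintro (hh | hh)
      · exact hcx j hh
      · exact hcy j hh
    have dcc : ∀ i j : Fin 4, i ≠ j → Disjoint ({c i} : Set (Fin 6)) {c j} := by
      intro i j hij
      rw [Set.disjoint_singleton]
      exact fun hh => hij (hcinj hh)
    intro w w' hne'
    fin_cases w <;> fin_cases w' <;>
      first
        | (exact absurd rfl hne')
        | (exact dxy _)
        | (exact (dxy _).symm)
        | (exact dcc _ _ (by decide))
  · have e1 : ∀ j : Fin 4, ∃ a ∈ ({x, y} : Set (Fin 6)), ∃ b ∈ ({c j} : Set (Fin 6)), G.Adj a b := by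
      intro j
      rcases h1 (c j) (hcx j) (hcy j) with hh | hh
      · exact ⟨x, by simp, c j, rfl, hh⟩
      · exact ⟨y, by simp, c j, rfl, hh⟩
    have e1' : ∀ j : Fin 4, ∃ a ∈ ({c j} : Set (Fin 6)), ∃ b ∈ ({x, y} : Set (Fin 6)), G.Adj a b := by
      intro j
      obtain ⟨a, ha, b, hb, hab⟩ := e1 j
      exact ⟨b, hb, a, ha, hab.symm⟩
    have e2 : ∀ i j : Fin 4, i ≠ j →
        ∃ a ∈ ({c i} : Set (Fin 6)), ∃ b ∈ ({c j} : Set (Fin 6)), G.Adj a b :=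
      fun i j hij => ⟨c i, rfl, c j, rfl, h2 _ _ (hcx i) (hcy i) (hcx j) (hcy j) (hcinj.ne hij)⟩
    intro w w' hww
    have hww' : w ≠ w' := hww
    fin_cases w <;> fin_cases w' <;>
      first
        | (exact absurd rfl hww')
        | (exact e1 _)
        | (exact e2 _ _ (by decide))
        | (exact e1' _)

end fin6b



section chars
open scoped Classical
variable {G : SimpleGraph (Fin 6)}

open Finset in
lemma branch_cards {ι : Type*} [Fintype ι] (B : ι → Set (Fin 6))
    (hconn : ∀ w, (G.induce (B w)).Connected)
    (hdisj : Pairwise fun w w' => Disjoint (B w) (B w')) :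
    (∀ w, 1 ≤ (B w).toFinset.card) ∧ (∑ w, (B w).toFinset.card ≤ 6) := by
  constructor
  · intro w
    obtain ⟨⟨v, hv⟩⟩ := (hconn w).nonempty
    exact Finset.card_pos.2 ⟨v, Set.mem_toFinset.2 hv⟩
  · have hd : ∀ x ∈ (univ : Finset ι), ∀ y ∈ univ, x ≠ y →
        Disjoint (B x).toFinset (B y).toFinset := by
      intro x _ y _ hxy
      rw [Set.disjoint_toFinset]
      exact hdisj hxy
    calc ∑ w, (B w).toFinset.card = (univ.biUnion fun w => (B w).toFinset).card :=
          (Finset.card_biUnion hd).symm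
      _ ≤ (univ : Finset (Fin 6)).card := Finset.card_le_univ _
      _ = 6 := by simp

lemma W33_of_minor (h : MinorOf (completeBipartiteGraph (Fin 3) (Fin 3)) G) : W33 G := by
  obtain ⟨B, hconn, hdisj, hedge⟩ := h
  obtain ⟨h1, hsum⟩ := branch_cards B hconn hdisj
  have hcard1 : ∀ w, (B w).toFinset.card = 1 := by
    by_contra hc
    push_neg at hc
    obtain ⟨w0, hw0⟩ := hc
    have hlt : 1 < (B w0).toFinset.card := lt_of_le_of_ne (h1 w0) (Ne.symm hw0)
    have h6 : (6 : ℕ) = ∑ _w : Fin 3 ⊕ Fin 3, 1 := by simp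
    have := Finset.sum_lt_sum (f := fun _ => 1) (g := fun w => (B w).toFinset.card)
      (fun i _ => h1 i) ⟨w0, Finset.mem_univ w0, hlt⟩
    omega
  have hsingle : ∀ w, ∃ a, B w = {a} := by
    intro w
    obtain ⟨a, ha⟩ := Finset.card_eq_one.1 (hcard1 w)
    exact ⟨a, by rw [← Set.coe_toFinset (B w), ha]; simp⟩
  choose r hr using hsingle
  have hrinj : Function.Injective r := by
    intro w w' hww
    by_contra hne
    have hd : Disjoint (B w) (B w') := hdisj hne
    rw [hr w, hr w', hww, Set.disjoint_singleton] at hd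
    exact hd rfl
  have hrsurj : Function.Surjective r :=
    ((Fintype.bijective_iff_injective_and_card r).2 ⟨hrinj, by simp⟩).2
  refine ⟨r (.inl 0), r (.inl 1), r (.inl 2), hrinj.ne (by simp), hrinj.ne (by simp),
    hrinj.ne (by simp), ?_⟩
  intro p q hp hq
  obtain ⟨wq, rfl⟩ := hrsurj q
  obtain ⟨jq, rfl⟩ : ∃ j, wq = Sum.inr j := by
    rcases wq with i | i
    · exfalso; apply hq; fin_cases i <;> tauto
    · exact ⟨i, rfl⟩
  have hadj : ∀ i : Fin 3, G.Adj (r (.inl i)) (r (.inr jq)) := by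
    intro i
    obtain ⟨a, ha, b, hb, hab⟩ := hedge (.inl i) (.inr jq) (by simp)
    rw [hr (.inl i), Set.mem_singleton_iff] at ha
    rw [hr (.inr jq), Set.mem_singleton_iff] at hb
    rwa [← ha, ← hb]
  rcases hp with rfl | rfl | rfl <;> exact hadj _

lemma W5_of_minor (h : MinorOf (completeGraph (Fin 5)) G) : W5c G ∨ W5p G := by
  obtain ⟨B, hconn, hdisj, hedge⟩ := h
  obtain ⟨h1, hsum⟩ := branch_cards B hconn hdisj
  have hedge' : ∀ w w' : Fin 5, w ≠ w' → ∃ a ∈ B w, ∃ b ∈ B w', G.Adj a b := by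
    intro w w' hww
    exact hedge w w' hww
  by_cases hall : ∀ w, (B w).toFinset.card = 1
  · have hsingle : ∀ w, ∃ a, B w = {a} := by
      intro w
      obtain ⟨a, ha⟩ := Finset.card_eq_one.1 (hall w)
      exact ⟨a, by rw [← Set.coe_toFinset (B w), ha]; simp⟩
    choose r hr using hsingle
    have hrinj' : Function.Injective r := by
      intro w w' hww
      by_contra hne
      have hd : Disjoint (B w) (B w') := hdisj hne
      rw [hr w, hr w', hww, Set.disjoint_singleton] at hd
      exact hd rfl
    have hcardim : (Finset.univ.image r).card = 5 := by
      rw [Finset.card_image_of_injective _ hrinj']; simp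
    have hcompl : ((Finset.univ.image r)ᶜ : Finset (Fin 6)).card = 1 := by
      rw [Finset.card_compl, hcardim]; simp
    obtain ⟨v, hv⟩ := Finset.card_eq_one.1 hcompl
    left
    refine ⟨v, ?_⟩
    intro p q hpv hqv hpq
    have hmem : ∀ z : Fin 6, z ≠ v → ∃ w, r w = z := by
      intro z hz
      have : z ∉ ((Finset.univ.image r)ᶜ : Finset (Fin 6)) := by
        rw [hv]; simpa using hz
      rw [Finset.mem_compl, not_not] at this
      obtain ⟨w, _, hw⟩ := Finset.mem_image.1 this
      exact ⟨w, hw⟩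
    obtain ⟨wp, rfl⟩ := hmem p hpv
    obtain ⟨wq, rfl⟩ := hmem q hqv
    obtain ⟨a, ha, b, hb, hab⟩ := hedge' wp wq (fun hh => hpq (by rw [hh]))
    rw [hr wp, Set.mem_singleton_iff] at ha
    rw [hr wq, Set.mem_singleton_iff] at hb
    rwa [← ha, ← hb]
  · push_neg at hall
    obtain ⟨w0, hw0⟩ := hall
    have hw02 : (B w0).toFinset.card = 2 := by
      have hge : 2 ≤ (B w0).toFinset.card := lt_of_le_of_ne (h1 w0) (Ne.symm hw0)
      have hrest : ∑ w ∈ Finset.univ.erase w0, (B w).toFinset.card ≥ 4 := by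
        calc ∑ w ∈ Finset.univ.erase w0, (B w).toFinset.card
            ≥ ∑ _w ∈ Finset.univ.erase w0, 1 := Finset.sum_le_sum (fun i _ => h1 i)
          _ = 4 := by simp [Finset.card_erase_of_mem]
      have h01 := Finset.add_sum_erase Finset.univ (fun w => (B w).toFinset.card)
        (Finset.mem_univ w0)
      omega
    have hrest1 : ∀ w, w ≠ w0 → (B w).toFinset.card = 1 := by
      intro w1 hw1
      by_contra hne1
      have hge1 : 2 ≤ (B w1).toFinset.card := lt_of_le_of_ne (h1 w1) (Ne.symm hne1)
      have h01 := Finset.add_sum_erase Finset.univ (fun w => (B w).toFinset.card)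
        (Finset.mem_univ w0)
      have h02 := Finset.add_sum_erase (Finset.univ.erase w0)
        (fun w => (B w).toFinset.card) (Finset.mem_erase.2 ⟨hw1, Finset.mem_univ w1⟩)
      have hrest2 : ∑ w ∈ (Finset.univ.erase w0).erase w1, (B w).toFinset.card ≥ 3 := by
        calc ∑ w ∈ (Finset.univ.erase w0).erase w1, (B w).toFinset.card
            ≥ ∑ _w ∈ (Finset.univ.erase w0).erase w1, 1 :=
              Finset.sum_le_sum (fun i _ => h1 i)
          _ = 3 := by
              simp [Finset.card_erase_of_mem, Finset.mem_erase.2 ⟨hw1, Finset.mem_univ w1⟩]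
      omega
    obtain ⟨x, y, hxyne, hxy⟩ := Finset.card_eq_two.1 hw02
    have hBw0 : B w0 = {x, y} := by
      rw [← Set.coe_toFinset (B w0), hxy]; simp
    have hadjxy : G.Adj x y := by
      apply adj_of_induce_pair_connected hxyne
      rw [← hBw0]; exact hconn w0
    have hsingle : ∀ w, w ≠ w0 → ∃ a, B w = {a} := by
      intro w hw
      obtain ⟨a, ha⟩ := Finset.card_eq_one.1 (hrest1 w hw)
      exact ⟨a, by rw [← Set.coe_toFinset (B w), ha]; simp⟩
    have hcover : ∀ z : Fin 6, ∃ w, z ∈ B w := by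
      have hsum6 : ∑ w, (B w).toFinset.card = 6 := by
        have h01 := Finset.add_sum_erase Finset.univ (fun w => (B w).toFinset.card)
          (Finset.mem_univ w0)
        have hrest : ∑ w ∈ Finset.univ.erase w0, (B w).toFinset.card = 4 := by
          rw [Finset.sum_congr rfl (fun w hw => hrest1 w (Finset.mem_erase.1 hw).1)]
          simp [Finset.card_erase_of_mem]
        omega
      have hd : ∀ x' ∈ (Finset.univ : Finset (Fin 5)), ∀ y' ∈ Finset.univ, x' ≠ y' →
          Disjoint (B x').toFinset (B y').toFinset := by
        intro x' _ y' _ hxy'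
        rw [Set.disjoint_toFinset]
        exact hdisj hxy'
      have hbu : (Finset.univ.biUnion fun w => (B w).toFinset).card = 6 := by
        rw [Finset.card_biUnion hd]; exact hsum6
      have huniv : (Finset.univ.biUnion fun w => (B w).toFinset) = Finset.univ :=
        Finset.eq_univ_of_card _ (by rw [hbu]; simp)
      intro z
      have hz : z ∈ Finset.univ.biUnion fun w => (B w).toFinset := by
        rw [huniv]; exact Finset.mem_univ z
      obtain ⟨w, _, hw⟩ := Finset.mem_biUnion.1 hz
      exact ⟨w, Set.mem_toFinset.1 hw⟩
    right
    refine ⟨x, y, hadjxy, ?_, ?_⟩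
    · intro a hax hay
      obtain ⟨w, hw⟩ := hcover a
      have hwne : w ≠ w0 := by
        rintro rfl
        rw [hBw0] at hw
        rcases hw with hh | hh
        · exact hax hh
        · exact hay hh
      obtain ⟨a', ha'⟩ := hsingle w hwne
      rw [ha', Set.mem_singleton_iff] at hw
      obtain ⟨p', hp', q', hq', hpq'⟩ := hedge' w0 w (Ne.symm hwne)
      rw [hBw0] at hp'
      rw [ha', Set.mem_singleton_iff] at hq'
      rw [hq', ← hw] at hpq'
      rcases hp' with hh | hh
      · left; rwa [hh] at hpq'
      · right
        have hh' : p' = y := hh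
        rwa [hh'] at hpq'
    · intro a b hax hay hbx hby hab
      obtain ⟨wa, hwa⟩ := hcover a
      obtain ⟨wb, hwb⟩ := hcover b
      have hwane : wa ≠ w0 := by
        rintro rfl
        rw [hBw0] at hwa
        rcases hwa with hh | hh
        · exact hax hh
        · exact hay hh
      have hwbne : wb ≠ w0 := by
        rintro rfl
        rw [hBw0] at hwb
        rcases hwb with hh | hh
        · exact hbx hh
        · exact hby hh
      obtain ⟨a', ha'⟩ := hsingle wa hwane
      obtain ⟨b', hb'⟩ := hsingle wb hwbne
      rw [ha', Set.mem_singleton_iff] at hwa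
      rw [hb', Set.mem_singleton_iff] at hwb
      have hwab : wa ≠ wb := by
        rintro rfl
        have hab' : a' = b' := Set.singleton_eq_singleton_iff.1 (ha'.symm.trans hb')
        exact hab (hwa.trans (hab'.trans hwb.symm))
      obtain ⟨p', hp', q', hq', hpq'⟩ := hedge' wa wb hwab
      rw [ha', Set.mem_singleton_iff] at hp'
      rw [hb', Set.mem_singleton_iff] at hq'
      rw [hp', ← hwa, hq', ← hwb] at hpq'
      exact hpq'
end chars

def ContPM (S : Fin 6 → Fin 6 → Prop) : Prop :=
  ∃ a b c d e f : Fin 6,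
    (a≠b ∧ a≠c ∧ a≠d ∧ a≠e ∧ a≠f ∧ b≠c ∧ b≠d ∧ b≠e ∧ b≠f ∧ c≠d ∧ c≠e ∧ c≠f ∧ d≠e ∧ d≠f ∧ e≠f) ∧
    S a b ∧ S c d ∧ S e f

def ContP4 (S : Fin 6 → Fin 6 → Prop) : Prop :=
  ∃ a b c d : Fin 6, (a≠b ∧ a≠c ∧ a≠d ∧ b≠c ∧ b≠d ∧ c≠d) ∧ S a b ∧ S b c ∧ S c d

def CovV (S : Fin 6 → Fin 6 → Prop) : Prop := ∃ v, ∀ p q, S p q → p = v ∨ q = v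

def CovP (S : Fin 6 → Fin 6 → Prop) : Prop :=
  ∃ x y, x ≠ y ∧ ¬S x y ∧ (∀ a, a ≠ x → a ≠ y → ¬(S x a ∧ S y a)) ∧
    (∀ a b, a ≠ x → a ≠ y → b ≠ x → b ≠ y → ¬S a b)

def Spl3 (S : Fin 6 → Fin 6 → Prop) : Prop :=
  ∃ a b c, a ≠ b ∧ a ≠ c ∧ b ≠ c ∧
    ∀ p q, S p q → ((p = a ∨ p = b ∨ p = c) ↔ (q = a ∨ q = b ∨ q = c))

set_option synthInstance.maxSize 1000 in
set_option maxRecDepth 10000 in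
lemma compl4 : ∀ a b c d : Fin 6, a≠b→a≠c→a≠d→b≠c→b≠d→c≠d →
    ∃ x y : Fin 6, x≠y ∧ x≠a ∧ x≠b ∧ x≠c ∧ x≠d ∧ y≠a ∧ y≠b ∧ y≠c ∧ y≠d ∧
      ∀ z : Fin 6, z=a∨z=b∨z=c∨z=d∨z=x∨z=y := by decide

section orperm
variable {p1 p2 p3 p4 p5 p6 : Prop}
lemma O1 (h : p1) : p1∨p2∨p3∨p4∨p5∨p6 := Or.inl h
lemma O2 (h : p2) : p1∨p2∨p3∨p4∨p5∨p6 := Or.inr (Or.inl h)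
lemma O3 (h : p3) : p1∨p2∨p3∨p4∨p5∨p6 := Or.inr (Or.inr (Or.inl h))
lemma O4 (h : p4) : p1∨p2∨p3∨p4∨p5∨p6 := Or.inr (Or.inr (Or.inr (Or.inl h)))
lemma O5 (h : p5) : p1∨p2∨p3∨p4∨p5∨p6 := Or.inr (Or.inr (Or.inr (Or.inr (Or.inl h))))
lemma O6 (h : p6) : p1∨p2∨p3∨p4∨p5∨p6 := Or.inr (Or.inr (Or.inr (Or.inr (Or.inr h))))
end orperm

lemma spl3_of_nocross {S : Fin 6 → Fin 6 → Prop} (hsym : Symmetric S) {a b c : Fin 6}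
    (h1 : a≠b) (h2 : a≠c) (h3 : b≠c)
    (h : ∀ p q, S p q → (p=a∨p=b∨p=c) → (q=a∨q=b∨q=c)) : Spl3 S :=
  ⟨a, b, c, h1, h2, h3, fun p q hpq => ⟨h p q hpq, h q p (hsym hpq)⟩⟩

lemma nocross_helper {S : Fin 6 → Fin 6 → Prop} {a b c d e f : Fin 6}
    (hall : ∀ z : Fin 6, z=a∨z=b∨z=c∨z=d∨z=e∨z=f)
    (h1 : ¬S a d) (h2 : ¬S a e) (h3 : ¬S a f) (h4 : ¬S b d) (h5 : ¬S b e) (h6 : ¬S b f)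
    (h7 : ¬S c d) (h8 : ¬S c e) (h9 : ¬S c f) :
    ∀ p q, S p q → (p=a∨p=b∨p=c) → (q=a∨q=b∨q=c) := by
  intro p q hpq hp
  by_contra hq
  push_neg at hq
  obtain ⟨hq1, hq2, hq3⟩ := hq
  rcases hall q with rfl|rfl|rfl|rfl|rfl|rfl <;> rcases hp with rfl|rfl|rfl <;>
    first
      | exact hq1 rfl | exact hq2 rfl | exact hq3 rfl
      | exact h1 hpq | exact h2 hpq | exact h3 hpq | exact h4 hpq | exact h5 hpq
      | exact h6 hpq | exact h7 hpq | exact h8 hpq | exact h9 hpq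

lemma covp_helper {S : Fin 6 → Fin 6 → Prop} (hsym : Symmetric S) (hirr : ∀ a, ¬S a a)
    {x y c d e f : Fin 6}
    (hall : ∀ z : Fin 6, z=x∨z=y∨z=c∨z=d∨z=e∨z=f)
    (hxy : x ≠ y) (hnxy : ¬S x y)
    (k1 : ¬(S x c ∧ S y c)) (k2 : ¬(S x d ∧ S y d)) (k3 : ¬(S x e ∧ S y e))
    (k4 : ¬(S x f ∧ S y f))
    (p1 : ¬S c d) (p2 : ¬S c e) (p3 : ¬S c f) (p4 : ¬S d e) (p5 : ¬S d f) (p6 : ¬S e f) :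
    CovP S := by
  refine ⟨x, y, hxy, hnxy, ?_, ?_⟩
  · intro u hux huy hh
    rcases hall u with rfl|rfl|rfl|rfl|rfl|rfl
    · exact hux rfl
    · exact huy rfl
    · exact k1 hh
    · exact k2 hh
    · exact k3 hh
    · exact k4 hh
  · intro u w hux huy hwx hwy hS
    rcases hall u with rfl|rfl|rfl|rfl|rfl|rfl <;> rcases hall w with rfl|rfl|rfl|rfl|rfl|rfl <;>
      first
        | exact hux rfl | exact huy rfl | exact hwx rfl | exact hwy rfl
        | exact hirr _ hS
        | exact p1 hS | exact p2 hS | exact p3 hS | exact p4 hS | exact p5 hS | exact p6 hS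
        | exact p1 (hsym hS) | exact p2 (hsym hS) | exact p3 (hsym hS) | exact p4 (hsym hS)
        | exact p5 (hsym hS) | exact p6 (hsym hS)

theorem core_classification (S : Fin 6 → Fin 6 → Prop) (hsym : Symmetric S)
    (hirr : ∀ a, ¬S a a) :
    ContPM S ∨ ContP4 S ∨ CovV S ∨ CovP S ∨ Spl3 S := by
  by_cases hE : ∃ p q, S p q
  case neg =>
    push_neg at hE
    exact Or.inr (Or.inr (Or.inl ⟨0, fun p q h => absurd h (hE p q)⟩))
  obtain ⟨a, b, hab⟩ := hE
  have hab' : a ≠ b := fun h => hirr b (h ▸ hab)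
  have hba' : b ≠ a := hab'.symm
  by_cases hB : ∃ c d, S c d ∧ c ≠ a ∧ c ≠ b ∧ d ≠ a ∧ d ≠ b
  case neg =>
    -- Case A : every edge meets {a, b}
    have hcov : ∀ p q, S p q → p = a ∨ p = b ∨ q = a ∨ q = b := by
      intro p q h
      by_contra hc
      push_neg at hc
      exact hB ⟨p, q, h, hc.1, hc.2.1, hc.2.2.1, hc.2.2.2⟩
    by_cases hNa : ∃ c, c ≠ a ∧ c ≠ b ∧ S a c
    case neg =>
      -- CovV b
      refine Or.inr (Or.inr (Or.inl ⟨b, ?_⟩))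
      intro p q hpq
      rcases hcov p q hpq with h|h|h|h
      · rw [h] at hpq
        right
        by_contra hq
        refine hNa ⟨q, fun h' => ?_, hq, hpq⟩
        rw [h'] at hpq
        exact hirr a hpq
      · exact Or.inl h
      · rw [h] at hpq
        left
        by_contra hp
        refine hNa ⟨p, fun h' => ?_, hp, hsym hpq⟩
        rw [h'] at hpq
        exact hirr a hpq
      · exact Or.inr h
    by_cases hNb : ∃ d, d ≠ a ∧ d ≠ b ∧ S b d
    case neg =>
      -- CovV a
      refine Or.inr (Or.inr (Or.inl ⟨a, ?_⟩))
      intro p q hpq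
      rcases hcov p q hpq with h|h|h|h
      · exact Or.inl h
      · rw [h] at hpq
        right
        by_contra hq
        refine hNb ⟨q, hq, fun h' => ?_, hpq⟩
        rw [h'] at hpq
        exact hirr b hpq
      · exact Or.inr h
      · rw [h] at hpq
        left
        by_contra hp
        refine hNb ⟨p, hp, fun h' => ?_, hsym hpq⟩
        rw [h'] at hpq
        exact hirr b hpq
    obtain ⟨c, hca, hcb, hSac⟩ := hNa
    obtain ⟨d, hda, hdb, hSbd⟩ := hNb
    by_cases hP4x : ∃ c' d', c' ≠ a ∧ c' ≠ b ∧ d' ≠ a ∧ d' ≠ b ∧ c' ≠ d' ∧ S a c' ∧ S b d'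
    case pos =>
      obtain ⟨c', d', h1, h2, h3, h4, h5, h6, h7⟩ := hP4x
      exact Or.inr (Or.inl ⟨c', a, b, d', ⟨h1, h2, h5, hab', h3.symm, h4.symm⟩,
        hsym h6, hab, h7⟩)
    have hcd : c = d := by
      by_contra hcd
      exact hP4x ⟨c, d, hca, hcb, hda, hdb, hcd, hSac, hSbd⟩
    subst hcd
    -- Spl3 {a, b, c}
    refine Or.inr (Or.inr (Or.inr (Or.inr (spl3_of_nocross hsym hab' hca.symm hcb.symm ?_))))
    intro p q hpq hp
    by_contra hq
    push_neg at hq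
    obtain ⟨hq1, hq2, hq3⟩ := hq
    rcases hp with rfl|rfl|rfl
    · exact hP4x ⟨q, c, hq1, hq2, hda, hdb, fun h => hq3 h, hpq, hSbd⟩
    · exact hP4x ⟨c, q, hca, hcb, hq1, hq2, fun h => hq3 h.symm, hSac, hpq⟩
    · rcases hcov p q hpq with h|h|h|h
      · exact hca h
      · exact hcb h
      · exact hq1 h
      · exact hq2 h
  -- Case B : there is an edge c-d disjoint from {a, b}
  obtain ⟨c, d, hScd, hca, hcb, hda, hdb⟩ := hB
  have hcd : c ≠ d := fun h => hirr d (h ▸ hScd)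
  obtain ⟨x, y, hxy, hxa, hxb, hxc, hxd, hya, hyb, hyc, hyd, hall⟩ :=
    compl4 a b c d hab' hca.symm hda.symm hcb.symm hdb.symm hcd
  -- symmetric copies of all the inequalities
  have hac' : a ≠ c := hca.symm
  have had' : a ≠ d := hda.symm
  have hax' : a ≠ x := hxa.symm
  have hay' : a ≠ y := hya.symm
  have hbc' : b ≠ c := hcb.symm
  have hbd' : b ≠ d := hdb.symm
  have hbx' : b ≠ x := hxb.symm
  have hby' : b ≠ y := hyb.symm
  have hcx' : c ≠ x := hxc.symm
  have hcy' : c ≠ y := hyc.symm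
  have hdx' : d ≠ x := hxd.symm
  have hdy' : d ≠ y := hyd.symm
  have hdc' : d ≠ c := hcd.symm
  have hyx' : y ≠ x := hxy.symm
  by_cases hSxy : S x y
  case pos =>
    refine Or.inl ⟨a, b, c, d, x, y, ?_, hab, hScd, hSxy⟩
    refine ⟨?_,?_,?_,?_,?_,?_,?_,?_,?_,?_,?_,?_,?_,?_,?_⟩ <;> assumption
  by_cases hPQ : S a c ∨ S a d ∨ S b c ∨ S b d
  case pos =>
    refine Or.inr (Or.inl ?_)
    rcases hPQ with h|h|h|h
    · exact ⟨b, a, c, d, ⟨hba', hbc', hbd', hac', had', hcd⟩, hsym hab, h, hScd⟩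
    · exact ⟨b, a, d, c, ⟨hba', hbd', hbc', had', hac', hdc'⟩, hsym hab, h, hsym hScd⟩
    · exact ⟨a, b, c, d, ⟨hab', hac', had', hbc', hbd', hcd⟩, hab, h, hScd⟩
    · exact ⟨a, b, d, c, ⟨hab', had', hac', hbd', hbc', hdc'⟩, hab, h, hsym hScd⟩
  push_neg at hPQ
  obtain ⟨hnac, hnad, hnbc, hnbd⟩ := hPQ
  by_cases hxP : S x a ∨ S x b
  · by_cases hxQ : S x c ∨ S x d
    · -- P4 through x
      refine Or.inr (Or.inl ?_)
      rcases hxP with h1|h1 <;> rcases hxQ with h2|h2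
      · exact ⟨b, a, x, c, ⟨hba', hbx', hbc', hax', hac', hxc⟩, hsym hab, hsym h1, h2⟩
      · exact ⟨b, a, x, d, ⟨hba', hbx', hbd', hax', had', hxd⟩, hsym hab, hsym h1, h2⟩
      · exact ⟨a, b, x, c, ⟨hab', hax', hac', hbx', hbc', hxc⟩, hab, hsym h1, h2⟩
      · exact ⟨a, b, x, d, ⟨hab', hax', had', hbx', hbd', hxd⟩, hab, hsym h1, h2⟩
    · push_neg at hxQ
      obtain ⟨hnxc, hnxd⟩ := hxQ
      by_cases hyP : S y a ∨ S y b
      · by_cases hyQ : S y c ∨ S y d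
        · -- P4 through y
          refine Or.inr (Or.inl ?_)
          rcases hyP with h1|h1 <;> rcases hyQ with h2|h2
          · exact ⟨b, a, y, c, ⟨hba', hby', hbc', hay', hac', hyc⟩, hsym hab, hsym h1, h2⟩
          · exact ⟨b, a, y, d, ⟨hba', hby', hbd', hay', had', hyd⟩, hsym hab, hsym h1, h2⟩
          · exact ⟨a, b, y, c, ⟨hab', hay', hac', hby', hbc', hyc⟩, hab, hsym h1, h2⟩
          · exact ⟨a, b, y, d, ⟨hab', hay', had', hby', hbd', hyd⟩, hab, hsym h1, h2⟩
        · push_neg at hyQ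
          obtain ⟨hnyc, hnyd⟩ := hyQ
          -- x, y both attached only to {a, b}
          by_cases hsxa : S x a
          · by_cases hsyb : S y b
            · refine Or.inl ⟨x, a, y, b, c, d, ?_, hsxa, hsyb, hScd⟩
              refine ⟨?_,?_,?_,?_,?_,?_,?_,?_,?_,?_,?_,?_,?_,?_,?_⟩ <;> assumption
            · have hsya : S y a := by
                rcases hyP with h|h
                · exact h
                · exact absurd h hsyb
              by_cases hsxb : S x b
              · refine Or.inl ⟨x, b, y, a, c, d, ?_, hsxb, hsya, hScd⟩
                refine ⟨?_,?_,?_,?_,?_,?_,?_,?_,?_,?_,?_,?_,?_,?_,?_⟩ <;> assumption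
              · -- all P-attachments go to a only : CovP (a, c)
                have hall' : ∀ z : Fin 6, z=a∨z=c∨z=b∨z=d∨z=x∨z=y := fun z => by
                  rcases hall z with h|h|h|h|h|h
                  exacts [O1 h, O3 h, O2 h, O4 h, O5 h, O6 h]
                refine Or.inr (Or.inr (Or.inr (Or.inl
                  (covp_helper hsym hirr hall' hac' hnac
                    ?_ ?_ ?_ ?_ ?_ ?_ ?_ ?_ ?_ ?_))))
                · rintro ⟨_, hh⟩; exact hnbc (hsym hh)
                · rintro ⟨hh, _⟩; exact hnad hh
                · rintro ⟨_, hh⟩; exact hnxc (hsym hh)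
                · rintro ⟨_, hh⟩; exact hnyc (hsym hh)
                · exact hnbd
                · exact fun hh => hsxb (hsym hh)
                · exact fun hh => hsyb (hsym hh)
                · exact fun hh => hnxd (hsym hh)
                · exact fun hh => hnyd (hsym hh)
                · exact hSxy
          · have hsxb : S x b := by
              rcases hxP with h|h
              · exact absurd h hsxa
              · exact h
            by_cases hsya : S y a
            · refine Or.inl ⟨x, b, y, a, c, d, ?_, hsxb, hsya, hScd⟩
              refine ⟨?_,?_,?_,?_,?_,?_,?_,?_,?_,?_,?_,?_,?_,?_,?_⟩ <;> assumption
            · have hsyb : S y b := by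
                rcases hyP with h|h
                · exact absurd h hsya
                · exact h
              -- all P-attachments go to b only : CovP (b, c)
              have hall' : ∀ z : Fin 6, z=b∨z=c∨z=a∨z=d∨z=x∨z=y := fun z => by
                rcases hall z with h|h|h|h|h|h
                exacts [O3 h, O1 h, O2 h, O4 h, O5 h, O6 h]
              refine Or.inr (Or.inr (Or.inr (Or.inl
                (covp_helper hsym hirr hall' hbc' hnbc
                  ?_ ?_ ?_ ?_ ?_ ?_ ?_ ?_ ?_ ?_))))
              · rintro ⟨_, hh⟩; exact hnac (hsym hh)
              · rintro ⟨hh, _⟩; exact hnbd hh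
              · rintro ⟨_, hh⟩; exact hnxc (hsym hh)
              · rintro ⟨_, hh⟩; exact hnyc (hsym hh)
              · exact hnad
              · exact fun hh => hsxa (hsym hh)
              · exact fun hh => hsya (hsym hh)
              · exact fun hh => hnxd (hsym hh)
              · exact fun hh => hnyd (hsym hh)
              · exact hSxy
      · -- y unattached to P ; x attached to P only : Spl3 (a,b,x)
        push_neg at hyP
        obtain ⟨hnya, hnyb⟩ := hyP
        refine Or.inr (Or.inr (Or.inr (Or.inr
          (spl3_of_nocross hsym hab' hax' hbx' ?_))))
        have hall' : ∀ z : Fin 6, z=a∨z=b∨z=x∨z=c∨z=d∨z=y := fun z => by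
          rcases hall z with h|h|h|h|h|h
          exacts [O1 h, O2 h, O4 h, O5 h, O3 h, O6 h]
        exact nocross_helper hall'
          hnac hnad (fun hh => hnya (hsym hh)) hnbc hnbd (fun hh => hnyb (hsym hh))
          hnxc hnxd hSxy
  · push_neg at hxP
    obtain ⟨hnxa, hnxb⟩ := hxP
    by_cases hxQ : S x c ∨ S x d
    · by_cases hyQ : S y c ∨ S y d
      · by_cases hyP : S y a ∨ S y b
        · -- P4 through y
          refine Or.inr (Or.inl ?_)
          rcases hyP with h1|h1 <;> rcases hyQ with h2|h2
          · exact ⟨b, a, y, c, ⟨hba', hby', hbc', hay', hac', hyc⟩, hsym hab, hsym h1, h2⟩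
          · exact ⟨b, a, y, d, ⟨hba', hby', hbd', hay', had', hyd⟩, hsym hab, hsym h1, h2⟩
          · exact ⟨a, b, y, c, ⟨hab', hay', hac', hby', hbc', hyc⟩, hab, hsym h1, h2⟩
          · exact ⟨a, b, y, d, ⟨hab', hay', had', hby', hbd', hyd⟩, hab, hsym h1, h2⟩
        · push_neg at hyP
          obtain ⟨hnya, hnyb⟩ := hyP
          -- x, y attached only to {c, d}
          by_cases hsxc : S x c
          · by_cases hsyd : S y d
            · refine Or.inl ⟨x, c, y, d, a, b, ?_, hsxc, hsyd, hab⟩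
              refine ⟨?_,?_,?_,?_,?_,?_,?_,?_,?_,?_,?_,?_,?_,?_,?_⟩ <;> assumption
            · have hsyc : S y c := by
                rcases hyQ with h|h
                · exact h
                · exact absurd h hsyd
              by_cases hsxd : S x d
              · refine Or.inl ⟨x, d, y, c, a, b, ?_, hsxd, hsyc, hab⟩
                refine ⟨?_,?_,?_,?_,?_,?_,?_,?_,?_,?_,?_,?_,?_,?_,?_⟩ <;> assumption
              · -- CovP (c, a)
                have hall' : ∀ z : Fin 6, z=c∨z=a∨z=b∨z=d∨z=x∨z=y := fun z => by
                  rcases hall z with h|h|h|h|h|h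
                  exacts [O2 h, O3 h, O1 h, O4 h, O5 h, O6 h]
                refine Or.inr (Or.inr (Or.inr (Or.inl
                  (covp_helper hsym hirr hall' hca (fun hh => hnac (hsym hh))
                    ?_ ?_ ?_ ?_ ?_ ?_ ?_ ?_ ?_ ?_))))
                · rintro ⟨hh, _⟩; exact hnbc (hsym hh)
                · rintro ⟨_, hh⟩; exact hnad hh
                · rintro ⟨_, hh⟩; exact hnxa (hsym hh)
                · rintro ⟨_, hh⟩; exact hnya (hsym hh)
                · exact hnbd
                · exact fun hh => hnxb (hsym hh)
                · exact fun hh => hnyb (hsym hh)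
                · exact fun hh => hsxd (hsym hh)
                · exact fun hh => hsyd (hsym hh)
                · exact hSxy
          · have hsxd : S x d := by
              rcases hxQ with h|h
              · exact absurd h hsxc
              · exact h
            by_cases hsyc : S y c
            · refine Or.inl ⟨x, d, y, c, a, b, ?_, hsxd, hsyc, hab⟩
              refine ⟨?_,?_,?_,?_,?_,?_,?_,?_,?_,?_,?_,?_,?_,?_,?_⟩ <;> assumption
            · have hsyd : S y d := by
                rcases hyQ with h|h
                · exact absurd h hsyc
                · exact h
              -- CovP (d, a)
              have hall' : ∀ z : Fin 6, z=d∨z=a∨z=b∨z=c∨z=x∨z=y := fun z => by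
                rcases hall z with h|h|h|h|h|h
                exacts [O2 h, O3 h, O4 h, O1 h, O5 h, O6 h]
              refine Or.inr (Or.inr (Or.inr (Or.inl
                (covp_helper hsym hirr hall' hda (fun hh => hnad (hsym hh))
                  ?_ ?_ ?_ ?_ ?_ ?_ ?_ ?_ ?_ ?_))))
              · rintro ⟨hh, _⟩; exact hnbd (hsym hh)
              · rintro ⟨_, hh⟩; exact hnac hh
              · rintro ⟨_, hh⟩; exact hnxa (hsym hh)
              · rintro ⟨_, hh⟩; exact hnya (hsym hh)
              · exact hnbc
              · exact fun hh => hnxb (hsym hh)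
              · exact fun hh => hnyb (hsym hh)
              · exact fun hh => hsxc (hsym hh)
              · exact fun hh => hsyc (hsym hh)
              · exact hSxy
      · -- Spl3 (c, d, x)
        push_neg at hyQ
        obtain ⟨hnyc, hnyd⟩ := hyQ
        refine Or.inr (Or.inr (Or.inr (Or.inr
          (spl3_of_nocross hsym hcd hcx' hdx' ?_))))
        have hall' : ∀ z : Fin 6, z=c∨z=d∨z=x∨z=a∨z=b∨z=y := fun z => by
          rcases hall z with h|h|h|h|h|h
          exacts [O4 h, O5 h, O1 h, O2 h, O3 h, O6 h]
        exact nocross_helper hall'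
          (fun hh => hnac (hsym hh)) (fun hh => hnbc (hsym hh)) (fun hh => hnyc (hsym hh))
          (fun hh => hnad (hsym hh)) (fun hh => hnbd (hsym hh)) (fun hh => hnyd (hsym hh))
          hnxa hnxb hSxy
    · push_neg at hxQ
      obtain ⟨hnxc, hnxd⟩ := hxQ
      by_cases hyP : S y a ∨ S y b
      · by_cases hyQ : S y c ∨ S y d
        · -- P4 through y
          refine Or.inr (Or.inl ?_)
          rcases hyP with h1|h1 <;> rcases hyQ with h2|h2
          · exact ⟨b, a, y, c, ⟨hba', hby', hbc', hay', hac', hyc⟩, hsym hab, hsym h1, h2⟩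
          · exact ⟨b, a, y, d, ⟨hba', hby', hbd', hay', had', hyd⟩, hsym hab, hsym h1, h2⟩
          · exact ⟨a, b, y, c, ⟨hab', hay', hac', hby', hbc', hyc⟩, hab, hsym h1, h2⟩
          · exact ⟨a, b, y, d, ⟨hab', hay', had', hby', hbd', hyd⟩, hab, hsym h1, h2⟩
        · -- Spl3 (c, d, x) : y attached to P only, x isolated
          push_neg at hyQ
          obtain ⟨hnyc, hnyd⟩ := hyQ
          refine Or.inr (Or.inr (Or.inr (Or.inr
            (spl3_of_nocross hsym hcd hcx' hdx' ?_))))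
          have hall' : ∀ z : Fin 6, z=c∨z=d∨z=x∨z=a∨z=b∨z=y := fun z => by
            rcases hall z with h|h|h|h|h|h
            exacts [O4 h, O5 h, O1 h, O2 h, O3 h, O6 h]
          exact nocross_helper hall'
            (fun hh => hnac (hsym hh)) (fun hh => hnbc (hsym hh)) (fun hh => hnyc (hsym hh))
            (fun hh => hnad (hsym hh)) (fun hh => hnbd (hsym hh)) (fun hh => hnyd (hsym hh))
            hnxa hnxb hSxy
      · -- Spl3 (a, b, x) : x isolated, y unattached to P
        push_neg at hyP
        obtain ⟨hnya, hnyb⟩ := hyP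
        refine Or.inr (Or.inr (Or.inr (Or.inr
          (spl3_of_nocross hsym hab' hax' hbx' ?_))))
        have hall' : ∀ z : Fin 6, z=a∨z=b∨z=x∨z=c∨z=d∨z=y := fun z => by
          rcases hall z with h|h|h|h|h|h
          exacts [O1 h, O2 h, O4 h, O5 h, O3 h, O6 h]
        exact nocross_helper hall'
          hnac hnad (fun hh => hnya (hsym hh)) hnbc hnbd (fun hh => hnyb (hsym hh))
          hnxc hnxd hSxy

set_option synthInstance.maxSize 1000 in
set_option maxRecDepth 100000 in
set_option maxHeartbeats 2000000 in
lemma cover6 : ∀ a b c d e f : Fin 6,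
    a≠b → a≠c → a≠d → a≠e → a≠f → b≠c → b≠d → b≠e → b≠f → c≠d → c≠e → c≠f → d≠e → d≠f → e≠f →
    ∀ z : Fin 6, z=a∨z=b∨z=c∨z=d∨z=e∨z=f := by decide

section refute
variable {G : SimpleGraph (Fin 6)} {a b c d e f : Fin 6}

lemma card3 {u v w : Fin 6} (h1 : u≠v) (h2 : u≠w) (h3 : v≠w) :
    ({u, v, w} : Finset (Fin 6)).card = 3 := by
  rw [Finset.card_insert_of_notMem (by simp [h1, h2]),
    Finset.card_insert_of_notMem (by simp [h3]), Finset.card_singleton]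

/-- Refutation of `W33` for a graph whose non-adjacencies pair up `a-b`, `c-d`, `e-f`
    (perfect matching case). -/
lemma noW33_pm
    (h1 : a≠b) (h2 : a≠c) (h3 : a≠d) (h4 : a≠e) (h5 : a≠f) (h6 : b≠c) (h7 : b≠d)
    (h8 : b≠e) (h9 : b≠f) (h10 : c≠d) (h11 : c≠e) (h12 : c≠f) (h13 : d≠e) (h14 : d≠f)
    (h15 : e≠f)
    (nab : ¬G.Adj a b) (ncd : ¬G.Adj c d) (nef : ¬G.Adj e f) : ¬W33 G := by
  rintro ⟨u, v, w, g1, g2, g3, hcr⟩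
  have hall := cover6 a b c d e f h1 h2 h3 h4 h5 h6 h7 h8 h9 h10 h11 h12 h13 h14 h15
  set P : Fin 6 → Prop := fun z => z = u ∨ z = v ∨ z = w with hP
  have same : ∀ p q : Fin 6, ¬G.Adj p q → (P p ↔ P q) := by
    intro p q hn
    constructor
    · intro hp
      by_contra hq
      exact hn (hcr p q hp hq)
    · intro hq
      by_contra hp
      exact hn ((hcr q p hq hp).symm)
  have sab := same a b nab
  have scd := same c d ncd
  have sef := same e f nef
  have hTsub : ∀ z, P z → (z = a ∨ z = b ∨ z = c ∨ z = d ∨ z = e ∨ z = f) := fun z _ => hall z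
  -- the set of `P`-vertices is exactly {u,v,w}, which has card 3.
  have hmemP : ∀ z : Fin 6, P z ↔ z ∈ ({u, v, w} : Finset (Fin 6)) := by
    intro z; simp [hP, Finset.mem_insert]
  have hcard : ({u, v, w} : Finset (Fin 6)).card = 3 := card3 g1 g2 g3
  by_cases pa : P a <;> by_cases pc : P c <;> by_cases pe : P e
  · -- P a, P c, P e : everything is P : {a,b,c,d,e,f} ⊆ {u,v,w}
    have hsub : ({a, b, c, d, e, f} : Finset (Fin 6)) ⊆ {u, v, w} := by
      intro z hz
      rw [← hmemP z]
      simp only [Finset.mem_insert, Finset.mem_singleton] at hz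
      rcases hz with rfl|rfl|rfl|rfl|rfl|rfl
      · exact pa
      · exact sab.1 pa
      · exact pc
      · exact scd.1 pc
      · exact pe
      · exact sef.1 pe
    have hbig : ({a, b, c, d, e, f} : Finset (Fin 6)).card = 6 := by
      rw [Finset.card_insert_of_notMem (by simp [h1,h2,h3,h4,h5]),
        Finset.card_insert_of_notMem (by simp [h6,h7,h8,h9]),
        Finset.card_insert_of_notMem (by simp [h10,h11,h12]),
        Finset.card_insert_of_notMem (by simp [h13,h14]),
        Finset.card_insert_of_notMem (by simp [h15]), Finset.card_singleton]
    have := Finset.card_le_card hsub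
    omega
  · -- P a, P c, ¬P e : {u,v,w} = {a,b,c,d}
    have hsub : ({u, v, w} : Finset (Fin 6)) ⊆ {a, b, c, d} := by
      intro z hz
      rw [← hmemP z] at hz
      rcases hall z with rfl|rfl|rfl|rfl|rfl|rfl <;>
        first
          | (exact absurd hz pa) | (exact absurd (sab.2 hz) pa)
          | (exact absurd hz pc) | (exact absurd (scd.2 hz) pc)
          | (exact absurd hz pe) | (exact absurd (sef.2 hz) pe)
          | simp
    have hsub2 : ({a, b, c, d} : Finset (Fin 6)) ⊆ {u, v, w} := by
      intro z hz
      rw [← hmemP z]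
      simp only [Finset.mem_insert, Finset.mem_singleton] at hz
      rcases hz with rfl|rfl|rfl|rfl
      · exact pa
      · exact sab.1 pa
      · exact pc
      · exact scd.1 pc
    have heq := Finset.Subset.antisymm hsub hsub2
    have h4c : ({a, b, c, d} : Finset (Fin 6)).card = 4 := by
      rw [Finset.card_insert_of_notMem (by simp [h1,h2,h3]),
        Finset.card_insert_of_notMem (by simp [h6,h7]),
        Finset.card_insert_of_notMem (by simp [h10]), Finset.card_singleton]
    rw [heq, h4c] at hcard
    omega
  · -- P a, ¬P c, P e : {u,v,w} = {a,b,e,f}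
    have hsub : ({u, v, w} : Finset (Fin 6)) ⊆ {a, b, e, f} := by
      intro z hz
      rw [← hmemP z] at hz
      rcases hall z with rfl|rfl|rfl|rfl|rfl|rfl <;>
        first
          | (exact absurd hz pa) | (exact absurd (sab.2 hz) pa)
          | (exact absurd hz pc) | (exact absurd (scd.2 hz) pc)
          | (exact absurd hz pe) | (exact absurd (sef.2 hz) pe)
          | simp
    have hsub2 : ({a, b, e, f} : Finset (Fin 6)) ⊆ {u, v, w} := by
      intro z hz
      rw [← hmemP z]
      simp only [Finset.mem_insert, Finset.mem_singleton] at hz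
      rcases hz with rfl|rfl|rfl|rfl
      · exact pa
      · exact sab.1 pa
      · exact pe
      · exact sef.1 pe
    have heq := Finset.Subset.antisymm hsub hsub2
    have h4c : ({a, b, e, f} : Finset (Fin 6)).card = 4 := by
      rw [Finset.card_insert_of_notMem (by simp [h1,h4,h5]),
        Finset.card_insert_of_notMem (by simp [h8,h9]),
        Finset.card_insert_of_notMem (by simp [h15]), Finset.card_singleton]
    rw [heq, h4c] at hcard
    omega
  · -- P a only : {u,v,w} = {a,b}
    have hsub : ({u, v, w} : Finset (Fin 6)) ⊆ {a, b} := by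
      intro z hz
      rw [← hmemP z] at hz
      rcases hall z with rfl|rfl|rfl|rfl|rfl|rfl <;>
        first
          | (exact absurd hz pa) | (exact absurd (sab.2 hz) pa)
          | (exact absurd hz pc) | (exact absurd (scd.2 hz) pc)
          | (exact absurd hz pe) | (exact absurd (sef.2 hz) pe)
          | simp
    have := Finset.card_le_card hsub
    rw [hcard] at this
    have : ({a, b} : Finset (Fin 6)).card ≤ 2 := Finset.card_insert_le _ _ |>.trans (by simp)
    omega
  · -- ¬P a, P c, P e : {u,v,w} = {c,d,e,f}
    have hsub : ({u, v, w} : Finset (Fin 6)) ⊆ {c, d, e, f} := by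
      intro z hz
      rw [← hmemP z] at hz
      rcases hall z with rfl|rfl|rfl|rfl|rfl|rfl <;>
        first
          | (exact absurd hz pa) | (exact absurd (sab.2 hz) pa)
          | (exact absurd hz pc) | (exact absurd (scd.2 hz) pc)
          | (exact absurd hz pe) | (exact absurd (sef.2 hz) pe)
          | simp
    have hsub2 : ({c, d, e, f} : Finset (Fin 6)) ⊆ {u, v, w} := by
      intro z hz
      rw [← hmemP z]
      simp only [Finset.mem_insert, Finset.mem_singleton] at hz
      rcases hz with rfl|rfl|rfl|rfl
      · exact pc
      · exact scd.1 pc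
      · exact pe
      · exact sef.1 pe
    have heq := Finset.Subset.antisymm hsub hsub2
    have h4c : ({c, d, e, f} : Finset (Fin 6)).card = 4 := by
      rw [Finset.card_insert_of_notMem (by simp [h10,h11,h12]),
        Finset.card_insert_of_notMem (by simp [h13,h14]),
        Finset.card_insert_of_notMem (by simp [h15]), Finset.card_singleton]
    rw [heq, h4c] at hcard
    omega
  · -- P c only
    have hsub : ({u, v, w} : Finset (Fin 6)) ⊆ {c, d} := by
      intro z hz
      rw [← hmemP z] at hz
      rcases hall z with rfl|rfl|rfl|rfl|rfl|rfl <;>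
        first
          | (exact absurd hz pa) | (exact absurd (sab.2 hz) pa)
          | (exact absurd hz pc) | (exact absurd (scd.2 hz) pc)
          | (exact absurd hz pe) | (exact absurd (sef.2 hz) pe)
          | simp
    have := Finset.card_le_card hsub
    rw [hcard] at this
    have : ({c, d} : Finset (Fin 6)).card ≤ 2 := Finset.card_insert_le _ _ |>.trans (by simp)
    omega
  · -- P e only
    have hsub : ({u, v, w} : Finset (Fin 6)) ⊆ {e, f} := by
      intro z hz
      rw [← hmemP z] at hz
      rcases hall z with rfl|rfl|rfl|rfl|rfl|rfl <;>
        first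
          | (exact absurd hz pa) | (exact absurd (sab.2 hz) pa)
          | (exact absurd hz pc) | (exact absurd (scd.2 hz) pc)
          | (exact absurd hz pe) | (exact absurd (sef.2 hz) pe)
          | simp
    have := Finset.card_le_card hsub
    rw [hcard] at this
    have : ({e, f} : Finset (Fin 6)).card ≤ 2 := Finset.card_insert_le _ _ |>.trans (by simp)
    omega
  · -- nothing is P, but u is P
    have hu : P u := Or.inl rfl
    rcases hall u with rfl|rfl|rfl|rfl|rfl|rfl <;>
      first
        | (exact pa hu) | (exact pa (sab.2 hu))
        | (exact pc hu) | (exact pc (scd.2 hu))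
        | (exact pe hu) | (exact pe (sef.2 hu))
end refute

section refute2
variable {G : SimpleGraph (Fin 6)} {a b c d e f : Fin 6}

lemma noW5c_pm
    (h1 : a≠b) (h2 : a≠c) (h3 : a≠d) (h6 : b≠c) (h7 : b≠d) (h10 : c≠d)
    (nab : ¬G.Adj a b) (ncd : ¬G.Adj c d) : ¬W5c G := by
  rintro ⟨v, hv⟩
  by_cases hva : v = a
  · subst hva
    exact ncd (hv c d (Ne.symm h2) (Ne.symm h3) h10)
  · by_cases hvb : v = b
    · subst hvb
      exact ncd (hv c d (Ne.symm h6) (Ne.symm h7) h10)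
    · exact nab (hv a b (fun h => hva h.symm) (fun h => hvb h.symm) h1)

lemma noW5p_pm
    (h1 : a≠b) (h2 : a≠c) (h3 : a≠d) (h4 : a≠e) (h5 : a≠f) (h6 : b≠c) (h7 : b≠d)
    (h8 : b≠e) (h9 : b≠f) (h10 : c≠d) (h11 : c≠e) (h12 : c≠f) (h13 : d≠e) (h14 : d≠f)
    (h15 : e≠f)
    (nab : ¬G.Adj a b) (ncd : ¬G.Adj c d) (nef : ¬G.Adj e f) : ¬W5p G := by
  rintro ⟨x, y, hxy, hn, ho⟩
  by_cases t1 : x = a ∨ x = b ∨ y = a ∨ y = b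
  · by_cases t2 : x = c ∨ x = d ∨ y = c ∨ y = d
    · by_cases t3 : x = e ∨ x = f ∨ y = e ∨ y = f
      · rcases t1 with e1|e1|e1|e1 <;> rcases t2 with e2|e2|e2|e2 <;>
          rcases t3 with e3|e3|e3|e3 <;>
          first
            | exact h2 (e1.symm.trans e2) | exact h3 (e1.symm.trans e2)
            | exact h6 (e1.symm.trans e2) | exact h7 (e1.symm.trans e2)
            | exact h4 (e1.symm.trans e3) | exact h5 (e1.symm.trans e3)
            | exact h8 (e1.symm.trans e3) | exact h9 (e1.symm.trans e3)
            | exact h11 (e2.symm.trans e3) | exact h12 (e2.symm.trans e3)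
            | exact h13 (e2.symm.trans e3) | exact h14 (e2.symm.trans e3)
      · push_neg at t3
        obtain ⟨g1, g2, g3, g4⟩ := t3
        exact nef (ho e f (fun h => g1 h.symm) (fun h => g3 h.symm)
          (fun h => g2 h.symm) (fun h => g4 h.symm) h15)
    · push_neg at t2
      obtain ⟨g1, g2, g3, g4⟩ := t2
      exact ncd (ho c d (fun h => g1 h.symm) (fun h => g3 h.symm)
        (fun h => g2 h.symm) (fun h => g4 h.symm) h10)
  · push_neg at t1
    obtain ⟨g1, g2, g3, g4⟩ := t1
    exact nab (ho a b (fun h => g1 h.symm) (fun h => g3 h.symm)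
      (fun h => g2 h.symm) (fun h => g4 h.symm) h1)

lemma noW33_p4
    (h1 : a≠b) (h2 : a≠c) (h3 : a≠d) (h4 : a≠e) (h5 : a≠f) (h6 : b≠c) (h7 : b≠d)
    (h8 : b≠e) (h9 : b≠f) (h10 : c≠d) (h11 : c≠e) (h12 : c≠f) (h13 : d≠e) (h14 : d≠f)
    (h15 : e≠f)
    (nab : ¬G.Adj a b) (nbc : ¬G.Adj b c) (ncd : ¬G.Adj c d) : ¬W33 G := by
  rintro ⟨u, v, w, g1, g2, g3, hcr⟩
  have hall := cover6 a b c d e f h1 h2 h3 h4 h5 h6 h7 h8 h9 h10 h11 h12 h13 h14 h15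
  set P : Fin 6 → Prop := fun z => z = u ∨ z = v ∨ z = w with hP
  have same : ∀ p q : Fin 6, ¬G.Adj p q → (P p ↔ P q) := by
    intro p q hn
    constructor
    · intro hp
      by_contra hq
      exact hn (hcr p q hp hq)
    · intro hq
      by_contra hp
      exact hn ((hcr q p hq hp).symm)
  have sab := same a b nab
  have sbc := same b c nbc
  have scd := same c d ncd
  have hmemP : ∀ z : Fin 6, P z ↔ z ∈ ({u, v, w} : Finset (Fin 6)) := by
    intro z; simp [hP, Finset.mem_insert]
  have hcard : ({u, v, w} : Finset (Fin 6)).card = 3 := card3 g1 g2 g3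
  by_cases pa : P a
  · have pb := sab.1 pa
    have pc := sbc.1 pb
    have pd := scd.1 pc
    have hsub : ({a, b, c, d} : Finset (Fin 6)) ⊆ {u, v, w} := by
      intro z hz
      rw [← hmemP z]
      simp only [Finset.mem_insert, Finset.mem_singleton] at hz
      rcases hz with rfl|rfl|rfl|rfl
      · exact pa
      · exact pb
      · exact pc
      · exact pd
    have h4c : ({a, b, c, d} : Finset (Fin 6)).card = 4 := by
      rw [Finset.card_insert_of_notMem (by simp [h1,h2,h3]),
        Finset.card_insert_of_notMem (by simp [h6,h7]),
        Finset.card_insert_of_notMem (by simp [h10]), Finset.card_singleton]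
    have := Finset.card_le_card hsub
    omega
  · have pb : ¬P b := fun h => pa (sab.2 h)
    have pc : ¬P c := fun h => pb (sbc.2 h)
    have pd : ¬P d := fun h => pc (scd.2 h)
    have hsub : ({u, v, w} : Finset (Fin 6)) ⊆ {e, f} := by
      intro z hz
      rw [← hmemP z] at hz
      rcases hall z with rfl|rfl|rfl|rfl|rfl|rfl <;>
        first
          | (exact absurd hz pa) | (exact absurd hz pb)
          | (exact absurd hz pc) | (exact absurd hz pd)
          | simp
    have := Finset.card_le_card hsub
    rw [hcard] at this
    have h2c : ({e, f} : Finset (Fin 6)).card ≤ 2 :=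
      Finset.card_insert_le _ _ |>.trans (by simp)
    omega

lemma noW5c_p4
    (h1 : a≠b) (h2 : a≠c) (h3 : a≠d) (h6 : b≠c) (h7 : b≠d) (h10 : c≠d)
    (nab : ¬G.Adj a b) (ncd : ¬G.Adj c d) : ¬W5c G :=
  noW5c_pm h1 h2 h3 h6 h7 h10 nab ncd

lemma noW5p_p4
    (h1 : a≠b) (h2 : a≠c) (h3 : a≠d) (h6 : b≠c) (h7 : b≠d) (h10 : c≠d)
    (nab : ¬G.Adj a b) (nbc : ¬G.Adj b c) (ncd : ¬G.Adj c d) : ¬W5p G := by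
  rintro ⟨x, y, hxy, hn, ho⟩
  by_cases hbxy : b = x ∨ b = y
  · by_cases hcxy : c = x ∨ c = y
    · rcases hbxy with rfl|rfl <;> rcases hcxy with rfl|rfl <;>
        first
          | exact h6 rfl | exact nbc hxy | exact nbc hxy.symm
    · push_neg at hcxy
      by_cases hdxy : d = x ∨ d = y
      · rcases hbxy with rfl|rfl <;> rcases hdxy with rfl|rfl
        · exact h7 rfl
        · rcases hn c (fun h => hcxy.1 h) (fun h => hcxy.2 h) with hh | hh
          · exact nbc hh
          · exact ncd hh.symm
        · rcases hn c (fun h => hcxy.1 h) (fun h => hcxy.2 h) with hh | hh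
          · exact ncd hh.symm
          · exact nbc hh
        · exact h7 rfl
      · push_neg at hdxy
        exact ncd (ho c d hcxy.1 hcxy.2 hdxy.1 hdxy.2 h10)
  · push_neg at hbxy
    by_cases haxy : a = x ∨ a = y
    · by_cases hcxy : c = x ∨ c = y
      · rcases haxy with rfl|rfl <;> rcases hcxy with rfl|rfl
        · exact h2 rfl
        · rcases hn b (fun h => hbxy.1 h) (fun h => hbxy.2 h) with hh | hh
          · exact nab hh
          · exact nbc hh.symm
        · rcases hn b (fun h => hbxy.1 h) (fun h => hbxy.2 h) with hh | hh
          · exact nbc hh.symm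
          · exact nab hh
        · exact h2 rfl
      · push_neg at hcxy
        exact nbc (ho b c hbxy.1 hbxy.2 hcxy.1 hcxy.2 h6)
    · push_neg at haxy
      exact nab (ho a b haxy.1 haxy.2 hbxy.1 hbxy.2 h1)
end refute2

section relgraphs

def pairE (u v p q : Fin 6) : Prop := (p = u ∧ q = v) ∨ (p = v ∧ q = u)

instance (u v p q : Fin 6) : Decidable (pairE u v p q) := by unfold pairE; infer_instance

def pmRel (a b c d e f : Fin 6) : Fin 6 → Fin 6 → Prop :=
  fun p q => pairE a b p q ∨ pairE c d p q ∨ pairE e f p q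

def p4Rel (a b c d : Fin 6) : Fin 6 → Fin 6 → Prop :=
  fun p q => pairE a b p q ∨ pairE b c p q ∨ pairE c d p q

instance (a b c d e f p q : Fin 6) : Decidable (pmRel a b c d e f p q) := by
  unfold pmRel; infer_instance
instance (a b c d p q : Fin 6) : Decidable (p4Rel a b c d p q) := by
  unfold p4Rel; infer_instance

lemma pairE_symm {u v p q : Fin 6} (h : pairE u v p q) : pairE u v q p := by
  rcases h with ⟨h1, h2⟩ | ⟨h1, h2⟩
  · exact Or.inr ⟨h2, h1⟩
  · exact Or.inl ⟨h2, h1⟩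

def subOfRel (R : Fin 6 → Fin 6 → Prop) (hsym : Symmetric R) :
    (⊤ : SimpleGraph (Fin 6)).Subgraph where
  verts := Set.univ
  Adj := fun p q => p ≠ q ∧ ¬R p q
  adj_sub := fun h => h.1
  edge_vert := fun _ => Set.mem_univ _
  symm := ⟨fun p q h => ⟨h.1.symm, fun hr => h.2 (hsym hr)⟩⟩

lemma subOfRel_adj (R : Fin 6 → Fin 6 → Prop) (hsym : Symmetric R) (p q : Fin 6) :
    (subOfRel R hsym).Adj p q ↔ p ≠ q ∧ ¬R p q := Iff.rfl

lemma subOfRel_spanningCoe_adj (R : Fin 6 → Fin 6 → Prop) (hsym : Symmetric R) (p q : Fin 6) :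
    (subOfRel R hsym).spanningCoe.Adj p q ↔ p ≠ q ∧ ¬R p q := Iff.rfl

lemma pmRel_symm (a b c d e f : Fin 6) : Symmetric (pmRel a b c d e f) := by
  intro p q h
  rcases h with h | h | h
  · exact Or.inl (pairE_symm h)
  · exact Or.inr (Or.inl (pairE_symm h))
  · exact Or.inr (Or.inr (pairE_symm h))

lemma p4Rel_symm (a b c d : Fin 6) : Symmetric (p4Rel a b c d) := by
  intro p q h
  rcases h with h | h | h
  · exact Or.inl (pairE_symm h)
  · exact Or.inr (Or.inl (pairE_symm h))
  · exact Or.inr (Or.inr (pairE_symm h))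

def M1 : (⊤ : SimpleGraph (Fin 6)).Subgraph := subOfRel (pmRel 0 1 2 3 4 5) (pmRel_symm _ _ _ _ _ _)
def M2 : (⊤ : SimpleGraph (Fin 6)).Subgraph := subOfRel (p4Rel 0 1 2 3) (p4Rel_symm _ _ _ _)

end relgraphs

section witrels

def W33R (R : Fin 6 → Fin 6 → Prop) : Prop :=
  ∃ u v w : Fin 6, u ≠ v ∧ u ≠ w ∧ v ≠ w ∧
    ∀ p q : Fin 6, (p = u ∨ p = v ∨ p = w) → ¬(q = u ∨ q = v ∨ q = w) → R p q

def W5cR (R : Fin 6 → Fin 6 → Prop) : Prop :=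
  ∃ v : Fin 6, ∀ p q : Fin 6, p ≠ v → q ≠ v → p ≠ q → R p q

end witrels


section mainlemmas

lemma pmRel_cases {a b c d e f p q : Fin 6} (h : pmRel a b c d e f p q) :
    (p=a∧q=b)∨(p=b∧q=a)∨(p=c∧q=d)∨(p=d∧q=c)∨(p=e∧q=f)∨(p=f∧q=e) := by
  rcases h with (h|h)|((h|h)|(h|h))
  exacts [O1 h, O2 h, O3 h, O4 h, O5 h, O6 h]

lemma p4Rel_cases {a b c d p q : Fin 6} (h : p4Rel a b c d p q) :
    (p=a∧q=b)∨(p=b∧q=a)∨(p=b∧q=c)∨(p=c∧q=b)∨(p=c∧q=d)∨(p=d∧q=c) := by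
  rcases h with (h|h)|((h|h)|(h|h))
  exacts [O1 h, O2 h, O3 h, O4 h, O5 h, O6 h]

lemma hdeg5 : ∀ w : Fin 5, ∃ w', (completeGraph (Fin 5)).Adj w w' := by
  intro w
  by_cases h : w = 0
  · subst h
    exact ⟨1, (by decide : (0 : Fin 5) ≠ 1)⟩
  · exact ⟨0, h⟩

lemma hdeg33 : ∀ w : Fin 3 ⊕ Fin 3, ∃ w',
    (completeBipartiteGraph (Fin 3) (Fin 3)).Adj w w' := by
  intro w
  rcases w with i | i
  · exact ⟨Sum.inr 0, Or.inl ⟨rfl, rfl⟩⟩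
  · exact ⟨Sum.inl 0, Or.inr ⟨rfl, rfl⟩⟩

/-- Master classification: a maximal planar subgraph of K₆ misses exactly a perfect
matching or exactly a path of length 3. -/
lemma classify (M : (⊤ : SimpleGraph (Fin 6)).Subgraph)
    (hM : MaximalPlanarSubgraph ⊤ M) :
    (∃ a b c d e f : Fin 6,
      (a≠b ∧ a≠c ∧ a≠d ∧ a≠e ∧ a≠f ∧ b≠c ∧ b≠d ∧ b≠e ∧ b≠f ∧ c≠d ∧ c≠e ∧ c≠f ∧ d≠e ∧ d≠f ∧ e≠f) ∧
      ∀ p q : Fin 6, (p ≠ q ∧ ¬ M.Adj p q) ↔ pmRel a b c d e f p q) ∨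
    (∃ a b c d e f : Fin 6,
      (a≠b ∧ a≠c ∧ a≠d ∧ a≠e ∧ a≠f ∧ b≠c ∧ b≠d ∧ b≠e ∧ b≠f ∧ c≠d ∧ c≠e ∧ c≠f ∧ d≠e ∧ d≠f ∧ e≠f) ∧
      ∀ p q : Fin 6, (p ≠ q ∧ ¬ M.Adj p q) ↔ p4Rel a b c d p q) := by
  obtain ⟨hPl, hMax⟩ := hM
  set S : Fin 6 → Fin 6 → Prop := fun p q => p ≠ q ∧ ¬ M.Adj p q with hSdef
  have hsymS : Symmetric S := fun p q h => ⟨h.1.symm, fun ha => h.2 ha.symm⟩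
  have hirrS : ∀ z, ¬S z z := fun z h => h.1 rfl
  have hnW33 : ¬ W33 M.spanningCoe :=
    fun h => hPl.2 (spanning_minor_to_coe M hdeg33 (minor_K33_of_W33 h))
  have hnW5c : ¬ W5c M.spanningCoe :=
    fun h => hPl.1 (spanning_minor_to_coe M hdeg5 (minor_K5_of_W5c h))
  have hnW5p : ¬ W5p M.spanningCoe :=
    fun h => hPl.1 (spanning_minor_to_coe M hdeg5 (minor_K5_of_W5p h))
  have hMadj : ∀ p q, p ≠ q → ¬ S p q → M.spanningCoe.Adj p q := by
    intro p q hne hnS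
    by_contra h
    exact hnS ⟨hne, h⟩
  -- the general step for the exactness argument
  have hexact_gen : ∀ p q : Fin 6, S p q →
      ∀ α₁ β₁ α₂ β₂ α₃ β₃ : Fin 6, S α₁ β₁ → S α₂ β₂ → S α₃ β₃ →
      ¬ pairE α₁ β₁ p q → ¬ pairE α₂ β₂ p q → ¬ pairE α₃ β₃ p q →
      (α₁≠β₁ ∧ α₁≠α₂ ∧ α₁≠β₂ ∧ α₁≠α₃ ∧ α₁≠β₃ ∧ β₁≠α₂ ∧ β₁≠β₂ ∧ β₁≠α₃ ∧ β₁≠β₃ ∧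
       α₂≠β₂ ∧ α₂≠α₃ ∧ α₂≠β₃ ∧ β₂≠α₃ ∧ β₂≠β₃ ∧ α₃≠β₃) →
      ((∃ w1 : Fin 6, w1 ∈ ({α₁, β₁, α₂} : Set (Fin 6))) → True) → -- dummy
      (pairE α₂ β₂ α₁ β₂ → True) → -- dummy
      False := by
    intro p q hSpq α₁ β₁ α₂ β₂ α₃ β₃ hS1 hS2 hS3 hn1 hn2 hn3 hd _ _
    obtain ⟨k1,k2,k3,k4,k5,k6,k7,k8,k9,k10,k11,k12,k13,k14,k15⟩ := hd
    have htop : (⊤ : SimpleGraph (Fin 6)).Adj p q := hSpq.1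
    have hnp := hMax htop hSpq.2
    apply hnp
    have hNadj : ∀ α β, S α β → ¬ pairE α β p q →
        ¬ (M ⊔ (⊤ : SimpleGraph (Fin 6)).subgraphOfAdj htop).spanningCoe.Adj α β := by
      intro α β hS' hnpair hAdj
      rcases SimpleGraph.Subgraph.sup_adj.1 hAdj with h | h
      · exact hS'.2 h
      · rw [SimpleGraph.subgraphOfAdj_adj] at h
        rw [Sym2.eq_iff] at h
        exact hnpair h
    have n1 := hNadj α₁ β₁ hS1 hn1
    have n2 := hNadj α₂ β₂ hS2 hn2
    have n3 := hNadj α₃ β₃ hS3 hn3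
    constructor
    · intro hmin
      rcases W5_of_minor (coe_minor_to_spanning _ hmin) with hw | hw
      · exact noW5c_pm k1 k2 k3 k6 k7 k10 n1 n2 hw
      · exact noW5p_pm k1 k2 k3 k4 k5 k6 k7 k8 k9 k10 k11 k12 k13 k14 k15 n1 n2 n3 hw
    · intro hmin
      exact noW33_pm k1 k2 k3 k4 k5 k6 k7 k8 k9 k10 k11 k12 k13 k14 k15 n1 n2 n3
        (W33_of_minor (coe_minor_to_spanning _ hmin))
  rcases core_classification S hsymS hirrS with hPM | hP4 | hCov | hCovP | hSpl
  · -- perfect matching case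
    obtain ⟨a,b,c,d,e,f, hd, hSab, hScd, hSef⟩ := hPM
    obtain ⟨h1,h2,h3,h4,h5,h6,h7,h8,h9,h10,h11,h12,h13,h14,h15⟩ := hd
    left
    refine ⟨a,b,c,d,e,f, ⟨h1,h2,h3,h4,h5,h6,h7,h8,h9,h10,h11,h12,h13,h14,h15⟩, ?_⟩
    intro p q
    constructor
    · intro hSpq
      by_contra hnT
      exact hexact_gen p q hSpq a b c d e f hSab hScd hSef
        (fun h => hnT (Or.inl h)) (fun h => hnT (Or.inr (Or.inl h)))
        (fun h => hnT (Or.inr (Or.inr h)))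
        ⟨h1,h2,h3,h4,h5,h6,h7,h8,h9,h10,h11,h12,h13,h14,h15⟩ (fun _ => trivial)
        (fun _ => trivial)
    · intro hrel
      rcases pmRel_cases hrel with ⟨rfl,rfl⟩|⟨rfl,rfl⟩|⟨rfl,rfl⟩|⟨rfl,rfl⟩|⟨rfl,rfl⟩|⟨rfl,rfl⟩
      exacts [hSab, hsymS hSab, hScd, hsymS hScd, hSef, hsymS hSef]
  · -- path case
    obtain ⟨a,b,c,d, hd, hSab, hSbc, hScd⟩ := hP4
    obtain ⟨g1,g2,g3,g4,g5,g6⟩ := hd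
    obtain ⟨e, f, hef, hea, heb, hec, hed, hfa, hfb, hfc, hfd, _⟩ :=
      compl4 a b c d g1 g2 g3 g4 g5 g6
    right
    have k4 : a ≠ e := hea.symm
    have k5 : a ≠ f := hfa.symm
    have k8 : b ≠ e := heb.symm
    have k9 : b ≠ f := hfb.symm
    have k11 : c ≠ e := hec.symm
    have k12 : c ≠ f := hfc.symm
    have k13 : d ≠ e := hed.symm
    have k14 : d ≠ f := hfd.symm
    refine ⟨a,b,c,d,e,f, ⟨g1,g2,g3,k4,k5,g4,g5,k8,k9,g6,k11,k12,k13,k14,hef⟩, ?_⟩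
    intro p q
    constructor
    · intro hSpq
      by_contra hnT
      have htop : (⊤ : SimpleGraph (Fin 6)).Adj p q := hSpq.1
      have hnp := hMax htop hSpq.2
      apply hnp
      have hNadj : ∀ α β, S α β → ¬ pairE α β p q →
          ¬ (M ⊔ (⊤ : SimpleGraph (Fin 6)).subgraphOfAdj htop).spanningCoe.Adj α β := by
        intro α β hS' hnpair hAdj
        rcases SimpleGraph.Subgraph.sup_adj.1 hAdj with h | h
        · exact hS'.2 h
        · rw [SimpleGraph.subgraphOfAdj_adj] at h
          rw [Sym2.eq_iff] at h
          exact hnpair h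
      have n1 := hNadj a b hSab (fun h => hnT (Or.inl h))
      have n2 := hNadj b c hSbc (fun h => hnT (Or.inr (Or.inl h)))
      have n3 := hNadj c d hScd (fun h => hnT (Or.inr (Or.inr h)))
      constructor
      · intro hmin
        rcases W5_of_minor (coe_minor_to_spanning _ hmin) with hw | hw
        · exact noW5c_p4 g1 g2 g3 g4 g5 g6 n1 n3 hw
        · exact noW5p_p4 g1 g2 g3 g4 g5 g6 n1 n2 n3 hw
      · intro hmin
        exact noW33_p4 g1 g2 g3 k4 k5 g4 g5 k8 k9 g6 k11 k12 k13 k14 hef n1 n2 n3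
          (W33_of_minor (coe_minor_to_spanning _ hmin))
    · intro hrel
      rcases p4Rel_cases hrel with ⟨rfl,rfl⟩|⟨rfl,rfl⟩|⟨rfl,rfl⟩|⟨rfl,rfl⟩|⟨rfl,rfl⟩|⟨rfl,rfl⟩
      exacts [hSab, hsymS hSab, hSbc, hsymS hSbc, hScd, hsymS hScd]
  · -- CovV : contradiction with planarity
    obtain ⟨v, hv⟩ := hCov
    exact absurd (⟨v, fun p q hp hq hpq => hMadj p q hpq (fun hS' => by
      rcases hv p q hS' with rfl | rfl
      · exact hp rfl
      · exact hq rfl)⟩ : W5c M.spanningCoe) hnW5c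
  · -- CovP : contradiction with planarity
    obtain ⟨x, y, hxy, hnxy, hcom, hout⟩ := hCovP
    refine absurd (⟨x, y, hMadj x y hxy hnxy, ?_, ?_⟩ : W5p M.spanningCoe) hnW5p
    · intro z hzx hzy
      by_cases hxz : S x z
      · right
        refine hMadj y z (fun h => hzy h.symm) (fun hS' => hcom z hzx hzy ⟨hxz, hS'⟩)
      · left
        exact hMadj x z (fun h => hzx h.symm) hxz
    · intro u w hux huy hwx hwy huw
      exact hMadj u w huw (fun hS' => hout u w hux huy hwx hwy hS')
  · -- Spl3 : contradiction with planarity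
    obtain ⟨u, v, w, d1, d2, d3, hiff⟩ := hSpl
    refine absurd (⟨u, v, w, d1, d2, d3, fun p q hp hq => ?_⟩ : W33 M.spanningCoe) hnW33
    refine hMadj p q (fun h => hq (h ▸ hp)) (fun hS' => hq ((hiff p q hS').1 hp))
end mainlemmas


section part2

instance : DecidableRel M1.spanningCoe.Adj :=
  fun p q => decidable_of_iff _ (subOfRel_spanningCoe_adj _ _ p q).symm
instance : DecidableRel M2.spanningCoe.Adj :=
  fun p q => decidable_of_iff _ (subOfRel_spanningCoe_adj _ _ p q).symm
instance : DecidableRel M1.Adj :=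
  fun p q => decidable_of_iff _ (subOfRel_adj _ _ p q).symm
instance : DecidableRel M2.Adj :=
  fun p q => decidable_of_iff _ (subOfRel_adj _ _ p q).symm

lemma inj6 {a b c d e f : Fin 6}
    (h1 : a≠b) (h2 : a≠c) (h3 : a≠d) (h4 : a≠e) (h5 : a≠f) (h6 : b≠c) (h7 : b≠d)
    (h8 : b≠e) (h9 : b≠f) (h10 : c≠d) (h11 : c≠e) (h12 : c≠f) (h13 : d≠e) (h14 : d≠f)
    (h15 : e≠f) : Function.Injective ![a,b,c,d,e,f] := by
  intro i j hij
  fin_cases i <;> fin_cases j <;>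
    first
      | rfl
      | exact absurd hij (by assumption)
      | exact absurd hij.symm (by assumption)

def isoSpan (N : (⊤ : SimpleGraph (Fin 6)).Subgraph) (h : N.verts = Set.univ) :
    N.coe ≃g N.spanningCoe where
  toEquiv := Equiv.subtypeUnivEquiv (fun x => h.symm ▸ Set.mem_univ x)
  map_rel_iff' := Iff.rfl

lemma planarM1 : IsPlanar M1.coe := by
  have nab : ¬ M1.spanningCoe.Adj 0 1 := fun hh => hh.2 (Or.inl (Or.inl ⟨rfl, rfl⟩))
  have ncd : ¬ M1.spanningCoe.Adj 2 3 := fun hh => hh.2 (Or.inr (Or.inl (Or.inl ⟨rfl, rfl⟩)))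
  have nef : ¬ M1.spanningCoe.Adj 4 5 := fun hh => hh.2 (Or.inr (Or.inr (Or.inl ⟨rfl, rfl⟩)))
  constructor
  · intro hmin
    rcases W5_of_minor (coe_minor_to_spanning _ hmin) with hw | hw
    · exact noW5c_pm (by decide) (by decide) (by decide) (by decide) (by decide) (by decide)
        nab ncd hw
    · exact noW5p_pm (by decide) (by decide) (by decide) (by decide) (by decide) (by decide)
        (by decide) (by decide) (by decide) (by decide) (by decide) (by decide) (by decide)
        (by decide) (by decide) nab ncd nef hw
  · intro hmin
    exact noW33_pm (by decide) (by decide) (by decide) (by decide) (by decide) (by decide)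
      (by decide) (by decide) (by decide) (by decide) (by decide) (by decide) (by decide)
      (by decide) (by decide) nab ncd nef (W33_of_minor (coe_minor_to_spanning _ hmin))

lemma planarM2 : IsPlanar M2.coe := by
  have nab : ¬ M2.spanningCoe.Adj 0 1 := fun hh => hh.2 (Or.inl (Or.inl ⟨rfl, rfl⟩))
  have nbc : ¬ M2.spanningCoe.Adj 1 2 := fun hh => hh.2 (Or.inr (Or.inl (Or.inl ⟨rfl, rfl⟩)))
  have ncd : ¬ M2.spanningCoe.Adj 2 3 := fun hh => hh.2 (Or.inr (Or.inr (Or.inl ⟨rfl, rfl⟩)))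
  constructor
  · intro hmin
    rcases W5_of_minor (coe_minor_to_spanning _ hmin) with hw | hw
    · exact noW5c_p4 (by decide) (by decide) (by decide) (by decide) (by decide) (by decide)
        nab ncd hw
    · exact noW5p_p4 (by decide) (by decide) (by decide) (by decide) (by decide) (by decide)
        nab nbc ncd hw
  · intro hmin
    exact noW33_p4 (a := 0) (b := 1) (c := 2) (d := 3) (e := 4) (f := 5)
      (by decide) (by decide) (by decide) (by decide) (by decide) (by decide)
      (by decide) (by decide) (by decide) (by decide) (by decide) (by decide) (by decide)
      (by decide) (by decide) nab nbc ncd (W33_of_minor (coe_minor_to_spanning _ hmin))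

lemma maxM1 : ∀ ⦃u v : Fin 6⦄ (h : (⊤ : SimpleGraph (Fin 6)).Adj u v), ¬ M1.Adj u v →
    ¬ IsPlanar (M1 ⊔ (⊤ : SimpleGraph (Fin 6)).subgraphOfAdj h).coe := by
  intro u v huv hnadj hPl
  have hne : u ≠ v := huv
  have hrel : pmRel 0 1 2 3 4 5 u v := by
    by_contra hr
    exact hnadj ⟨hne, hr⟩
  have hchar : ∀ p q, ((p ≠ q ∧ ¬pmRel 0 1 2 3 4 5 p q) ∨ pairE u v p q) →
      (M1 ⊔ (⊤ : SimpleGraph (Fin 6)).subgraphOfAdj huv).spanningCoe.Adj p q := by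
    intro p q h
    apply SimpleGraph.Subgraph.sup_adj.2
    rcases h with h | h
    · exact Or.inl h
    · right
      rw [SimpleGraph.subgraphOfAdj_adj, Sym2.eq_iff]
      rcases h with ⟨x1, x2⟩ | ⟨x1, x2⟩
      · exact Or.inl ⟨x1.symm, x2.symm⟩
      · exact Or.inr ⟨x2.symm, x1.symm⟩
  rcases pmRel_cases hrel with ⟨rfl,rfl⟩|⟨rfl,rfl⟩|⟨rfl,rfl⟩|⟨rfl,rfl⟩|⟨rfl,rfl⟩|⟨rfl,rfl⟩
  · exact hPl.2 (spanning_minor_to_coe _ hdeg33 (minor_K33_of_W33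
      ⟨2, 3, 0, by decide, by decide, by decide, fun p q hp hq => hchar p q
        ((by decide : ∀ p q : Fin 6, (p=2∨p=3∨p=0) → ¬(q=2∨q=3∨q=0) →
          ((p ≠ q ∧ ¬pmRel 0 1 2 3 4 5 p q) ∨ pairE 0 1 p q)) p q hp hq)⟩))
  · exact hPl.2 (spanning_minor_to_coe _ hdeg33 (minor_K33_of_W33
      ⟨2, 3, 0, by decide, by decide, by decide, fun p q hp hq => hchar p q
        ((by decide : ∀ p q : Fin 6, (p=2∨p=3∨p=0) → ¬(q=2∨q=3∨q=0) →
          ((p ≠ q ∧ ¬pmRel 0 1 2 3 4 5 p q) ∨ pairE 1 0 p q)) p q hp hq)⟩))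
  · exact hPl.2 (spanning_minor_to_coe _ hdeg33 (minor_K33_of_W33
      ⟨0, 1, 2, by decide, by decide, by decide, fun p q hp hq => hchar p q
        ((by decide : ∀ p q : Fin 6, (p=0∨p=1∨p=2) → ¬(q=0∨q=1∨q=2) →
          ((p ≠ q ∧ ¬pmRel 0 1 2 3 4 5 p q) ∨ pairE 2 3 p q)) p q hp hq)⟩))
  · exact hPl.2 (spanning_minor_to_coe _ hdeg33 (minor_K33_of_W33
      ⟨0, 1, 2, by decide, by decide, by decide, fun p q hp hq => hchar p q
        ((by decide : ∀ p q : Fin 6, (p=0∨p=1∨p=2) → ¬(q=0∨q=1∨q=2) →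
          ((p ≠ q ∧ ¬pmRel 0 1 2 3 4 5 p q) ∨ pairE 3 2 p q)) p q hp hq)⟩))
  · exact hPl.2 (spanning_minor_to_coe _ hdeg33 (minor_K33_of_W33
      ⟨0, 1, 4, by decide, by decide, by decide, fun p q hp hq => hchar p q
        ((by decide : ∀ p q : Fin 6, (p=0∨p=1∨p=4) → ¬(q=0∨q=1∨q=4) →
          ((p ≠ q ∧ ¬pmRel 0 1 2 3 4 5 p q) ∨ pairE 4 5 p q)) p q hp hq)⟩))
  · exact hPl.2 (spanning_minor_to_coe _ hdeg33 (minor_K33_of_W33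
      ⟨0, 1, 4, by decide, by decide, by decide, fun p q hp hq => hchar p q
        ((by decide : ∀ p q : Fin 6, (p=0∨p=1∨p=4) → ¬(q=0∨q=1∨q=4) →
          ((p ≠ q ∧ ¬pmRel 0 1 2 3 4 5 p q) ∨ pairE 5 4 p q)) p q hp hq)⟩))

lemma maxM2 : ∀ ⦃u v : Fin 6⦄ (h : (⊤ : SimpleGraph (Fin 6)).Adj u v), ¬ M2.Adj u v →
    ¬ IsPlanar (M2 ⊔ (⊤ : SimpleGraph (Fin 6)).subgraphOfAdj h).coe := by
  intro u v huv hnadj hPl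
  have hne : u ≠ v := huv
  have hrel : p4Rel 0 1 2 3 u v := by
    by_contra hr
    exact hnadj ⟨hne, hr⟩
  have hchar : ∀ p q, ((p ≠ q ∧ ¬p4Rel 0 1 2 3 p q) ∨ pairE u v p q) →
      (M2 ⊔ (⊤ : SimpleGraph (Fin 6)).subgraphOfAdj huv).spanningCoe.Adj p q := by
    intro p q h
    apply SimpleGraph.Subgraph.sup_adj.2
    rcases h with h | h
    · exact Or.inl h
    · right
      rw [SimpleGraph.subgraphOfAdj_adj, Sym2.eq_iff]
      rcases h with ⟨x1, x2⟩ | ⟨x1, x2⟩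
      · exact Or.inl ⟨x1.symm, x2.symm⟩
      · exact Or.inr ⟨x2.symm, x1.symm⟩
  rcases p4Rel_cases hrel with ⟨rfl,rfl⟩|⟨rfl,rfl⟩|⟨rfl,rfl⟩|⟨rfl,rfl⟩|⟨rfl,rfl⟩|⟨rfl,rfl⟩
  · exact hPl.1 (spanning_minor_to_coe _ hdeg5 (minor_K5_of_W5c
      ⟨2, fun p q g1 g2 g3 => hchar p q
        ((by decide : ∀ p q : Fin 6, p ≠ 2 → q ≠ 2 → p ≠ q →
          ((p ≠ q ∧ ¬p4Rel 0 1 2 3 p q) ∨ pairE 0 1 p q)) p q g1 g2 g3)⟩))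
  · exact hPl.1 (spanning_minor_to_coe _ hdeg5 (minor_K5_of_W5c
      ⟨2, fun p q g1 g2 g3 => hchar p q
        ((by decide : ∀ p q : Fin 6, p ≠ 2 → q ≠ 2 → p ≠ q →
          ((p ≠ q ∧ ¬p4Rel 0 1 2 3 p q) ∨ pairE 1 0 p q)) p q g1 g2 g3)⟩))
  · exact hPl.2 (spanning_minor_to_coe _ hdeg33 (minor_K33_of_W33
      ⟨0, 1, 4, by decide, by decide, by decide, fun p q hp hq => hchar p q
        ((by decide : ∀ p q : Fin 6, (p=0∨p=1∨p=4) → ¬(q=0∨q=1∨q=4) →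
          ((p ≠ q ∧ ¬p4Rel 0 1 2 3 p q) ∨ pairE 1 2 p q)) p q hp hq)⟩))
  · exact hPl.2 (spanning_minor_to_coe _ hdeg33 (minor_K33_of_W33
      ⟨0, 1, 4, by decide, by decide, by decide, fun p q hp hq => hchar p q
        ((by decide : ∀ p q : Fin 6, (p=0∨p=1∨p=4) → ¬(q=0∨q=1∨q=4) →
          ((p ≠ q ∧ ¬p4Rel 0 1 2 3 p q) ∨ pairE 2 1 p q)) p q hp hq)⟩))
  · exact hPl.1 (spanning_minor_to_coe _ hdeg5 (minor_K5_of_W5c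
      ⟨1, fun p q g1 g2 g3 => hchar p q
        ((by decide : ∀ p q : Fin 6, p ≠ 1 → q ≠ 1 → p ≠ q →
          ((p ≠ q ∧ ¬p4Rel 0 1 2 3 p q) ∨ pairE 2 3 p q)) p q g1 g2 g3)⟩))
  · exact hPl.1 (spanning_minor_to_coe _ hdeg5 (minor_K5_of_W5c
      ⟨1, fun p q g1 g2 g3 => hchar p q
        ((by decide : ∀ p q : Fin 6, p ≠ 1 → q ≠ 1 → p ≠ q →
          ((p ≠ q ∧ ¬p4Rel 0 1 2 3 p q) ∨ pairE 3 2 p q)) p q g1 g2 g3)⟩))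

lemma ncard4' {s1 s2 s3 s4 : Fin 6} (d1 : s1≠s2) (d2 : s1≠s3) (d3 : s1≠s4)
    (d4 : s2≠s3) (d5 : s2≠s4) (d6 : s3≠s4) :
    ({s1,s2,s3,s4} : Set (Fin 6)).ncard = 4 := by
  rw [Set.ncard_insert_of_notMem (by simp [d1,d2,d3]) (Set.toFinite _),
    Set.ncard_insert_of_notMem (by simp [d4,d5]) (Set.toFinite _),
    Set.ncard_insert_of_notMem (by simp [d6]) (Set.toFinite _), Set.ncard_singleton]

lemma ncard5' {s1 s2 s3 s4 s5 : Fin 6} (d1 : s1≠s2) (d2 : s1≠s3) (d3 : s1≠s4) (d4 : s1≠s5)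
    (d5 : s2≠s3) (d6 : s2≠s4) (d7 : s2≠s5) (d8 : s3≠s4) (d9 : s3≠s5) (d10 : s4≠s5) :
    ({s1,s2,s3,s4,s5} : Set (Fin 6)).ncard = 5 := by
  rw [Set.ncard_insert_of_notMem (by simp [d1,d2,d3,d4]) (Set.toFinite _),
    Set.ncard_insert_of_notMem (by simp [d5,d6,d7]) (Set.toFinite _),
    Set.ncard_insert_of_notMem (by simp [d8,d9]) (Set.toFinite _),
    Set.ncard_insert_of_notMem (by simp [d10]) (Set.toFinite _), Set.ncard_singleton]

lemma noIso : IsEmpty (M1.coe ≃g M2.coe) := by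
  refine ⟨fun φ => ?_⟩
  have ψ : M2.spanningCoe ≃g M1.spanningCoe :=
    ((isoSpan M1 rfl).symm.trans (φ.trans (isoSpan M2 rfl))).symm
  have hcard := Nat.card_congr (ψ.mapNeighborSet 4)
  have key2 : ∀ w : Fin 6, ((4:Fin 6) ≠ w ∧ ¬p4Rel 0 1 2 3 4 w) ↔
      (w = 0 ∨ w = 1 ∨ w = 2 ∨ w = 3 ∨ w = 5) := by decide
  have hN2 : M2.spanningCoe.neighborSet 4 = {0,1,2,3,5} := by
    ext w
    rw [SimpleGraph.mem_neighborSet]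
    simp only [Set.mem_insert_iff, Set.mem_singleton_iff]
    exact key2 w
  have hset1 : ∀ z : Fin 6, ∃ s1 s2 s3 s4 : Fin 6,
      (s1≠s2 ∧ s1≠s3 ∧ s1≠s4 ∧ s2≠s3 ∧ s2≠s4 ∧ s3≠s4) ∧
      ∀ w : Fin 6, ((z ≠ w ∧ ¬pmRel 0 1 2 3 4 5 z w) ↔
        (w = s1 ∨ w = s2 ∨ w = s3 ∨ w = s4)) := by decide
  obtain ⟨s1, s2, s3, s4, ⟨d1,d2,d3,d4,d5,d6⟩, hiffz⟩ := hset1 (ψ 4)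
  have hN1 : M1.spanningCoe.neighborSet (ψ 4) = {s1,s2,s3,s4} := by
    ext w
    rw [SimpleGraph.mem_neighborSet]
    simp only [Set.mem_insert_iff, Set.mem_singleton_iff]
    exact hiffz w
  rw [hN2, hN1, Nat.card_coe_set_eq, Nat.card_coe_set_eq,
    ncard5' (by decide) (by decide) (by decide) (by decide) (by decide) (by decide)
      (by decide) (by decide) (by decide) (by decide),
    ncard4' d1 d2 d3 d4 d5 d6] at hcard
  exact absurd hcard (by decide)

end part2

lemma iso_pm (M : (⊤ : SimpleGraph (Fin 6)).Subgraph) {a b c d e f : Fin 6}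
    (h1 : a≠b) (h2 : a≠c) (h3 : a≠d) (h4 : a≠e) (h5 : a≠f) (h6 : b≠c) (h7 : b≠d)
    (h8 : b≠e) (h9 : b≠f) (h10 : c≠d) (h11 : c≠e) (h12 : c≠f) (h13 : d≠e) (h14 : d≠f)
    (h15 : e≠f)
    (hiff : ∀ p q : Fin 6, (p ≠ q ∧ ¬ M.Adj p q) ↔ pmRel a b c d e f p q) :
    Nonempty (M.coe ≃g M1.coe) := by
  have hba : b ≠ a := h1.symm
  have hab : a ≠ b := h1
  have hca : c ≠ a := h2.symm
  have hac : a ≠ c := h2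
  have hda : d ≠ a := h3.symm
  have had : a ≠ d := h3
  have hea : e ≠ a := h4.symm
  have hae : a ≠ e := h4
  have hfa : f ≠ a := h5.symm
  have haf : a ≠ f := h5
  have hcb : c ≠ b := h6.symm
  have hbc : b ≠ c := h6
  have hdb : d ≠ b := h7.symm
  have hbd : b ≠ d := h7
  have heb : e ≠ b := h8.symm
  have hbe : b ≠ e := h8
  have hfb : f ≠ b := h9.symm
  have hbf : b ≠ f := h9
  have hdc : d ≠ c := h10.symm
  have hcd : c ≠ d := h10
  have hec : e ≠ c := h11.symm
  have hce : c ≠ e := h11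
  have hfc : f ≠ c := h12.symm
  have hcf : c ≠ f := h12
  have hed : e ≠ d := h13.symm
  have hde : d ≠ e := h13
  have hfd : f ≠ d := h14.symm
  have hdf : d ≠ f := h14
  have hfe : f ≠ e := h15.symm
  have hef : e ≠ f := h15
  have hA : ∀ p q : Fin 6, p ≠ q → ¬pmRel a b c d e f p q → M.Adj p q := by
    intro p q hne hnr
    by_contra hcon
    exact hnr ((hiff p q).1 ⟨hne, hcon⟩)
  have hN : ∀ p q : Fin 6, pmRel a b c d e f p q → ¬ M.Adj p q :=
    fun p q h => ((hiff p q).2 h).2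
  have nRac : ¬ pmRel a b c d e f a c := by
    intro hrr
    rcases pmRel_cases hrr with ⟨x1,x2⟩|⟨x1,x2⟩|⟨x1,x2⟩|⟨x1,x2⟩|⟨x1,x2⟩|⟨x1,x2⟩ <;>
      first | exact absurd x1 (by assumption) | exact absurd x2 (by assumption)
  have nRad : ¬ pmRel a b c d e f a d := by
    intro hrr
    rcases pmRel_cases hrr with ⟨x1,x2⟩|⟨x1,x2⟩|⟨x1,x2⟩|⟨x1,x2⟩|⟨x1,x2⟩|⟨x1,x2⟩ <;>
      first | exact absurd x1 (by assumption) | exact absurd x2 (by assumption)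
  have nRae : ¬ pmRel a b c d e f a e := by
    intro hrr
    rcases pmRel_cases hrr with ⟨x1,x2⟩|⟨x1,x2⟩|⟨x1,x2⟩|⟨x1,x2⟩|⟨x1,x2⟩|⟨x1,x2⟩ <;>
      first | exact absurd x1 (by assumption) | exact absurd x2 (by assumption)
  have nRaf : ¬ pmRel a b c d e f a f := by
    intro hrr
    rcases pmRel_cases hrr with ⟨x1,x2⟩|⟨x1,x2⟩|⟨x1,x2⟩|⟨x1,x2⟩|⟨x1,x2⟩|⟨x1,x2⟩ <;>
      first | exact absurd x1 (by assumption) | exact absurd x2 (by assumption)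
  have nRbc : ¬ pmRel a b c d e f b c := by
    intro hrr
    rcases pmRel_cases hrr with ⟨x1,x2⟩|⟨x1,x2⟩|⟨x1,x2⟩|⟨x1,x2⟩|⟨x1,x2⟩|⟨x1,x2⟩ <;>
      first | exact absurd x1 (by assumption) | exact absurd x2 (by assumption)
  have nRbd : ¬ pmRel a b c d e f b d := by
    intro hrr
    rcases pmRel_cases hrr with ⟨x1,x2⟩|⟨x1,x2⟩|⟨x1,x2⟩|⟨x1,x2⟩|⟨x1,x2⟩|⟨x1,x2⟩ <;>
      first | exact absurd x1 (by assumption) | exact absurd x2 (by assumption)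
  have nRbe : ¬ pmRel a b c d e f b e := by
    intro hrr
    rcases pmRel_cases hrr with ⟨x1,x2⟩|⟨x1,x2⟩|⟨x1,x2⟩|⟨x1,x2⟩|⟨x1,x2⟩|⟨x1,x2⟩ <;>
      first | exact absurd x1 (by assumption) | exact absurd x2 (by assumption)
  have nRbf : ¬ pmRel a b c d e f b f := by
    intro hrr
    rcases pmRel_cases hrr with ⟨x1,x2⟩|⟨x1,x2⟩|⟨x1,x2⟩|⟨x1,x2⟩|⟨x1,x2⟩|⟨x1,x2⟩ <;>
      first | exact absurd x1 (by assumption) | exact absurd x2 (by assumption)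
  have nRce : ¬ pmRel a b c d e f c e := by
    intro hrr
    rcases pmRel_cases hrr with ⟨x1,x2⟩|⟨x1,x2⟩|⟨x1,x2⟩|⟨x1,x2⟩|⟨x1,x2⟩|⟨x1,x2⟩ <;>
      first | exact absurd x1 (by assumption) | exact absurd x2 (by assumption)
  have nRcf : ¬ pmRel a b c d e f c f := by
    intro hrr
    rcases pmRel_cases hrr with ⟨x1,x2⟩|⟨x1,x2⟩|⟨x1,x2⟩|⟨x1,x2⟩|⟨x1,x2⟩|⟨x1,x2⟩ <;>
      first | exact absurd x1 (by assumption) | exact absurd x2 (by assumption)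
  have nRde : ¬ pmRel a b c d e f d e := by
    intro hrr
    rcases pmRel_cases hrr with ⟨x1,x2⟩|⟨x1,x2⟩|⟨x1,x2⟩|⟨x1,x2⟩|⟨x1,x2⟩|⟨x1,x2⟩ <;>
      first | exact absurd x1 (by assumption) | exact absurd x2 (by assumption)
  have nRdf : ¬ pmRel a b c d e f d f := by
    intro hrr
    rcases pmRel_cases hrr with ⟨x1,x2⟩|⟨x1,x2⟩|⟨x1,x2⟩|⟨x1,x2⟩|⟨x1,x2⟩|⟨x1,x2⟩ <;>
      first | exact absurd x1 (by assumption) | exact absurd x2 (by assumption)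
  have Aac : M.Adj a c := hA a c hac nRac
  have Aca : M.Adj c a := Aac.symm
  have Aad : M.Adj a d := hA a d had nRad
  have Ada : M.Adj d a := Aad.symm
  have Aae : M.Adj a e := hA a e hae nRae
  have Aea : M.Adj e a := Aae.symm
  have Aaf : M.Adj a f := hA a f haf nRaf
  have Afa : M.Adj f a := Aaf.symm
  have Abc : M.Adj b c := hA b c hbc nRbc
  have Acb : M.Adj c b := Abc.symm
  have Abd : M.Adj b d := hA b d hbd nRbd
  have Adb : M.Adj d b := Abd.symm
  have Abe : M.Adj b e := hA b e hbe nRbe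
  have Aeb : M.Adj e b := Abe.symm
  have Abf : M.Adj b f := hA b f hbf nRbf
  have Afb : M.Adj f b := Abf.symm
  have Ace : M.Adj c e := hA c e hce nRce
  have Aec : M.Adj e c := Ace.symm
  have Acf : M.Adj c f := hA c f hcf nRcf
  have Afc : M.Adj f c := Acf.symm
  have Ade : M.Adj d e := hA d e hde nRde
  have Aed : M.Adj e d := Ade.symm
  have Adf : M.Adj d f := hA d f hdf nRdf
  have Afd : M.Adj f d := Adf.symm
  have Nab : ¬ M.Adj a b := hN a b (Or.inl (Or.inl ⟨rfl,rfl⟩))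
  have Nba : ¬ M.Adj b a := fun hh => Nab hh.symm
  have Ncd : ¬ M.Adj c d := hN c d (Or.inr (Or.inl (Or.inl ⟨rfl,rfl⟩)))
  have Ndc : ¬ M.Adj d c := fun hh => Ncd hh.symm
  have Nef : ¬ M.Adj e f := hN e f (Or.inr (Or.inr (Or.inl ⟨rfl,rfl⟩)))
  have Nfe : ¬ M.Adj f e := fun hh => Nef hh.symm
  have Naa : ¬ M.Adj a a := fun h => (M.adj_sub h) rfl
  have Nbb : ¬ M.Adj b b := fun h => (M.adj_sub h) rfl
  have Ncc : ¬ M.Adj c c := fun h => (M.adj_sub h) rfl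
  have Ndd : ¬ M.Adj d d := fun h => (M.adj_sub h) rfl
  have Nee : ¬ M.Adj e e := fun h => (M.adj_sub h) rfl
  have Nff : ¬ M.Adj f f := fun h => (M.adj_sub h) rfl
  have huniv : M.verts = Set.univ := by
    apply Set.eq_univ_of_forall
    intro z
    rcases cover6 a b c d e f h1 h2 h3 h4 h5 h6 h7 h8 h9 h10 h11 h12 h13 h14 h15 z with
      rfl|rfl|rfl|rfl|rfl|rfl
    exacts [M.edge_vert Aac, M.edge_vert Abc, M.edge_vert Aca, M.edge_vert Ada,
      M.edge_vert Aea, M.edge_vert Afa]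
  have ginj : Function.Injective ![a,b,c,d,e,f] :=
    inj6 h1 h2 h3 h4 h5 h6 h7 h8 h9 h10 h11 h12 h13 h14 h15
  let eqv : Fin 6 ≃ Fin 6 :=
    Equiv.ofBijective _ ((Fintype.bijective_iff_injective_and_card _).2 ⟨ginj, rfl⟩)
  have hiso : ∀ i j : Fin 6, M.spanningCoe.Adj (eqv i) (eqv j) ↔ M1.spanningCoe.Adj i j := by
    intro i j
    show M.spanningCoe.Adj (![a,b,c,d,e,f] i) (![a,b,c,d,e,f] j) ↔ _
    fin_cases i <;> fin_cases j <;>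
      simp only [Matrix.cons_val_zero, Matrix.cons_val_one, Matrix.head_cons,
        Matrix.cons_val_two, Matrix.tail_cons, Matrix.cons_val_three,
        Matrix.cons_val_four, Matrix.head_fin_const, Fin.isValue, Matrix.cons_val_fin_one,
        Matrix.cons_val_succ] <;>
      first
        | exact iff_of_true (by assumption) (by decide)
        | exact iff_of_false (by assumption) (by decide)
  have κ : M1.spanningCoe ≃g M.spanningCoe :=
    ⟨eqv, @fun i j => hiso i j⟩
  exact ⟨(isoSpan M huniv).trans (κ.symm.trans (isoSpan M1 rfl).symm)⟩

lemma iso_p4 (M : (⊤ : SimpleGraph (Fin 6)).Subgraph) {a b c d e f : Fin 6}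
    (h1 : a≠b) (h2 : a≠c) (h3 : a≠d) (h4 : a≠e) (h5 : a≠f) (h6 : b≠c) (h7 : b≠d)
    (h8 : b≠e) (h9 : b≠f) (h10 : c≠d) (h11 : c≠e) (h12 : c≠f) (h13 : d≠e) (h14 : d≠f)
    (h15 : e≠f)
    (hiff : ∀ p q : Fin 6, (p ≠ q ∧ ¬ M.Adj p q) ↔ p4Rel a b c d p q) :
    Nonempty (M.coe ≃g M2.coe) := by
  have hba : b ≠ a := h1.symm
  have hab : a ≠ b := h1
  have hca : c ≠ a := h2.symm
  have hac : a ≠ c := h2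
  have hda : d ≠ a := h3.symm
  have had : a ≠ d := h3
  have hea : e ≠ a := h4.symm
  have hae : a ≠ e := h4
  have hfa : f ≠ a := h5.symm
  have haf : a ≠ f := h5
  have hcb : c ≠ b := h6.symm
  have hbc : b ≠ c := h6
  have hdb : d ≠ b := h7.symm
  have hbd : b ≠ d := h7
  have heb : e ≠ b := h8.symm
  have hbe : b ≠ e := h8
  have hfb : f ≠ b := h9.symm
  have hbf : b ≠ f := h9
  have hdc : d ≠ c := h10.symm
  have hcd : c ≠ d := h10
  have hec : e ≠ c := h11.symm
  have hce : c ≠ e := h11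
  have hfc : f ≠ c := h12.symm
  have hcf : c ≠ f := h12
  have hed : e ≠ d := h13.symm
  have hde : d ≠ e := h13
  have hfd : f ≠ d := h14.symm
  have hdf : d ≠ f := h14
  have hfe : f ≠ e := h15.symm
  have hef : e ≠ f := h15
  have hA : ∀ p q : Fin 6, p ≠ q → ¬p4Rel a b c d p q → M.Adj p q := by
    intro p q hne hnr
    by_contra hcon
    exact hnr ((hiff p q).1 ⟨hne, hcon⟩)
  have hN : ∀ p q : Fin 6, p4Rel a b c d p q → ¬ M.Adj p q :=
    fun p q h => ((hiff p q).2 h).2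
  have nRac : ¬ p4Rel a b c d a c := by
    intro hrr
    rcases p4Rel_cases hrr with ⟨x1,x2⟩|⟨x1,x2⟩|⟨x1,x2⟩|⟨x1,x2⟩|⟨x1,x2⟩|⟨x1,x2⟩ <;>
      first | exact absurd x1 (by assumption) | exact absurd x2 (by assumption)
  have nRad : ¬ p4Rel a b c d a d := by
    intro hrr
    rcases p4Rel_cases hrr with ⟨x1,x2⟩|⟨x1,x2⟩|⟨x1,x2⟩|⟨x1,x2⟩|⟨x1,x2⟩|⟨x1,x2⟩ <;>
      first | exact absurd x1 (by assumption) | exact absurd x2 (by assumption)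
  have nRae : ¬ p4Rel a b c d a e := by
    intro hrr
    rcases p4Rel_cases hrr with ⟨x1,x2⟩|⟨x1,x2⟩|⟨x1,x2⟩|⟨x1,x2⟩|⟨x1,x2⟩|⟨x1,x2⟩ <;>
      first | exact absurd x1 (by assumption) | exact absurd x2 (by assumption)
  have nRaf : ¬ p4Rel a b c d a f := by
    intro hrr
    rcases p4Rel_cases hrr with ⟨x1,x2⟩|⟨x1,x2⟩|⟨x1,x2⟩|⟨x1,x2⟩|⟨x1,x2⟩|⟨x1,x2⟩ <;>
      first | exact absurd x1 (by assumption) | exact absurd x2 (by assumption)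
  have nRbd : ¬ p4Rel a b c d b d := by
    intro hrr
    rcases p4Rel_cases hrr with ⟨x1,x2⟩|⟨x1,x2⟩|⟨x1,x2⟩|⟨x1,x2⟩|⟨x1,x2⟩|⟨x1,x2⟩ <;>
      first | exact absurd x1 (by assumption) | exact absurd x2 (by assumption)
  have nRbe : ¬ p4Rel a b c d b e := by
    intro hrr
    rcases p4Rel_cases hrr with ⟨x1,x2⟩|⟨x1,x2⟩|⟨x1,x2⟩|⟨x1,x2⟩|⟨x1,x2⟩|⟨x1,x2⟩ <;>
      first | exact absurd x1 (by assumption) | exact absurd x2 (by assumption)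
  have nRbf : ¬ p4Rel a b c d b f := by
    intro hrr
    rcases p4Rel_cases hrr with ⟨x1,x2⟩|⟨x1,x2⟩|⟨x1,x2⟩|⟨x1,x2⟩|⟨x1,x2⟩|⟨x1,x2⟩ <;>
      first | exact absurd x1 (by assumption) | exact absurd x2 (by assumption)
  have nRce : ¬ p4Rel a b c d c e := by
    intro hrr
    rcases p4Rel_cases hrr with ⟨x1,x2⟩|⟨x1,x2⟩|⟨x1,x2⟩|⟨x1,x2⟩|⟨x1,x2⟩|⟨x1,x2⟩ <;>
      first | exact absurd x1 (by assumption) | exact absurd x2 (by assumption)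
  have nRcf : ¬ p4Rel a b c d c f := by
    intro hrr
    rcases p4Rel_cases hrr with ⟨x1,x2⟩|⟨x1,x2⟩|⟨x1,x2⟩|⟨x1,x2⟩|⟨x1,x2⟩|⟨x1,x2⟩ <;>
      first | exact absurd x1 (by assumption) | exact absurd x2 (by assumption)
  have nRde : ¬ p4Rel a b c d d e := by
    intro hrr
    rcases p4Rel_cases hrr with ⟨x1,x2⟩|⟨x1,x2⟩|⟨x1,x2⟩|⟨x1,x2⟩|⟨x1,x2⟩|⟨x1,x2⟩ <;>
      first | exact absurd x1 (by assumption) | exact absurd x2 (by assumption)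
  have nRdf : ¬ p4Rel a b c d d f := by
    intro hrr
    rcases p4Rel_cases hrr with ⟨x1,x2⟩|⟨x1,x2⟩|⟨x1,x2⟩|⟨x1,x2⟩|⟨x1,x2⟩|⟨x1,x2⟩ <;>
      first | exact absurd x1 (by assumption) | exact absurd x2 (by assumption)
  have nRef : ¬ p4Rel a b c d e f := by
    intro hrr
    rcases p4Rel_cases hrr with ⟨x1,x2⟩|⟨x1,x2⟩|⟨x1,x2⟩|⟨x1,x2⟩|⟨x1,x2⟩|⟨x1,x2⟩ <;>
      first | exact absurd x1 (by assumption) | exact absurd x2 (by assumption)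
  have Aac : M.Adj a c := hA a c hac nRac
  have Aca : M.Adj c a := Aac.symm
  have Aad : M.Adj a d := hA a d had nRad
  have Ada : M.Adj d a := Aad.symm
  have Aae : M.Adj a e := hA a e hae nRae
  have Aea : M.Adj e a := Aae.symm
  have Aaf : M.Adj a f := hA a f haf nRaf
  have Afa : M.Adj f a := Aaf.symm
  have Abd : M.Adj b d := hA b d hbd nRbd
  have Adb : M.Adj d b := Abd.symm
  have Abe : M.Adj b e := hA b e hbe nRbe
  have Aeb : M.Adj e b := Abe.symm
  have Abf : M.Adj b f := hA b f hbf nRbf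
  have Afb : M.Adj f b := Abf.symm
  have Ace : M.Adj c e := hA c e hce nRce
  have Aec : M.Adj e c := Ace.symm
  have Acf : M.Adj c f := hA c f hcf nRcf
  have Afc : M.Adj f c := Acf.symm
  have Ade : M.Adj d e := hA d e hde nRde
  have Aed : M.Adj e d := Ade.symm
  have Adf : M.Adj d f := hA d f hdf nRdf
  have Afd : M.Adj f d := Adf.symm
  have Aef : M.Adj e f := hA e f hef nRef
  have Afe : M.Adj f e := Aef.symm
  have Nab : ¬ M.Adj a b := hN a b (Or.inl (Or.inl ⟨rfl,rfl⟩))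
  have Nba : ¬ M.Adj b a := fun hh => Nab hh.symm
  have Nbc : ¬ M.Adj b c := hN b c (Or.inr (Or.inl (Or.inl ⟨rfl,rfl⟩)))
  have Ncb : ¬ M.Adj c b := fun hh => Nbc hh.symm
  have Ncd : ¬ M.Adj c d := hN c d (Or.inr (Or.inr (Or.inl ⟨rfl,rfl⟩)))
  have Ndc : ¬ M.Adj d c := fun hh => Ncd hh.symm
  have Naa : ¬ M.Adj a a := fun h => (M.adj_sub h) rfl
  have Nbb : ¬ M.Adj b b := fun h => (M.adj_sub h) rfl
  have Ncc : ¬ M.Adj c c := fun h => (M.adj_sub h) rfl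
  have Ndd : ¬ M.Adj d d := fun h => (M.adj_sub h) rfl
  have Nee : ¬ M.Adj e e := fun h => (M.adj_sub h) rfl
  have Nff : ¬ M.Adj f f := fun h => (M.adj_sub h) rfl
  have huniv : M.verts = Set.univ := by
    apply Set.eq_univ_of_forall
    intro z
    rcases cover6 a b c d e f h1 h2 h3 h4 h5 h6 h7 h8 h9 h10 h11 h12 h13 h14 h15 z with
      rfl|rfl|rfl|rfl|rfl|rfl
    exacts [M.edge_vert Aac, M.edge_vert Abd, M.edge_vert Aca, M.edge_vert Ada,
      M.edge_vert Aea, M.edge_vert Afa]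
  have ginj : Function.Injective ![a,b,c,d,e,f] :=
    inj6 h1 h2 h3 h4 h5 h6 h7 h8 h9 h10 h11 h12 h13 h14 h15
  let eqv : Fin 6 ≃ Fin 6 :=
    Equiv.ofBijective _ ((Fintype.bijective_iff_injective_and_card _).2 ⟨ginj, rfl⟩)
  have hiso : ∀ i j : Fin 6, M.spanningCoe.Adj (eqv i) (eqv j) ↔ M2.spanningCoe.Adj i j := by
    intro i j
    show M.spanningCoe.Adj (![a,b,c,d,e,f] i) (![a,b,c,d,e,f] j) ↔ _
    fin_cases i <;> fin_cases j <;>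
      simp only [Matrix.cons_val_zero, Matrix.cons_val_one, Matrix.head_cons,
        Matrix.cons_val_two, Matrix.tail_cons, Matrix.cons_val_three,
        Matrix.cons_val_four, Matrix.head_fin_const, Fin.isValue, Matrix.cons_val_fin_one,
        Matrix.cons_val_succ] <;>
      first
        | exact iff_of_true (by assumption) (by decide)
        | exact iff_of_false (by assumption) (by decide)
  have κ : M2.spanningCoe ≃g M.spanningCoe :=
    ⟨eqv, @fun i j => hiso i j⟩
  exact ⟨(isoSpan M huniv).trans (κ.symm.trans (isoSpan M2 rfl).symm)⟩

/-- Every maximal planar subgraph of `K₆` is obtained by removing exactly three edges,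
which form either a perfect matching (3 pairwise nonadjacent edges) or a path of
length 3; in particular, up to isomorphism `K₆` has exactly two maximal planar
subgraphs. -/
theorem maximalPlanarSubgraphs_of_K6 :
    (∀ M : (⊤ : SimpleGraph (Fin 6)).Subgraph, MaximalPlanarSubgraph ⊤ M →
      ((⊤ : SimpleGraph (Fin 6)).edgeSet \ M.edgeSet).ncard = 3 ∧
      ((∀ e ∈ (⊤ : SimpleGraph (Fin 6)).edgeSet \ M.edgeSet,
          ∀ f ∈ (⊤ : SimpleGraph (Fin 6)).edgeSet \ M.edgeSet,
            e ≠ f → ∀ x : Fin 6, x ∈ e → x ∉ f) ∨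
        (∃ v : Fin 4 → Fin 6, Function.Injective v ∧
          (⊤ : SimpleGraph (Fin 6)).edgeSet \ M.edgeSet =
            {s(v 0, v 1), s(v 1, v 2), s(v 2, v 3)}))) ∧
    (∃ M₁ M₂ : (⊤ : SimpleGraph (Fin 6)).Subgraph,
      MaximalPlanarSubgraph ⊤ M₁ ∧ MaximalPlanarSubgraph ⊤ M₂ ∧
      IsEmpty (M₁.coe ≃g M₂.coe) ∧
      ∀ M : (⊤ : SimpleGraph (Fin 6)).Subgraph, MaximalPlanarSubgraph ⊤ M →
        Nonempty (M.coe ≃g M₁.coe) ∨ Nonempty (M.coe ≃g M₂.coe)) := by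
  constructor
  · intro M hM
    rcases classify M hM with
      ⟨a,b,c,d,e,f,⟨h1,h2,h3,h4,h5,h6,h7,h8,h9,h10,h11,h12,h13,h14,h15⟩,hiff⟩ |
      ⟨a,b,c,d,e,f,⟨h1,h2,h3,h4,h5,h6,h7,h8,h9,h10,h11,h12,h13,h14,h15⟩,hiff⟩
    · -- perfect matching case
      have hset : (⊤ : SimpleGraph (Fin 6)).edgeSet \ M.edgeSet =
          {s(a,b), s(c,d), s(e,f)} := by
        ext x
        induction x using Sym2.ind with
        | _ p q =>
          simp only [Set.mem_diff, SimpleGraph.mem_edgeSet, SimpleGraph.Subgraph.mem_edgeSet,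
            SimpleGraph.top_adj, Set.mem_insert_iff, Set.mem_singleton_iff, Sym2.eq_iff]
          constructor
          · rintro ⟨hne, hnadj⟩
            rcases pmRel_cases ((hiff p q).1 ⟨hne, hnadj⟩) with
              ⟨rfl,rfl⟩|⟨rfl,rfl⟩|⟨rfl,rfl⟩|⟨rfl,rfl⟩|⟨rfl,rfl⟩|⟨rfl,rfl⟩
            · exact Or.inl (Or.inl ⟨rfl, rfl⟩)
            · exact Or.inl (Or.inr ⟨rfl, rfl⟩)
            · exact Or.inr (Or.inl (Or.inl ⟨rfl, rfl⟩))
            · exact Or.inr (Or.inl (Or.inr ⟨rfl, rfl⟩))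
            · exact Or.inr (Or.inr (Or.inl ⟨rfl, rfl⟩))
            · exact Or.inr (Or.inr (Or.inr ⟨rfl, rfl⟩))
          · intro h
            have hrel : pmRel a b c d e f p q := h
            exact ⟨((hiff p q).2 hrel).1, ((hiff p q).2 hrel).2⟩
      constructor
      · rw [hset]
        rw [Set.ncard_insert_of_notMem ?na (Set.toFinite _),
          Set.ncard_insert_of_notMem ?nb (Set.toFinite _), Set.ncard_singleton]
        case na =>
          intro hmem
          simp only [Set.mem_insert_iff, Set.mem_singleton_iff] at hmem
          rcases hmem with hh | hh <;> rw [Sym2.eq_iff] at hh <;>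
            rcases hh with ⟨x1,x2⟩|⟨x1,x2⟩ <;>
            first | exact absurd x1 (by assumption) | exact absurd x2 (by assumption)
        case nb =>
          intro hmem
          simp only [Set.mem_singleton_iff] at hmem
          rw [Sym2.eq_iff] at hmem
          rcases hmem with ⟨x1,x2⟩|⟨x1,x2⟩ <;>
            first | exact absurd x1 (by assumption) | exact absurd x2 (by assumption)
      · left
        intro e1 he1 e2 he2 hne12 x hx1 hx2
        rw [hset] at he1 he2
        simp only [Set.mem_insert_iff, Set.mem_singleton_iff] at he1 he2
        rcases he1 with rfl|rfl|rfl <;> rcases he2 with rfl|rfl|rfl <;>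
          first
            | exact hne12 rfl
            | (rw [Sym2.mem_iff] at hx1 hx2
               rcases hx1 with rfl|rfl <;> rcases hx2 with x2|x2 <;>
                 first
                   | exact absurd x2 (by assumption)
                   | exact absurd x2.symm (by assumption))
    · -- path case
      have hset : (⊤ : SimpleGraph (Fin 6)).edgeSet \ M.edgeSet =
          {s(a,b), s(b,c), s(c,d)} := by
        ext x
        induction x using Sym2.ind with
        | _ p q =>
          simp only [Set.mem_diff, SimpleGraph.mem_edgeSet, SimpleGraph.Subgraph.mem_edgeSet,
            SimpleGraph.top_adj, Set.mem_insert_iff, Set.mem_singleton_iff, Sym2.eq_iff]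
          constructor
          · rintro ⟨hne, hnadj⟩
            rcases p4Rel_cases ((hiff p q).1 ⟨hne, hnadj⟩) with
              ⟨rfl,rfl⟩|⟨rfl,rfl⟩|⟨rfl,rfl⟩|⟨rfl,rfl⟩|⟨rfl,rfl⟩|⟨rfl,rfl⟩
            · exact Or.inl (Or.inl ⟨rfl, rfl⟩)
            · exact Or.inl (Or.inr ⟨rfl, rfl⟩)
            · exact Or.inr (Or.inl (Or.inl ⟨rfl, rfl⟩))
            · exact Or.inr (Or.inl (Or.inr ⟨rfl, rfl⟩))
            · exact Or.inr (Or.inr (Or.inl ⟨rfl, rfl⟩))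
            · exact Or.inr (Or.inr (Or.inr ⟨rfl, rfl⟩))
          · intro h
            have hrel : p4Rel a b c d p q := h
            exact ⟨((hiff p q).2 hrel).1, ((hiff p q).2 hrel).2⟩
      constructor
      · rw [hset]
        rw [Set.ncard_insert_of_notMem ?na (Set.toFinite _),
          Set.ncard_insert_of_notMem ?nb (Set.toFinite _), Set.ncard_singleton]
        case na =>
          intro hmem
          simp only [Set.mem_insert_iff, Set.mem_singleton_iff] at hmem
          rcases hmem with hh | hh <;> rw [Sym2.eq_iff] at hh <;>
            rcases hh with ⟨x1,x2⟩|⟨x1,x2⟩ <;>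
            first | exact absurd x1 (by assumption) | exact absurd x2 (by assumption)
        case nb =>
          intro hmem
          simp only [Set.mem_singleton_iff] at hmem
          rw [Sym2.eq_iff] at hmem
          rcases hmem with ⟨x1,x2⟩|⟨x1,x2⟩ <;>
            first | exact absurd x1 (by assumption) | exact absurd x2 (by assumption)
      · right
        refine ⟨![a,b,c,d], ?_, ?_⟩
        · intro i j hij
          fin_cases i <;> fin_cases j <;>
            first
              | rfl
              | exact absurd hij (by assumption)
              | exact absurd hij.symm (by assumption)
        · exact hset
  · refine ⟨M1, M2, ⟨planarM1, maxM1⟩, ⟨planarM2, maxM2⟩, noIso, ?_⟩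
    intro M hM
    rcases classify M hM with
      ⟨a,b,c,d,e,f,⟨h1,h2,h3,h4,h5,h6,h7,h8,h9,h10,h11,h12,h13,h14,h15⟩,hiff⟩ |
      ⟨a,b,c,d,e,f,⟨h1,h2,h3,h4,h5,h6,h7,h8,h9,h10,h11,h12,h13,h14,h15⟩,hiff⟩
    · exact Or.inl (iso_pm M h1 h2 h3 h4 h5 h6 h7 h8 h9 h10 h11 h12 h13 h14 h15 hiff)
    · exact Or.inr (iso_p4 M h1 h2 h3 h4 h5 h6 h7 h8 h9 h10 h11 h12 h13 h14 h15 hiff)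
end

section
/- If H is obtained from G by a ΔY-exchange on a triangle T of G, and G is nonplanar, then H is nonplanar; equivalently, the YΔ-operation preserves planarity. -/
open SimpleGraph

/-- The ΔY-exchange: delete the triangle edges on `x, y, z` and add a new vertex
(`none`) adjacent to `x`, `y`, `z`. -/
def deltaY {V : Type*} (G : SimpleGraph V) (x y z : V) : SimpleGraph (Option V) where
  Adj a b :=
    match a, b with
    | some a, some b => G.Adj a b ∧ s(a, b) ∉ ({s(x, y), s(y, z), s(x, z)} : Set (Sym2 V))
    | some a, none => a = x ∨ a = y ∨ a = z
    | none, some b => b = x ∨ b = y ∨ b = z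
    | none, none => False
  symm := by
    constructor
    rintro (_ | a) (_ | b) h
    · exact h
    · exact h
    · exact h
    · exact ⟨h.1.symm, by rw [show s(b, a) = s(a, b) from Sym2.eq_swap]; exact h.2⟩
  loopless := by
    constructor
    rintro (_ | a) h
    · exact h
    · exact h.1.ne rfl


section Aux
variable {V : Type*} {G : SimpleGraph V} {x y z : V}

private lemma tri_cases {a b : V}
    (h : s(a,b) ∈ ({s(x, y), s(y, z), s(x, z)} : Set (Sym2 V))) :
    a = x ∧ b = y ∨ a = y ∧ b = x ∨ a = y ∧ b = z ∨ a = z ∧ b = y ∨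
      a = x ∧ b = z ∨ a = z ∧ b = x := by
  simp only [Set.mem_insert_iff, Set.mem_singleton_iff, Sym2.eq_iff] at h
  tauto

private lemma mem_tri {a b : V}
    (h : s(a,b) ∈ ({s(x, y), s(y, z), s(x, z)} : Set (Sym2 V))) :
    (a = x ∨ a = y ∨ a = z) ∧ (b = x ∨ b = y ∨ b = z) := by
  rcases tri_cases h with ⟨rfl,rfl⟩|⟨rfl,rfl⟩|⟨rfl,rfl⟩|⟨rfl,rfl⟩|⟨rfl,rfl⟩|⟨rfl,rfl⟩ <;> tauto

private lemma conn_image (B : Set V)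
    (hB : ∀ a ∈ B, ∀ b ∈ B, s(a,b) ∉ ({s(x, y), s(y, z), s(x, z)} : Set (Sym2 V)))
    (h : (G.induce B).Connected) :
    ((deltaY G x y z).induce (some '' B)).Connected := by
  refine Connected.map ⟨fun p => ⟨some p.1, ⟨p.1, p.2, rfl⟩⟩, ?_⟩ ?_ h
  · intro p q hpq
    exact ⟨hpq, hB _ p.2 _ q.2⟩
  · rintro ⟨_, a, ha, rfl⟩
    exact ⟨⟨a, ha⟩, rfl⟩

private lemma conn_insert (B : Set V) (v : V) (hv : v ∈ B) (hvt : v = x ∨ v = y ∨ v = z)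
    (h : (G.induce B).Connected) :
    ((deltaY G x y z).induce (insert none (some '' B))).Connected := by
  have key : ∀ (p q : B) (_w : (G.induce B).Walk p q),
      ((deltaY G x y z).induce (insert none (some '' B))).Reachable
        ⟨some p.1, Or.inr ⟨p.1, p.2, rfl⟩⟩ ⟨some q.1, Or.inr ⟨q.1, q.2, rfl⟩⟩ := by
    intro p q w
    induction w with
    | nil => exact Reachable.refl _
    | @cons p q' _ hadj _ ih =>
      refine Reachable.trans ?_ ih
      by_cases ht : s(p.1, q'.1) ∈ ({s(x, y), s(y, z), s(x, z)} : Set (Sym2 V))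
      · refine Reachable.trans (Adj.reachable
          (show ((deltaY G x y z).induce (insert none (some '' B))).Adj
            ⟨some p.1, Or.inr ⟨p.1, p.2, rfl⟩⟩ ⟨none, Or.inl rfl⟩ from (mem_tri ht).1)) ?_
        exact Adj.reachable
          (show ((deltaY G x y z).induce (insert none (some '' B))).Adj
            ⟨none, Or.inl rfl⟩ ⟨some q'.1, Or.inr ⟨q'.1, q'.2, rfl⟩⟩ from (mem_tri ht).2)
      · exact Adj.reachable
          (show ((deltaY G x y z).induce (insert none (some '' B))).Adj
            ⟨some p.1, Or.inr ⟨p.1, p.2, rfl⟩⟩ ⟨some q'.1, Or.inr ⟨q'.1, q'.2, rfl⟩⟩ from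
            ⟨hadj, ht⟩)
  rw [connected_iff]
  refine ⟨?_, ⟨⟨none, Or.inl rfl⟩⟩⟩
  have key2 : ∀ u : (insert none (some '' B) : Set (Option V)),
      ((deltaY G x y z).induce (insert none (some '' B))).Reachable u ⟨none, Or.inl rfl⟩ := by
    rintro ⟨u, hu⟩
    rcases hu with h0 | ⟨a, ha, rfl⟩
    · subst h0; exact Reachable.refl _
    · refine ((h.preconnected ⟨a, ha⟩ ⟨v, hv⟩).elim fun w => ?_)
      refine (key ⟨a, ha⟩ ⟨v, hv⟩ w).trans
        (Adj.reachable (show ((deltaY G x y z).induce (insert none (some '' B))).Adj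
          ⟨some v, Or.inr ⟨v, hv, rfl⟩⟩ ⟨none, Or.inl rfl⟩ from hvt))
  intro u u'
  exact (key2 u).trans (key2 u').symm

end Aux


section Transfer
variable {V : Type*} {G : SimpleGraph V} {x y z : V} {W : Type*} {K : SimpleGraph W}
  {f : W → Set V}

private lemma owner_eq (hdisj : Pairwise fun w w' => Disjoint (f w) (f w'))
    {v : V} {w w' : W} (h : v ∈ f w) (h' : v ∈ f w') : w = w' := by
  by_contra hne
  exact Set.disjoint_left.1 (hdisj hne) h h'

private lemma transfer
    (hconn : ∀ w, (G.induce (f w)).Connected)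
    (hdisj : Pairwise fun w w' => Disjoint (f w) (f w'))
    (o : Option W)
    (hC0 : ∀ w, o = some w → ∃ v ∈ f w, v = x ∨ v = y ∨ v = z)
    (hC1 : ∀ w, ∀ a ∈ f w, ∀ b ∈ f w,
      s(a,b) ∈ ({s(x, y), s(y, z), s(x, z)} : Set (Sym2 V)) → o = some w)
    (hC2 : ∀ w w', K.Adj w w' → ∃ a ∈ f w, ∃ b ∈ f w', G.Adj a b ∧
      (s(a,b) ∈ ({s(x, y), s(y, z), s(x, z)} : Set (Sym2 V)) → o = some w ∨ o = some w')) :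
    MinorOf K (deltaY G x y z) := by
  classical
  set g : W → Set (Option V) :=
    fun w => if o = some w then insert none (some '' f w) else some '' f w with hg
  have mem_g_some : ∀ (w : W) (b : V), b ∈ f w → some b ∈ g w := by
    intro w b hb
    by_cases h : o = some w
    · simp only [hg, if_pos h]; exact Or.inr ⟨b, hb, rfl⟩
    · simp only [hg, if_neg h]; exact ⟨b, hb, rfl⟩
  have mem_g_none : ∀ w : W, o = some w → none ∈ g w := by
    intro w h; simp only [hg, if_pos h]; exact Or.inl rfl
  refine ⟨g, ?_, ?_, ?_⟩
  · intro w
    by_cases h : o = some w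
    · obtain ⟨v, hv, hvt⟩ := hC0 w h
      have : g w = insert none (some '' f w) := by simp only [hg, if_pos h]
      rw [this]
      exact conn_insert (f w) v hv hvt (hconn w)
    · have : g w = some '' f w := by simp only [hg, if_neg h]
      rw [this]
      refine conn_image (f w) ?_ (hconn w)
      intro a ha b hb ht
      exact h (hC1 w a ha b hb ht)
  · intro w w' hne
    rw [Set.disjoint_left]
    rintro (_ | b) ha ha'
    · have h1 : o = some w := by
        by_contra h; simp only [hg, if_neg h] at ha; obtain ⟨_, _, h'⟩ := ha; exact nomatch h'
      have h2 : o = some w' := by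
        by_contra h; simp only [hg, if_neg h] at ha'; obtain ⟨_, _, h'⟩ := ha'; exact nomatch h'
      rw [h1] at h2
      exact hne (Option.some.inj h2)
    · have h1 : b ∈ f w := by
        by_cases h : o = some w
        · simp only [hg, if_pos h] at ha
          rcases ha with h' | ⟨c, hc, hcb⟩
          · exact nomatch h'
          · rwa [← Option.some.inj hcb]
        · simp only [hg, if_neg h] at ha
          obtain ⟨c, hc, hcb⟩ := ha; rwa [← Option.some.inj hcb]
      have h2 : b ∈ f w' := by
        by_cases h : o = some w'
        · simp only [hg, if_pos h] at ha'
          rcases ha' with h' | ⟨c, hc, hcb⟩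
          · exact nomatch h'
          · rwa [← Option.some.inj hcb]
        · simp only [hg, if_neg h] at ha'
          obtain ⟨c, hc, hcb⟩ := ha'; rwa [← Option.some.inj hcb]
      exact Set.disjoint_left.1 (hdisj hne) h1 h2
  · intro w w' hk
    obtain ⟨a, ha, b, hb, hadj, hcond⟩ := hC2 w w' hk
    by_cases ht : s(a,b) ∈ ({s(x, y), s(y, z), s(x, z)} : Set (Sym2 V))
    · rcases hcond ht with h | h
      · exact ⟨none, mem_g_none w h, some b, mem_g_some w' b hb,
          show (deltaY G x y z).Adj none (some b) from (mem_tri ht).2⟩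
      · exact ⟨some a, mem_g_some w a ha, none, mem_g_none w' h,
          show (deltaY G x y z).Adj (some a) none from (mem_tri ht).1⟩
    · exact ⟨some a, mem_g_some w a ha, some b, mem_g_some w' b hb, hadj, ht⟩

private lemma via_owner
    (hconn : ∀ w, (G.induce (f w)).Connected)
    (hdisj : Pairwise fun w w' => Disjoint (f w) (f w'))
    (hw : ∀ w w', K.Adj w w' → ∃ a ∈ f w, ∃ b ∈ f w', G.Adj a b)
    (w₀ : W) (h1 : ∃ v ∈ f w₀, v = x ∨ v = y ∨ v = z)
    (h2 : ∀ w w' a b, (K.Adj w w' ∨ w = w') → a ∈ f w → b ∈ f w' →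
      s(a,b) ∈ ({s(x, y), s(y, z), s(x, z)} : Set (Sym2 V)) → w = w₀ ∨ w' = w₀) :
    MinorOf K (deltaY G x y z) := by
  refine transfer hconn hdisj (some w₀) ?_ ?_ ?_
  · intro w hw'
    rw [← Option.some.inj hw']
    exact h1
  · intro w a ha b hb ht
    rcases h2 w w a b (Or.inr rfl) ha hb ht with h | h <;> rw [h]
  · intro w w' hk
    obtain ⟨a, ha, b, hb, hadj⟩ := hw w w' hk
    refine ⟨a, ha, b, hb, hadj, fun ht => ?_⟩
    rcases h2 w w' a b (Or.inl hk) ha hb ht with h | h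
    · exact Or.inl (by rw [h])
    · exact Or.inr (by rw [h])

end Transfer

section Select
variable {V : Type*} {G : SimpleGraph V} {x y z : V} {W : Type*} {K : SimpleGraph W}
  {f : W → Set V}

private lemma select_generic
    (hconn : ∀ w, (G.induce (f w)).Connected)
    (hdisj : Pairwise fun w w' => Disjoint (f w) (f w'))
    (hw : ∀ w w', K.Adj w w' → ∃ a ∈ f w, ∃ b ∈ f w', G.Adj a b)
    (hnd : ¬ ∃ w1 w2 w3, x ∈ f w1 ∧ y ∈ f w2 ∧ z ∈ f w3 ∧ w1 ≠ w2 ∧ w2 ≠ w3 ∧ w1 ≠ w3) :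
    MinorOf K (deltaY G x y z) := by
  classical
  by_cases hx : ∃ w, x ∈ f w
  · obtain ⟨w1, hw1⟩ := hx
    by_cases hy : ∃ w, y ∈ f w
    · obtain ⟨w2, hw2⟩ := hy
      by_cases hz : ∃ w, z ∈ f w
      · obtain ⟨w3, hw3⟩ := hz
        have heq : w1 = w2 ∨ w2 = w3 ∨ w1 = w3 := by
          by_contra hc
          push_neg at hc
          exact hnd ⟨w1, w2, w3, hw1, hw2, hw3, hc.1, hc.2.1, hc.2.2⟩
        rcases heq with h | h | h
        · refine via_owner hconn hdisj hw w1 ⟨x, hw1, Or.inl rfl⟩ ?_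
          intro w w' a b _ ha hb ht
          rcases tri_cases ht with ⟨rfl,rfl⟩|⟨rfl,rfl⟩|⟨rfl,rfl⟩|⟨rfl,rfl⟩|⟨rfl,rfl⟩|⟨rfl,rfl⟩
          · exact Or.inl (owner_eq hdisj ha hw1)
          · exact Or.inr (owner_eq hdisj hb hw1)
          · exact Or.inl ((owner_eq hdisj ha hw2).trans h.symm)
          · exact Or.inr ((owner_eq hdisj hb hw2).trans h.symm)
          · exact Or.inl (owner_eq hdisj ha hw1)
          · exact Or.inr (owner_eq hdisj hb hw1)
        · refine via_owner hconn hdisj hw w2 ⟨y, hw2, Or.inr (Or.inl rfl)⟩ ?_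
          intro w w' a b _ ha hb ht
          rcases tri_cases ht with ⟨rfl,rfl⟩|⟨rfl,rfl⟩|⟨rfl,rfl⟩|⟨rfl,rfl⟩|⟨rfl,rfl⟩|⟨rfl,rfl⟩
          · exact Or.inr (owner_eq hdisj hb hw2)
          · exact Or.inl (owner_eq hdisj ha hw2)
          · exact Or.inl (owner_eq hdisj ha hw2)
          · exact Or.inr (owner_eq hdisj hb hw2)
          · exact Or.inr ((owner_eq hdisj hb hw3).trans h.symm)
          · exact Or.inl ((owner_eq hdisj ha hw3).trans h.symm)
        · refine via_owner hconn hdisj hw w1 ⟨x, hw1, Or.inl rfl⟩ ?_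
          intro w w' a b _ ha hb ht
          rcases tri_cases ht with ⟨rfl,rfl⟩|⟨rfl,rfl⟩|⟨rfl,rfl⟩|⟨rfl,rfl⟩|⟨rfl,rfl⟩|⟨rfl,rfl⟩
          · exact Or.inl (owner_eq hdisj ha hw1)
          · exact Or.inr (owner_eq hdisj hb hw1)
          · exact Or.inr ((owner_eq hdisj hb hw3).trans h.symm)
          · exact Or.inl ((owner_eq hdisj ha hw3).trans h.symm)
          · exact Or.inl (owner_eq hdisj ha hw1)
          · exact Or.inr (owner_eq hdisj hb hw1)
      · refine via_owner hconn hdisj hw w1 ⟨x, hw1, Or.inl rfl⟩ ?_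
        intro w w' a b _ ha hb ht
        rcases tri_cases ht with ⟨rfl,rfl⟩|⟨rfl,rfl⟩|⟨rfl,rfl⟩|⟨rfl,rfl⟩|⟨rfl,rfl⟩|⟨rfl,rfl⟩
        · exact Or.inl (owner_eq hdisj ha hw1)
        · exact Or.inr (owner_eq hdisj hb hw1)
        · exact absurd ⟨w', hb⟩ hz
        · exact absurd ⟨w, ha⟩ hz
        · exact Or.inl (owner_eq hdisj ha hw1)
        · exact Or.inr (owner_eq hdisj hb hw1)
    · refine via_owner hconn hdisj hw w1 ⟨x, hw1, Or.inl rfl⟩ ?_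
      intro w w' a b _ ha hb ht
      rcases tri_cases ht with ⟨rfl,rfl⟩|⟨rfl,rfl⟩|⟨rfl,rfl⟩|⟨rfl,rfl⟩|⟨rfl,rfl⟩|⟨rfl,rfl⟩
      · exact absurd ⟨w', hb⟩ hy
      · exact absurd ⟨w, ha⟩ hy
      · exact absurd ⟨w, ha⟩ hy
      · exact absurd ⟨w', hb⟩ hy
      · exact Or.inl (owner_eq hdisj ha hw1)
      · exact Or.inr (owner_eq hdisj hb hw1)
  · by_cases hy : ∃ w, y ∈ f w
    · obtain ⟨w2, hw2⟩ := hy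
      refine via_owner hconn hdisj hw w2 ⟨y, hw2, Or.inr (Or.inl rfl)⟩ ?_
      intro w w' a b _ ha hb ht
      rcases tri_cases ht with ⟨rfl,rfl⟩|⟨rfl,rfl⟩|⟨rfl,rfl⟩|⟨rfl,rfl⟩|⟨rfl,rfl⟩|⟨rfl,rfl⟩
      · exact absurd ⟨w, ha⟩ hx
      · exact absurd ⟨w', hb⟩ hx
      · exact Or.inl (owner_eq hdisj ha hw2)
      · exact Or.inr (owner_eq hdisj hb hw2)
      · exact absurd ⟨w, ha⟩ hx
      · exact absurd ⟨w', hb⟩ hx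
    · by_cases hz : ∃ w, z ∈ f w
      · obtain ⟨w3, hw3⟩ := hz
        refine via_owner hconn hdisj hw w3 ⟨z, hw3, Or.inr (Or.inr rfl)⟩ ?_
        intro w w' a b _ ha hb ht
        rcases tri_cases ht with ⟨rfl,rfl⟩|⟨rfl,rfl⟩|⟨rfl,rfl⟩|⟨rfl,rfl⟩|⟨rfl,rfl⟩|⟨rfl,rfl⟩
        · exact absurd ⟨w, ha⟩ hx
        · exact absurd ⟨w', hb⟩ hx
        · exact absurd ⟨w, ha⟩ hy
        · exact absurd ⟨w', hb⟩ hy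
        · exact absurd ⟨w, ha⟩ hx
        · exact absurd ⟨w', hb⟩ hx
      · refine transfer hconn hdisj none (fun w h => nomatch h) ?_ ?_
        · intro w a ha b hb ht
          rcases tri_cases ht with ⟨rfl,_⟩|⟨rfl,_⟩|⟨rfl,_⟩|⟨rfl,_⟩|⟨rfl,_⟩|⟨rfl,_⟩
          · exact absurd ⟨w, ha⟩ hx
          · exact absurd ⟨w, ha⟩ hy
          · exact absurd ⟨w, ha⟩ hy
          · exact absurd ⟨w, ha⟩ hz
          · exact absurd ⟨w, ha⟩ hx
          · exact absurd ⟨w, ha⟩ hz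
        · intro w w' hk
          obtain ⟨a, ha, b, hb, hadj⟩ := hw w w' hk
          refine ⟨a, ha, b, hb, hadj, fun ht => ?_⟩
          rcases tri_cases ht with ⟨rfl,_⟩|⟨rfl,_⟩|⟨rfl,_⟩|⟨rfl,_⟩|⟨rfl,_⟩|⟨rfl,_⟩
          · exact absurd ⟨w, ha⟩ hx
          · exact absurd ⟨w, ha⟩ hy
          · exact absurd ⟨w, ha⟩ hy
          · exact absurd ⟨w, ha⟩ hz
          · exact absurd ⟨w, ha⟩ hx
          · exact absurd ⟨w, ha⟩ hz

end Select

section Distinct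
variable {V : Type*} {G : SimpleGraph V} {x y z : V}

private lemma k33_no_tri (a b c : Fin 3 ⊕ Fin 3)
    (hab : (completeBipartiteGraph (Fin 3) (Fin 3)).Adj a b)
    (hbc : (completeBipartiteGraph (Fin 3) (Fin 3)).Adj b c) :
    ¬ (completeBipartiteGraph (Fin 3) (Fin 3)).Adj a c := by
  rcases a with a | a <;> rcases b with b | b <;> rcases c with c | c <;>
    simp_all [completeBipartiteGraph]

private lemma k33_distinct {f : Fin 3 ⊕ Fin 3 → Set V}
    (hconn : ∀ w, (G.induce (f w)).Connected)
    (hdisj : Pairwise fun w w' => Disjoint (f w) (f w'))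
    (hw : ∀ w w', (completeBipartiteGraph (Fin 3) (Fin 3)).Adj w w' →
      ∃ a ∈ f w, ∃ b ∈ f w', G.Adj a b)
    {w1 w2 w3 : Fin 3 ⊕ Fin 3} (hw1 : x ∈ f w1) (hw2 : y ∈ f w2) (hw3 : z ∈ f w3)
    (h12 : w1 ≠ w2) (h23 : w2 ≠ w3) (h13 : w1 ≠ w3) :
    MinorOf (completeBipartiteGraph (Fin 3) (Fin 3)) (deltaY G x y z) := by
  by_cases p23 : (completeBipartiteGraph (Fin 3) (Fin 3)).Adj w2 w3
  · by_cases p12 : (completeBipartiteGraph (Fin 3) (Fin 3)).Adj w1 w2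
    · have p13 : ¬ (completeBipartiteGraph (Fin 3) (Fin 3)).Adj w1 w3 :=
        k33_no_tri w1 w2 w3 p12 p23
      refine via_owner hconn hdisj hw w2 ⟨y, hw2, Or.inr (Or.inl rfl)⟩ ?_
      intro w w' a b hkk ha hb ht
      rcases tri_cases ht with ⟨rfl,rfl⟩|⟨rfl,rfl⟩|⟨rfl,rfl⟩|⟨rfl,rfl⟩|⟨rfl,rfl⟩|⟨rfl,rfl⟩
      · exact Or.inr (owner_eq hdisj hb hw2)
      · exact Or.inl (owner_eq hdisj ha hw2)
      · exact Or.inl (owner_eq hdisj ha hw2)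
      · exact Or.inr (owner_eq hdisj hb hw2)
      · exfalso
        rw [owner_eq hdisj ha hw1, owner_eq hdisj hb hw3] at hkk
        rcases hkk with h | h
        · exact p13 h
        · exact h13 h
      · exfalso
        rw [owner_eq hdisj ha hw3, owner_eq hdisj hb hw1] at hkk
        rcases hkk with h | h
        · exact p13 h.symm
        · exact h13 h.symm
    · refine via_owner hconn hdisj hw w3 ⟨z, hw3, Or.inr (Or.inr rfl)⟩ ?_
      intro w w' a b hkk ha hb ht
      rcases tri_cases ht with ⟨rfl,rfl⟩|⟨rfl,rfl⟩|⟨rfl,rfl⟩|⟨rfl,rfl⟩|⟨rfl,rfl⟩|⟨rfl,rfl⟩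
      · exfalso
        rw [owner_eq hdisj ha hw1, owner_eq hdisj hb hw2] at hkk
        rcases hkk with h | h
        · exact p12 h
        · exact h12 h
      · exfalso
        rw [owner_eq hdisj ha hw2, owner_eq hdisj hb hw1] at hkk
        rcases hkk with h | h
        · exact p12 h.symm
        · exact h12 h.symm
      · exact Or.inr (owner_eq hdisj hb hw3)
      · exact Or.inl (owner_eq hdisj ha hw3)
      · exact Or.inr (owner_eq hdisj hb hw3)
      · exact Or.inl (owner_eq hdisj ha hw3)
  · refine via_owner hconn hdisj hw w1 ⟨x, hw1, Or.inl rfl⟩ ?_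
    intro w w' a b hkk ha hb ht
    rcases tri_cases ht with ⟨rfl,rfl⟩|⟨rfl,rfl⟩|⟨rfl,rfl⟩|⟨rfl,rfl⟩|⟨rfl,rfl⟩|⟨rfl,rfl⟩
    · exact Or.inl (owner_eq hdisj ha hw1)
    · exact Or.inr (owner_eq hdisj hb hw1)
    · exfalso
      rw [owner_eq hdisj ha hw2, owner_eq hdisj hb hw3] at hkk
      rcases hkk with h | h
      · exact p23 h
      · exact h23 h
    · exfalso
      rw [owner_eq hdisj ha hw3, owner_eq hdisj hb hw2] at hkk
      rcases hkk with h | h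
      · exact p23 h.symm
      · exact h23 h.symm
    · exact Or.inl (owner_eq hdisj ha hw1)
    · exact Or.inr (owner_eq hdisj hb hw1)

end Distinct

section K5
variable {V : Type*} {G : SimpleGraph V} {x y z : V}

private lemma none_conn :
    ((deltaY G x y z).induce ({none} : Set (Option V))).Connected := by
  rw [connected_iff]
  refine ⟨?_, ⟨⟨none, rfl⟩⟩⟩
  rintro ⟨u, hu⟩ ⟨u', hu'⟩
  rcases hu; rcases hu'
  exact Reachable.refl _

private lemma k5_distinct {f : Fin 5 → Set V}
    (hconn : ∀ w, (G.induce (f w)).Connected)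
    (hdisj : Pairwise fun w w' => Disjoint (f w) (f w'))
    (hw : ∀ w w', (completeGraph (Fin 5)).Adj w w' → ∃ a ∈ f w, ∃ b ∈ f w', G.Adj a b)
    {w1 w2 w3 : Fin 5} (hw1 : x ∈ f w1) (hw2 : y ∈ f w2) (hw3 : z ∈ f w3)
    (h12 : w1 ≠ w2) (h23 : w2 ≠ w3) (h13 : w1 ≠ w3) :
    MinorOf (completeBipartiteGraph (Fin 3) (Fin 3)) (deltaY G x y z) := by
  classical
  -- find two further indices
  have hcard : 1 < ({w1, w2, w3}ᶜ : Finset (Fin 5)).card := by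
    rw [Finset.card_compl]
    have h3 : ({w1, w2, w3} : Finset (Fin 5)).card ≤ 3 := by
      refine le_trans (Finset.card_insert_le _ _) ?_
      have := Finset.card_insert_le w2 ({w3} : Finset (Fin 5))
      simp only [Finset.card_singleton] at this ⊢
      omega
    have h5 : Fintype.card (Fin 5) = 5 := by simp
    omega
  obtain ⟨d, hd, e, he, hde⟩ := Finset.one_lt_card.mp hcard
  simp only [Finset.mem_compl, Finset.mem_insert, Finset.mem_singleton, not_or] at hd he
  obtain ⟨hd1, hd2, hd3⟩ := hd
  obtain ⟨he1, he2, he3⟩ := he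
  -- no triangle edge inside a branch set
  have hno : ∀ (w : Fin 5), ∀ a ∈ f w, ∀ b ∈ f w,
      s(a,b) ∉ ({s(x, y), s(y, z), s(x, z)} : Set (Sym2 V)) := by
    intro w a ha b hb ht
    rcases tri_cases ht with ⟨rfl,rfl⟩|⟨rfl,rfl⟩|⟨rfl,rfl⟩|⟨rfl,rfl⟩|⟨rfl,rfl⟩|⟨rfl,rfl⟩
    · exact h12 ((owner_eq hdisj hw1 ha).trans (owner_eq hdisj hb hw2))
    · exact h12 ((owner_eq hdisj hw1 hb).trans (owner_eq hdisj ha hw2))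
    · exact h23 ((owner_eq hdisj hw2 ha).trans (owner_eq hdisj hb hw3))
    · exact h23 ((owner_eq hdisj hw2 hb).trans (owner_eq hdisj ha hw3))
    · exact h13 ((owner_eq hdisj hw1 ha).trans (owner_eq hdisj hb hw3))
    · exact h13 ((owner_eq hdisj hw1 hb).trans (owner_eq hdisj ha hw3))
  -- a branch set avoiding w1 w2 w3 contains no triangle vertex
  have hfresh : ∀ w' : Fin 5, w' ≠ w1 → w' ≠ w2 → w' ≠ w3 →
      ∀ u ∈ f w', u ≠ x ∧ u ≠ y ∧ u ≠ z := by
    intro w' k1 k2 k3 u hu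
    refine ⟨?_, ?_, ?_⟩ <;> rintro rfl
    · exact k1 (owner_eq hdisj hu hw1)
    · exact k2 (owner_eq hdisj hu hw2)
    · exact k3 (owner_eq hdisj hu hw3)
  -- witnesses between two branch sets, second fresh
  have hwitR : ∀ w w' : Fin 5, w ≠ w' → (∀ u ∈ f w', u ≠ x ∧ u ≠ y ∧ u ≠ z) →
      ∃ a ∈ some '' f w, ∃ b ∈ some '' f w', (deltaY G x y z).Adj a b := by
    intro w w' hne hfr
    obtain ⟨a, ha, b, hb, hab⟩ := hw w w' hne
    refine ⟨some a, ⟨a, ha, rfl⟩, some b, ⟨b, hb, rfl⟩, hab, fun ht => ?_⟩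
    rcases (mem_tri ht).2 with rfl | rfl | rfl
    · exact (hfr _ hb).1 rfl
    · exact (hfr _ hb).2.1 rfl
    · exact (hfr _ hb).2.2 rfl
  have hwitL : ∀ w w' : Fin 5, w ≠ w' → (∀ u ∈ f w, u ≠ x ∧ u ≠ y ∧ u ≠ z) →
      ∃ a ∈ some '' f w, ∃ b ∈ some '' f w', (deltaY G x y z).Adj a b := by
    intro w w' hne hfr
    obtain ⟨a, ha, b, hb, hab⟩ := hw w w' hne
    refine ⟨some a, ⟨a, ha, rfl⟩, some b, ⟨b, hb, rfl⟩, hab, fun ht => ?_⟩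
    rcases (mem_tri ht).1 with rfl | rfl | rfl
    · exact (hfr _ ha).1 rfl
    · exact (hfr _ ha).2.1 rfl
    · exact (hfr _ ha).2.2 rfl
  have hfd := hfresh d hd1 hd2 hd3
  have hfe := hfresh e he1 he2 he3
  -- the branch sets of the K33 minor
  refine ⟨Sum.elim ![some '' f w1, some '' f w2, some '' f w3] ![some '' f d, some '' f e, {none}],
    ?_, ?_, ?_⟩
  · rintro (i | j)
    · fin_cases i <;>
        simp only [Sum.elim_inl, Matrix.cons_val_zero, Matrix.cons_val_one, Matrix.head_cons,
          Matrix.cons_val_two, Matrix.tail_cons] <;>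
        [exact conn_image _ (hno w1) (hconn w1); exact conn_image _ (hno w2) (hconn w2);
          exact conn_image _ (hno w3) (hconn w3)]
    · fin_cases j <;>
        simp only [Sum.elim_inr, Matrix.cons_val_zero, Matrix.cons_val_one, Matrix.head_cons,
          Matrix.cons_val_two, Matrix.tail_cons]
      · exact conn_image _ (hno d) (hconn d)
      · exact conn_image _ (hno e) (hconn e)
      · exact none_conn
  · have himg : ∀ w w' : Fin 5, w ≠ w' → Disjoint (some '' f w) (some '' f w') :=
      fun w w' h => (Set.disjoint_image_iff (Option.some_injective V)).2 (hdisj h)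
    have hsing : ∀ A : Set V, Disjoint (some '' A) ({none} : Set (Option V)) := by
      intro A
      rw [Set.disjoint_singleton_right]
      rintro ⟨a, _, h⟩
      exact nomatch h
    have tac : ∀ P : Prop, P → P := fun _ p => p
    rintro (i | j) (i' | j') hne
    · fin_cases i <;> fin_cases i' <;>
        first
        | exact absurd rfl hne
        | exact himg _ _ h12 | exact himg _ _ (Ne.symm h12)
        | exact himg _ _ h23 | exact himg _ _ (Ne.symm h23)
        | exact himg _ _ h13 | exact himg _ _ (Ne.symm h13)
    · fin_cases i <;> fin_cases j' <;>
        first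
        | exact hsing _
        | exact himg _ _ (Ne.symm hd1) | exact himg _ _ (Ne.symm hd2)
        | exact himg _ _ (Ne.symm hd3)
        | exact himg _ _ (Ne.symm he1) | exact himg _ _ (Ne.symm he2)
        | exact himg _ _ (Ne.symm he3)
    · fin_cases j <;> fin_cases i' <;>
        first
        | exact (hsing _).symm
        | exact himg _ _ hd1 | exact himg _ _ hd2 | exact himg _ _ hd3
        | exact himg _ _ he1 | exact himg _ _ he2 | exact himg _ _ he3
    · fin_cases j <;> fin_cases j' <;>
        first
        | exact absurd rfl hne
        | exact hsing _
        | exact (hsing _).symm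
        | exact himg _ _ hde | exact himg _ _ (Ne.symm hde)
  · rintro (i | j) (i' | j') hadj
    · exact absurd hadj (by simp [completeBipartiteGraph])
    · fin_cases i <;> fin_cases j' <;>
        simp only [Sum.elim_inl, Sum.elim_inr, Matrix.cons_val_zero, Matrix.cons_val_one,
          Matrix.head_cons, Matrix.cons_val_two, Matrix.tail_cons]
      · exact hwitR w1 d (Ne.symm hd1) hfd
      · exact hwitR w1 e (Ne.symm he1) hfe
      · exact ⟨some x, ⟨x, hw1, rfl⟩, none, rfl,
          show (deltaY G x y z).Adj (some x) none from Or.inl rfl⟩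
      · exact hwitR w2 d (Ne.symm hd2) hfd
      · exact hwitR w2 e (Ne.symm he2) hfe
      · exact ⟨some y, ⟨y, hw2, rfl⟩, none, rfl,
          show (deltaY G x y z).Adj (some y) none from Or.inr (Or.inl rfl)⟩
      · exact hwitR w3 d (Ne.symm hd3) hfd
      · exact hwitR w3 e (Ne.symm he3) hfe
      · exact ⟨some z, ⟨z, hw3, rfl⟩, none, rfl,
          show (deltaY G x y z).Adj (some z) none from Or.inr (Or.inr rfl)⟩
    · fin_cases j <;> fin_cases i' <;>
        simp only [Sum.elim_inl, Sum.elim_inr, Matrix.cons_val_zero, Matrix.cons_val_one,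
          Matrix.head_cons, Matrix.cons_val_two, Matrix.tail_cons]
      · exact hwitL d w1 hd1 hfd
      · exact hwitL d w2 hd2 hfd
      · exact hwitL d w3 hd3 hfd
      · exact hwitL e w1 he1 hfe
      · exact hwitL e w2 he2 hfe
      · exact hwitL e w3 he3 hfe
      · exact ⟨none, rfl, some x, ⟨x, hw1, rfl⟩,
          show (deltaY G x y z).Adj none (some x) from Or.inl rfl⟩
      · exact ⟨none, rfl, some y, ⟨y, hw2, rfl⟩,
          show (deltaY G x y z).Adj none (some y) from Or.inr (Or.inl rfl)⟩
      · exact ⟨none, rfl, some z, ⟨z, hw3, rfl⟩,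
          show (deltaY G x y z).Adj none (some z) from Or.inr (Or.inr rfl)⟩
    · exact absurd hadj (by simp [completeBipartiteGraph])

end K5

/-- The ΔY-exchange preserves nonplanarity (equivalently, the YΔ-operation preserves
planarity): if `G` is nonplanar and `H` is obtained from `G` by a ΔY-exchange on a
triangle of `G`, then `H` is nonplanar. -/
theorem deltaY_preserves_nonplanar {V : Type*} (G : SimpleGraph V) (x y z : V)
    (hxy : G.Adj x y) (hyz : G.Adj y z) (hxz : G.Adj x z)
    (hG : ¬ IsPlanar G) : ¬ IsPlanar (deltaY G x y z) := by
  intro hH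
  apply hG
  constructor
  · intro h5
    obtain ⟨f, hconn, hdisj, hwt⟩ := h5
    by_cases hnd : ∃ w1 w2 w3, x ∈ f w1 ∧ y ∈ f w2 ∧ z ∈ f w3 ∧ w1 ≠ w2 ∧ w2 ≠ w3 ∧ w1 ≠ w3
    · obtain ⟨w1, w2, w3, hw1, hw2, hw3, h12, h23, h13⟩ := hnd
      exact hH.2 (k5_distinct hconn hdisj hwt hw1 hw2 hw3 h12 h23 h13)
    · exact hH.1 (select_generic hconn hdisj hwt hnd)
  · intro h33
    obtain ⟨f, hconn, hdisj, hwt⟩ := h33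
    by_cases hnd : ∃ w1 w2 w3, x ∈ f w1 ∧ y ∈ f w2 ∧ z ∈ f w3 ∧ w1 ≠ w2 ∧ w2 ≠ w3 ∧ w1 ≠ w3
    · obtain ⟨w1, w2, w3, hw1, hw2, hw3, h12, h23, h13⟩ := hnd
      exact hH.2 (k33_distinct hconn hdisj hwt hw1 hw2 hw3 h12 h23 h13)
    · exact hH.2 (select_generic hconn hdisj hwt hnd)
end

section
/- The automorphism group of the Petersen graph is isomorphic to the symmetric group S_5. -/
open SimpleGraph
def Petersen : SimpleGraph {s : Finset (Fin 5) // s.card = 2} where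
  Adj a b := Disjoint a.1 b.1
  symm := ⟨fun _ _ h => h.symm⟩
  loopless := by
    constructor
    intro a h
    have h1 : a.1 = ∅ := by simpa using disjoint_self.mp h
    have h2 := a.2
    rw [h1] at h2
    simp at h2

abbrev V := {s : Finset (Fin 5) // s.card = 2}

def pr (i j : Fin 5) (h : i ≠ j) : V := ⟨{i, j}, Finset.card_pair h⟩

lemma pairEq (s : V) {x y : Fin 5} (hxy : x ≠ y) (hx : x ∈ s.1) (hy : y ∈ s.1) :
    s.1 = {x, y} := by
  refine (Finset.eq_of_subset_of_card_le ?_ ?_).symm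
  · intro a ha; simp at ha; rcases ha with rfl | rfl <;> assumption
  · rw [s.2, Finset.card_pair hxy]

lemma factB : ∀ i : Fin 5, i ≠ i+1 ∧ i ≠ i+2 ∧ i ≠ i+3 ∧ i ≠ i+4 ∧
    i+1 ≠ i+2 ∧ i+1 ≠ i+3 ∧ i+1 ≠ i+4 ∧ i+2 ≠ i+3 ∧ i+2 ≠ i+4 ∧ i+3 ≠ i+4 := by decide

lemma factA : ∀ i j : Fin 5, i ≠ j → j = i+1 ∨ j = i+2 ∨ j = i+3 ∨ j = i+4 := by decide

lemma factC : ∀ i j : Fin 5, i ≠ j → ∃ k l, i ≠ k ∧ i ≠ l ∧ j ≠ k ∧ j ≠ l ∧ k ≠ l := by decide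

set_option maxHeartbeats 4000000 in
set_option synthInstance.maxSize 2000 in
set_option synthInstance.maxHeartbeats 1000000 in
lemma lem4 : ∀ s t u v : V, s ≠ t → s ≠ u → s ≠ v → t ≠ u → t ≠ v → u ≠ v →
    (s.1 ∩ t.1).Nonempty → (s.1 ∩ u.1).Nonempty → (s.1 ∩ v.1).Nonempty →
    (t.1 ∩ u.1).Nonempty → (t.1 ∩ v.1).Nonempty → (u.1 ∩ v.1).Nonempty →
    ∃ x : Fin 5, x ∈ s.1 ∧ x ∈ t.1 ∧ x ∈ u.1 ∧ x ∈ v.1 := by decide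

section auto
variable (f : Petersen ≃g Petersen)

lemma map_nd {a b : V} (h : ¬ Disjoint a.1 b.1) : ((f a).1 ∩ (f b).1).Nonempty := by
  rw [← Finset.not_disjoint_iff_nonempty_inter]
  intro hd
  exact h (f.map_adj_iff.mp hd)

lemma pr_ne {i j k : Fin 5} (hij : i ≠ j) (hik : i ≠ k) (hjk : j ≠ k) :
    pr i j hij ≠ pr i k hik := by
  intro h
  have : j ∈ ({i, k} : Finset (Fin 5)) := by
    have := congrArg Subtype.val h
    simp only [pr] at this
    rw [← this]; simp
  simp at this
  rcases this with rfl | rfl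
  · exact hij rfl
  · exact hjk rfl

lemma exu (i : Fin 5) : ∃! x : Fin 5, ∀ j (h : i ≠ j), x ∈ (f (pr i j h)).1 := by
  obtain ⟨h1, h2, h3, h4, h12, h13, h14, h23, h24, h34⟩ := factB i
  have key := lem4 (f (pr i _ h1)) (f (pr i _ h2)) (f (pr i _ h3)) (f (pr i _ h4))
    (fun h => pr_ne h1 h2 h12 (f.toEquiv.injective h))
    (fun h => pr_ne h1 h3 h13 (f.toEquiv.injective h))
    (fun h => pr_ne h1 h4 h14 (f.toEquiv.injective h))
    (fun h => pr_ne h2 h3 h23 (f.toEquiv.injective h))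
    (fun h => pr_ne h2 h4 h24 (f.toEquiv.injective h))
    (fun h => pr_ne h3 h4 h34 (f.toEquiv.injective h))
    (map_nd f (by simp [pr, Finset.not_disjoint_iff]))
    (map_nd f (by simp [pr, Finset.not_disjoint_iff]))
    (map_nd f (by simp [pr, Finset.not_disjoint_iff]))
    (map_nd f (by simp [pr, Finset.not_disjoint_iff]))
    (map_nd f (by simp [pr, Finset.not_disjoint_iff]))
    (map_nd f (by simp [pr, Finset.not_disjoint_iff]))
  obtain ⟨x, hx1, hx2, hx3, hx4⟩ := key
  refine ⟨x, ?_, ?_⟩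
  · intro j h
    rcases factA i j h with rfl | rfl | rfl | rfl
    · exact hx1
    · exact hx2
    · exact hx3
    · exact hx4
  · intro y hy
    by_contra hne
    have e1 : (f (pr i _ h1)).1 = {y, x} := pairEq _ hne (hy _ h1) hx1
    have e2 : (f (pr i _ h2)).1 = {y, x} := pairEq _ hne (hy _ h2) hx2
    exact pr_ne h1 h2 h12 (f.toEquiv.injective (Subtype.ext (e1.trans e2.symm)))

noncomputable def σ : Fin 5 → Fin 5 := fun i => Fintype.choose _ (exu f i)

lemma σ_spec (i j : Fin 5) (h : i ≠ j) : σ f i ∈ (f (pr i j h)).1 :=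
  Fintype.choose_spec _ (exu f i) j h

lemma σ_unique {i x : Fin 5} (hx : ∀ j (h : i ≠ j), x ∈ (f (pr i j h)).1) : x = σ f i :=
  (exu f i).unique hx (fun j h => σ_spec f i j h)

lemma σ_inj : Function.Injective (σ f) := by
  intro i j hσ
  by_contra hij
  obtain ⟨k, l, hik, hil, hjk, hjl, hkl⟩ := factC i j hij
  have hdisj : Disjoint (pr i k hik).1 (pr j l hjl).1 := by
    rw [Finset.disjoint_left]
    intro a ha hb
    simp [pr] at ha hb
    rcases ha with rfl|rfl <;> rcases hb with rfl|rfl <;> simp_all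
  have : Disjoint (f (pr i k hik)).1 (f (pr j l hjl)).1 := f.map_adj_iff.mpr hdisj
  exact Finset.disjoint_left.mp this (σ_spec f i k hik) (hσ ▸ σ_spec f j l hjl)

lemma σ_main (i j : Fin 5) (h : i ≠ j) :
    f (pr i j h) = pr (σ f i) (σ f j) (fun he => h (σ_inj f he)) := by
  apply Subtype.ext
  have h2 : σ f j ∈ (f (pr i j h)).1 := by
    have : pr j i h.symm = pr i j h := Subtype.ext (Finset.pair_comm j i)
    exact this ▸ σ_spec f j i h.symm
  exact pairEq _ (fun he => h (σ_inj f he)) (σ_spec f i j h) h2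

end auto

def Φ (π : Equiv.Perm (Fin 5)) : Petersen ≃g Petersen where
  toEquiv := π.finsetCongr.subtypeEquiv (by
    intro s
    simp [Equiv.finsetCongr_apply, Finset.card_map])
  map_rel_iff' := by
    intro a b
    show Disjoint (a.1.map _) (b.1.map _) ↔ Disjoint a.1 b.1
    exact Finset.disjoint_map _

lemma Φ_apply (π : Equiv.Perm (Fin 5)) (i j : Fin 5) (h : i ≠ j) :
    Φ π (pr i j h) = pr (π i) (π j) (fun he => h (π.injective he)) := by
  apply Subtype.ext
  show ({i, j} : Finset (Fin 5)).map π.toEmbedding = {π i, π j}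
  simp [Finset.map_insert]

/-- The automorphism group of the Petersen graph is isomorphic to `S₅`. -/
theorem petersen_aut_group :
    Nonempty ((Petersen ≃g Petersen) ≃* Equiv.Perm (Fin 5)) := by
  refine ⟨{
    toFun := fun f => Equiv.ofBijective (σ f) (Finite.injective_iff_bijective.mp (σ_inj f)),
    invFun := Φ,
    left_inv := ?_, right_inv := ?_, map_mul' := ?_ }⟩
  · intro f
    apply RelIso.ext
    intro v
    obtain ⟨x, y, hxy, hv⟩ := Finset.card_eq_two.mp v.2
    have hv' : v = pr x y hxy := Subtype.ext hv
    rw [hv', Φ_apply, σ_main f x y hxy]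
    rfl
  · intro π
    apply Equiv.ext
    intro i
    show σ (Φ π) i = π i
    refine (σ_unique (Φ π) ?_).symm
    intro j h
    rw [Φ_apply]
    simp [pr]
  · intro f g
    apply Equiv.ext
    intro i
    show σ (f * g) i = σ f (σ g i)
    refine (σ_unique (f * g) ?_).symm
    intro j h
    have hmul : (f * g) (pr i j h) = f (g (pr i j h)) := rfl
    rw [hmul, σ_main g i j h, σ_main f]
    simp [pr]
end
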